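/- arXiv:0704.2264 — 8 statements merged into one kernel-verified Lean document; each statement's English description precedes it below -/
import Mathlib

section
/- For all integers s, t ≥ 3, the derivative of the chromatic polynomial of Y(s,t) evaluated at x = 2 equals 2((-1)^s + (-1)^t + (-1)^{s+t}). -/
/-- The number of proper colorings of `G` with a palette of `k` colors. -/
noncomputable def numColorings {V : Type} [Fintype V] (G : SimpleGraph V) (k : ℕ) : ℕ :=
  Nat.card {f : V → Fin k // ∀ u v, G.Adj u v → f u ≠ f v}

/-- `P` is the chromatic polynomial of `G`: for every natural number `k`, evaluating `P`
at `k` gives the number of proper `k`-colorings of `G`. -/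
def IsChromaticPolynomial {V : Type} [Fintype V] (G : SimpleGraph V) (P : Polynomial ℝ) : Prop :=
  ∀ k : ℕ, P.eval (k : ℝ) = numColorings G k

/-- The adjacency-generating relation of the graph `X(s,t)`: the vertices `v0, v1, v2, v3, v4`
are `Sum.inl 0, …, Sum.inl 4`, the independent set `S` is `Fin s` (as `Sum.inr (Sum.inl _)`)
and the independent set `T` is `Fin t` (as `Sum.inr (Sum.inr _)`).  The edges are: `v1v2`,
`v3v4`, every vertex of `S` joined to each of `v0, v1, v3`, and every vertex of `T` joined
to each of `v0, v2, v4`. -/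
def XAdj (s t : ℕ) (x y : Fin 5 ⊕ Fin s ⊕ Fin t) : Prop :=
  (x = Sum.inl 1 ∧ y = Sum.inl 2) ∨ (x = Sum.inl 3 ∧ y = Sum.inl 4) ∨
    ((∃ i : Fin s, x = Sum.inr (Sum.inl i)) ∧ (y = Sum.inl 0 ∨ y = Sum.inl 1 ∨ y = Sum.inl 3)) ∨
    ((∃ j : Fin t, x = Sum.inr (Sum.inr j)) ∧ (y = Sum.inl 0 ∨ y = Sum.inl 2 ∨ y = Sum.inl 4))

/-- The graph `X(s,t)`. -/
def graphX (s t : ℕ) : SimpleGraph (Fin 5 ⊕ Fin s ⊕ Fin t) :=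
  SimpleGraph.fromRel (XAdj s t)

/-- The adjacency-generating relation of `Y(s,t)`: that of `X(s,t)` together with the
extra edge `v1v4`. -/
def YAdj (s t : ℕ) (x y : Fin 5 ⊕ Fin s ⊕ Fin t) : Prop :=
  XAdj s t x y ∨ (x = Sum.inl 1 ∧ y = Sum.inl 4)

/-- The graph `Y(s,t)`, obtained from `X(s,t)` by joining `v1` and `v4`. -/
def graphY (s t : ℕ) : SimpleGraph (Fin 5 ⊕ Fin s ⊕ Fin t) :=
  SimpleGraph.fromRel (YAdj s t)


set_option linter.unnecessarySeqFocus false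
set_option linter.unreachableTactic false
set_option linter.unusedTactic false
set_option maxHeartbeats 1000000

open Sum Finset Polynomial

namespace ChromYAux

def GoodT {k : ℕ} (c : Fin 5 → Fin k) : Prop := c 1 ≠ c 2 ∧ c 3 ≠ c 4 ∧ c 1 ≠ c 4

instance {k : ℕ} : DecidablePred (GoodT (k := k)) := fun _ => by
  unfold GoodT; infer_instance



lemma proper_iff (s t k : ℕ) (f : Fin 5 ⊕ Fin s ⊕ Fin t → Fin k) :
    (∀ u v, (graphY s t).Adj u v → f u ≠ f v) ↔
      (f (inl 1) ≠ f (inl 2) ∧ f (inl 3) ≠ f (inl 4) ∧ f (inl 1) ≠ f (inl 4)) ∧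
      (∀ i : Fin s, f (inr (inl i)) ≠ f (inl 0) ∧ f (inr (inl i)) ≠ f (inl 1) ∧
        f (inr (inl i)) ≠ f (inl 3)) ∧
      (∀ j : Fin t, f (inr (inr j)) ≠ f (inl 0) ∧ f (inr (inr j)) ≠ f (inl 2) ∧
        f (inr (inr j)) ≠ f (inl 4)) := by
  constructor
  · intro h
    refine ⟨⟨?_, ?_, ?_⟩, fun i => ⟨?_, ?_, ?_⟩, fun j => ⟨?_, ?_, ?_⟩⟩ <;>
      apply h <;>
      simp [graphY, SimpleGraph.fromRel_adj, YAdj, XAdj]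
  · rintro ⟨⟨h12, h34, h14⟩, hS, hT⟩ u v huv
    rw [graphY, SimpleGraph.fromRel_adj] at huv
    obtain ⟨hne, h | h⟩ := huv <;>
    · rcases h with (⟨rfl, rfl⟩ | ⟨rfl, rfl⟩ | ⟨⟨i, rfl⟩, (rfl | rfl | rfl)⟩ |
        ⟨⟨j, rfl⟩, (rfl | rfl | rfl)⟩) | ⟨rfl, rfl⟩ <;>
      first
        | exact h12 | exact h34 | exact h14 | exact (hS i).1 | exact (hS i).2.1
        | exact (hS i).2.2 | exact (hT j).1 | exact (hT j).2.1 | exact (hT j).2.2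
        | exact h12.symm ∘ Eq.symm | exact (Ne.symm h12) | exact (Ne.symm h34)
        | exact (Ne.symm h14) | exact Ne.symm ((hS i).1) | exact Ne.symm ((hS i).2.1)
        | exact Ne.symm ((hS i).2.2) | exact Ne.symm ((hT j).1) | exact Ne.symm ((hT j).2.1)
        | exact Ne.symm ((hT j).2.2)


variable {k : ℕ}

lemma card_le_k (E : Finset (Fin k)) : E.card ≤ k := by
  simpa using Finset.card_le_card (Finset.subset_univ E)

lemma card_sdiff_univ (E : Finset (Fin k)) :
    ((univ \ E).card : ℝ) = (k : ℝ) - E.card := by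
  rw [Finset.card_sdiff_of_subset (Finset.subset_univ E)]
  rw [Nat.cast_sub (by simpa using card_le_k E)]
  simp

lemma sum_split (C E : Finset (Fin k)) (g : Fin k → ℝ) (v : ℝ)
    (h : ∀ x, x ∉ C → x ∉ E → g x = v) :
    ∑ x ∈ univ \ E, g x =
      (∑ x ∈ C \ E, g x) + ((k : ℝ) - ((C ∪ E).card : ℕ)) * v := by
  have hsplit : univ \ E = (C \ E) ∪ (univ \ (C ∪ E)) := by
    ext x; simp only [Finset.mem_sdiff, Finset.mem_union, Finset.mem_univ, true_and]
    tauto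
  have hdisj : Disjoint (C \ E) (univ \ (C ∪ E)) := by
    rw [Finset.disjoint_left]
    intro x hx hx'
    simp only [Finset.mem_sdiff, Finset.mem_union, Finset.mem_univ, true_and] at hx hx'
    tauto
  rw [hsplit, Finset.sum_union hdisj]
  congr 1
  rw [Finset.sum_congr rfl (fun x hx => by
    simp only [Finset.mem_sdiff, Finset.mem_union, Finset.mem_univ, true_and] at hx
    exact h x (fun h' => hx (Or.inl h')) (fun h' => hx (Or.inr h'))),
    Finset.sum_const, nsmul_eq_mul, card_sdiff_univ]

lemma sum_split' (C : Finset (Fin k)) (g : Fin k → ℝ) (v : ℝ)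
    (h : ∀ x, x ∉ C → g x = v) :
    ∑ x ∈ univ, g x = (∑ x ∈ C, g x) + ((k : ℝ) - (C.card : ℕ)) * v := by
  have := sum_split C ∅ g v (fun x hx _ => h x hx)
  simpa using this

lemma ite_push {α : Type*} [Fintype α] (P : Prop) [Decidable P] (R : α → Prop)
    [DecidablePred R] (f : α → ℝ) :
    ∑ x : α, (if P ∧ R x then f x else 0) =
      if P then ∑ x : α, (if R x then f x else 0) else 0 := by
  split_ifs with h
  · exact Finset.sum_congr rfl fun x _ => by simp [h]
  · simp [h]

-- set/card helpers
lemma card_triple (a b c : Fin k) (hab : a ≠ b) (hac : a ≠ c) (hbc : b ≠ c) :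
    ({a, b, c} : Finset (Fin k)).card = 3 := by
  rw [Finset.card_insert_of_notMem (by simp [hab, hac]), Finset.card_pair hbc]

lemma card_quad (a b c d : Fin k) (hab : a ≠ b) (hac : a ≠ c) (had : a ≠ d)
    (hbc : b ≠ c) (hbd : b ≠ d) (hcd : c ≠ d) :
    ({a, b, c, d} : Finset (Fin k)).card = 4 := by
  rw [Finset.card_insert_of_notMem (by simp [hab, hac, had]), card_triple _ _ _ hbc hbd hcd]

lemma set_aba (a b : Fin k) : ({a, b, a} : Finset (Fin k)) = {a, b} := by
  ext y; simp only [Finset.mem_insert, Finset.mem_singleton] <;> tauto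
lemma set_abb (a b : Fin k) : ({a, b, b} : Finset (Fin k)) = {a, b} := by
  ext y; simp only [Finset.mem_insert, Finset.mem_singleton] <;> tauto
lemma set_aab (a b : Fin k) : ({a, a, b} : Finset (Fin k)) = {a, b} :=
  Finset.insert_idem a {b}
lemma set_aa (a : Fin k) : ({a, a} : Finset (Fin k)) = {a} := by ext y; simp
lemma set_aaa (a : Fin k) : ({a, a, a} : Finset (Fin k)) = {a} := by ext y; simp

section defs
variable (t : ℕ)

def innerB (x0 x2 x4 : Fin k) : ℝ :=
  ((k : ℝ) - ((({x0, x2, x4} : Finset (Fin k)).card : ℕ) : ℝ)) ^ t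

def sumX4 (x0 x1 x3 x2 : Fin k) : ℝ := ∑ x4 ∈ univ \ {x1, x3}, innerB t x0 x2 x4

def sumW (x0 x1 x3 : Fin k) : ℝ := ∑ x2 ∈ univ \ {x1}, sumX4 t x0 x1 x3 x2

end defs

section leaves
variable (t : ℕ) {x0 x1 x2 x3 : Fin k}

lemma L1 (h20 : x2 ≠ x0) : sumX4 t x0 x0 x0 x2 =
    ((k:ℝ)-2)^t + ((k:ℝ)-2)*((k:ℝ)-3)^t := by
  rw [sumX4, sum_split {x0, x2} _ _ (((k:ℝ)-3)^t) ?_]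
  · have h1 : ({x0, x2} : Finset (Fin k)) \ {x0, x0} = {x2} := by
      ext y; simp only [Finset.mem_sdiff, Finset.mem_insert, Finset.mem_singleton]
      constructor
      · rintro ⟨h | h, h'⟩ <;> tauto
      · rintro rfl; exact ⟨Or.inr rfl, by tauto⟩
    have h2 : ({x0, x2} : Finset (Fin k)) ∪ {x0, x0} = {x0, x2} := by
      ext y; simp; tauto
    rw [h1, h2, Finset.sum_singleton, innerB, set_abb, Finset.card_pair (Ne.symm h20)]
    push_cast; ring
  · intro x4 hC hE
    simp only [Finset.mem_insert, Finset.mem_singleton, not_or] at hC hE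
    rw [innerB, card_triple _ _ _ (Ne.symm h20) (Ne.symm hC.1) (Ne.symm hC.2)]
    push_cast; ring

lemma L2 (h30 : x3 ≠ x0) : sumX4 t x0 x0 x3 x3 = ((k:ℝ)-2)*((k:ℝ)-3)^t := by
  rw [sumX4, sum_split {x0, x3} _ _ (((k:ℝ)-3)^t) ?_]
  · rw [Finset.sdiff_self, Finset.union_self, Finset.sum_empty,
      Finset.card_pair (Ne.symm h30)]
    push_cast; ring
  · intro x4 hC hE
    simp only [Finset.mem_insert, Finset.mem_singleton, not_or] at hC hE
    rw [innerB, card_triple _ _ _ (Ne.symm h30) (Ne.symm hC.1) (Ne.symm hC.2)]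
    push_cast; ring

lemma L3 (h30 : x3 ≠ x0) (h20 : x2 ≠ x0) (h23 : x2 ≠ x3) :
    sumX4 t x0 x0 x3 x2 = ((k:ℝ)-2)^t + ((k:ℝ)-3)*((k:ℝ)-3)^t := by
  rw [sumX4, sum_split {x0, x2} _ _ (((k:ℝ)-3)^t) ?_]
  · have h1 : ({x0, x2} : Finset (Fin k)) \ {x0, x3} = {x2} := by
      ext y
      simp only [Finset.mem_sdiff, Finset.mem_insert, Finset.mem_singleton, not_or]
      constructor
      · rintro ⟨h | h, h'⟩ <;> tauto
      · rintro rfl; exact ⟨Or.inr rfl, h20, h23⟩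
    have h2 : ({x0, x2} : Finset (Fin k)) ∪ {x0, x3} = {x0, x2, x3} := by
      ext y; simp only [Finset.mem_union, Finset.mem_insert, Finset.mem_singleton] <;> tauto
    rw [h1, h2, Finset.sum_singleton, innerB, set_abb, Finset.card_pair (Ne.symm h20),
      card_triple _ _ _ (Ne.symm h20) (Ne.symm h30) h23]
    push_cast; ring
  · intro x4 hC hE
    simp only [Finset.mem_insert, Finset.mem_singleton, not_or] at hC hE
    rw [innerB, card_triple _ _ _ (Ne.symm h20) (Ne.symm hC.1) (Ne.symm hC.2)]
    push_cast; ring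

lemma L4 (h10 : x1 ≠ x0) : sumX4 t x0 x1 x0 x0 = ((k:ℝ)-2)*((k:ℝ)-2)^t := by
  rw [sumX4, sum_split {x0} _ _ (((k:ℝ)-2)^t) ?_]
  · have h1 : ({x0} : Finset (Fin k)) \ {x1, x0} = ∅ := by
      ext y
      simp only [Finset.mem_sdiff, Finset.mem_singleton, Finset.mem_insert, not_or,
        Finset.notMem_empty, iff_false]
      tauto
    have h2 : ({x0} : Finset (Fin k)) ∪ {x1, x0} = {x0, x1} := by
      ext y; simp only [Finset.mem_union, Finset.mem_insert, Finset.mem_singleton] <;> tauto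
    rw [h1, h2, Finset.sum_empty, Finset.card_pair (Ne.symm h10)]
    push_cast; ring
  · intro x4 hC hE
    simp only [Finset.mem_insert, Finset.mem_singleton, not_or] at hC hE
    rw [innerB, set_aab, Finset.card_pair (Ne.symm hC)]
    push_cast; ring

lemma L5 (h10 : x1 ≠ x0) (h20 : x2 ≠ x0) (h21 : x2 ≠ x1) :
    sumX4 t x0 x1 x0 x2 = ((k:ℝ)-2)^t + ((k:ℝ)-3)*((k:ℝ)-3)^t := by
  rw [sumX4, sum_split {x0, x2} _ _ (((k:ℝ)-3)^t) ?_]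
  · have h1 : ({x0, x2} : Finset (Fin k)) \ {x1, x0} = {x2} := by
      ext y
      simp only [Finset.mem_sdiff, Finset.mem_insert, Finset.mem_singleton, not_or]
      constructor
      · rintro ⟨h | h, h'⟩ <;> tauto
      · rintro rfl; exact ⟨Or.inr rfl, h21, h20⟩
    have h2 : ({x0, x2} : Finset (Fin k)) ∪ {x1, x0} = {x0, x2, x1} := by
      ext y; simp only [Finset.mem_union, Finset.mem_insert, Finset.mem_singleton] <;> tauto
    rw [h1, h2, Finset.sum_singleton, innerB, set_abb, Finset.card_pair (Ne.symm h20),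
      card_triple _ _ _ (Ne.symm h20) (Ne.symm h10) h21]
    push_cast; ring
  · intro x4 hC hE
    simp only [Finset.mem_insert, Finset.mem_singleton, not_or] at hC hE
    rw [innerB, card_triple _ _ _ (Ne.symm h20) (Ne.symm hC.1) (Ne.symm hC.2)]
    push_cast; ring

lemma L6 (h10 : x1 ≠ x0) : sumX4 t x0 x1 x1 x0 =
    ((k:ℝ)-1)^t + ((k:ℝ)-2)*((k:ℝ)-2)^t := by
  rw [sumX4, sum_split {x0} _ _ (((k:ℝ)-2)^t) ?_]
  · have h1 : ({x0} : Finset (Fin k)) \ {x1, x1} = {x0} := by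
      ext y
      simp only [Finset.mem_sdiff, Finset.mem_singleton, Finset.mem_insert, not_or]
      constructor
      · rintro ⟨h, h'⟩; exact h
      · rintro rfl; exact ⟨rfl, Ne.symm h10, Ne.symm h10⟩
    have h2 : ({x0} : Finset (Fin k)) ∪ {x1, x1} = {x0, x1} := by
      ext y; simp only [Finset.mem_union, Finset.mem_insert, Finset.mem_singleton] <;> tauto
    rw [h1, h2, Finset.sum_singleton, innerB, set_aaa, Finset.card_singleton,
      Finset.card_pair (Ne.symm h10)]
    push_cast; ring
  · intro x4 hC hE
    simp only [Finset.mem_insert, Finset.mem_singleton, not_or] at hC hE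
    rw [innerB, set_aab, Finset.card_pair (Ne.symm hC)]
    push_cast; ring

lemma L7 (h10 : x1 ≠ x0) (h20 : x2 ≠ x0) (h21 : x2 ≠ x1) :
    sumX4 t x0 x1 x1 x2 = 2*((k:ℝ)-2)^t + ((k:ℝ)-3)*((k:ℝ)-3)^t := by
  rw [sumX4, sum_split {x0, x2} _ _ (((k:ℝ)-3)^t) ?_]
  · have h1 : ({x0, x2} : Finset (Fin k)) \ {x1, x1} = {x0, x2} := by
      ext y
      simp only [Finset.mem_sdiff, Finset.mem_insert, Finset.mem_singleton, not_or]
      constructor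
      · rintro ⟨h, h'⟩; exact h
      · rintro (rfl | rfl)
        · exact ⟨Or.inl rfl, Ne.symm h10, Ne.symm h10⟩
        · exact ⟨Or.inr rfl, h21, h21⟩
    have h2 : ({x0, x2} : Finset (Fin k)) ∪ {x1, x1} = {x0, x2, x1} := by
      ext y; simp only [Finset.mem_union, Finset.mem_insert, Finset.mem_singleton] <;> tauto
    rw [h1, h2, Finset.sum_pair (Ne.symm h20), innerB, innerB, set_aba, set_abb,
      Finset.card_pair (Ne.symm h20),
      card_triple _ _ _ (Ne.symm h20) (Ne.symm h10) h21]
    push_cast; ring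
  · intro x4 hC hE
    simp only [Finset.mem_insert, Finset.mem_singleton, not_or] at hC hE
    rw [innerB, card_triple _ _ _ (Ne.symm h20) (Ne.symm hC.1) (Ne.symm hC.2)]
    push_cast; ring

lemma L8 (h10 : x1 ≠ x0) (h30 : x3 ≠ x0) (h31 : x3 ≠ x1) :
    sumX4 t x0 x1 x3 x0 = ((k:ℝ)-1)^t + ((k:ℝ)-3)*((k:ℝ)-2)^t := by
  rw [sumX4, sum_split {x0} _ _ (((k:ℝ)-2)^t) ?_]
  · have h1 : ({x0} : Finset (Fin k)) \ {x1, x3} = {x0} := by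
      ext y
      simp only [Finset.mem_sdiff, Finset.mem_singleton, Finset.mem_insert, not_or]
      constructor
      · rintro ⟨h, h'⟩; exact h
      · rintro rfl; exact ⟨rfl, Ne.symm h10, Ne.symm h30⟩
    have h2 : ({x0} : Finset (Fin k)) ∪ {x1, x3} = {x0, x1, x3} := by
      ext y; simp only [Finset.mem_union, Finset.mem_insert, Finset.mem_singleton] <;> tauto
    rw [h1, h2, Finset.sum_singleton, innerB, set_aaa, Finset.card_singleton,
      card_triple _ _ _ (Ne.symm h10) (Ne.symm h30) (Ne.symm h31)]
    push_cast; ring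
  · intro x4 hC hE
    simp only [Finset.mem_insert, Finset.mem_singleton, not_or] at hC hE
    rw [innerB, set_aab, Finset.card_pair (Ne.symm hC)]
    push_cast; ring

lemma L9 (h10 : x1 ≠ x0) (h30 : x3 ≠ x0) (h31 : x3 ≠ x1) :
    sumX4 t x0 x1 x3 x3 = ((k:ℝ)-2)^t + ((k:ℝ)-3)*((k:ℝ)-3)^t := by
  rw [sumX4, sum_split {x0, x3} _ _ (((k:ℝ)-3)^t) ?_]
  · have h1 : ({x0, x3} : Finset (Fin k)) \ {x1, x3} = {x0} := by
      ext y
      simp only [Finset.mem_sdiff, Finset.mem_insert, Finset.mem_singleton, not_or]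
      constructor
      · rintro ⟨h | h, h'⟩ <;> tauto
      · rintro rfl; exact ⟨Or.inl rfl, Ne.symm h10, Ne.symm h30⟩
    have h2 : ({x0, x3} : Finset (Fin k)) ∪ {x1, x3} = {x0, x1, x3} := by
      ext y; simp only [Finset.mem_union, Finset.mem_insert, Finset.mem_singleton] <;> tauto
    rw [h1, h2, Finset.sum_singleton, innerB, set_aba, Finset.card_pair (Ne.symm h30),
      card_triple _ _ _ (Ne.symm h10) (Ne.symm h30) (Ne.symm h31)]
    push_cast; ring
  · intro x4 hC hE
    simp only [Finset.mem_insert, Finset.mem_singleton, not_or] at hC hE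
    rw [innerB, card_triple _ _ _ (Ne.symm h30) (Ne.symm hC.1) (Ne.symm hC.2)]
    push_cast; ring

lemma L10 (h10 : x1 ≠ x0) (h30 : x3 ≠ x0) (h31 : x3 ≠ x1)
    (h20 : x2 ≠ x0) (h21 : x2 ≠ x1) (h23 : x2 ≠ x3) :
    sumX4 t x0 x1 x3 x2 = 2*((k:ℝ)-2)^t + ((k:ℝ)-4)*((k:ℝ)-3)^t := by
  rw [sumX4, sum_split {x0, x2} _ _ (((k:ℝ)-3)^t) ?_]
  · have h1 : ({x0, x2} : Finset (Fin k)) \ {x1, x3} = {x0, x2} := by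
      ext y
      simp only [Finset.mem_sdiff, Finset.mem_insert, Finset.mem_singleton, not_or]
      constructor
      · rintro ⟨h, h'⟩; exact h
      · rintro (rfl | rfl)
        · exact ⟨Or.inl rfl, Ne.symm h10, Ne.symm h30⟩
        · exact ⟨Or.inr rfl, h21, h23⟩
    have h2 : ({x0, x2} : Finset (Fin k)) ∪ {x1, x3} = {x0, x2, x1, x3} := by
      ext y; simp only [Finset.mem_union, Finset.mem_insert, Finset.mem_singleton] <;> tauto
    rw [h1, h2, Finset.sum_pair (Ne.symm h20), innerB, innerB, set_aba, set_abb,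
      Finset.card_pair (Ne.symm h20),
      card_quad _ _ _ _ (Ne.symm h20) (Ne.symm h10) (Ne.symm h30) h21 h23 (Ne.symm h31)]
    push_cast; ring
  · intro x4 hC hE
    simp only [Finset.mem_insert, Finset.mem_singleton, not_or] at hC hE
    rw [innerB, card_triple _ _ _ (Ne.symm h20) (Ne.symm hC.1) (Ne.symm hC.2)]
    push_cast; ring
end leaves

section Wlem
variable (t : ℕ) {x0 x1 x3 : Fin k}

lemma W1 : sumW t x0 x0 x0 =
    ((k:ℝ)-1)*(((k:ℝ)-2)^t + ((k:ℝ)-2)*((k:ℝ)-3)^t) := by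
  rw [sumW, sum_split ∅ _ _ (((k:ℝ)-2)^t + ((k:ℝ)-2)*((k:ℝ)-3)^t) ?_]
  · simp
  · intro x2 _ hE
    simp only [Finset.mem_singleton] at hE
    exact L1 t hE

lemma W2 (h30 : x3 ≠ x0) : sumW t x0 x0 x3 =
    ((k:ℝ)-2)*((k:ℝ)-2)^t + (((k:ℝ)-2)*((k:ℝ)-2))*((k:ℝ)-3)^t := by
  rw [sumW, sum_split {x3} _ _ (((k:ℝ)-2)^t + ((k:ℝ)-3)*((k:ℝ)-3)^t) ?_]
  · have h1 : ({x3} : Finset (Fin k)) \ {x0} = {x3} := by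
      ext y
      simp only [Finset.mem_sdiff, Finset.mem_singleton]
      constructor
      · rintro ⟨h, _⟩; exact h
      · rintro rfl; exact ⟨rfl, h30⟩
    have h2 : ({x3} : Finset (Fin k)) ∪ {x0} = {x3, x0} := rfl
    rw [h1, h2, Finset.sum_singleton, L2 t h30, Finset.card_pair h30]
    push_cast; ring
  · intro x2 hC hE
    simp only [Finset.mem_singleton] at hC hE
    exact L3 t h30 hE hC

lemma W3 (h10 : x1 ≠ x0) : sumW t x0 x1 x0 =
    2*((k:ℝ)-2)*((k:ℝ)-2)^t + ((k:ℝ)-2)*((k:ℝ)-3)*((k:ℝ)-3)^t := by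
  rw [sumW, sum_split {x0} _ _ (((k:ℝ)-2)^t + ((k:ℝ)-3)*((k:ℝ)-3)^t) ?_]
  · have h1 : ({x0} : Finset (Fin k)) \ {x1} = {x0} := by
      ext y
      simp only [Finset.mem_sdiff, Finset.mem_singleton]
      constructor
      · rintro ⟨h, _⟩; exact h
      · rintro rfl; exact ⟨rfl, Ne.symm h10⟩
    have h2 : ({x0} : Finset (Fin k)) ∪ {x1} = {x0, x1} := rfl
    rw [h1, h2, Finset.sum_singleton, L4 t h10, Finset.card_pair (Ne.symm h10)]
    push_cast; ring
  · intro x2 hC hE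
    simp only [Finset.mem_singleton] at hC hE
    exact L5 t h10 hC hE

lemma W4 (h10 : x1 ≠ x0) : sumW t x0 x1 x1 =
    ((k:ℝ)-1)^t + 3*((k:ℝ)-2)*((k:ℝ)-2)^t + ((k:ℝ)-2)*((k:ℝ)-3)*((k:ℝ)-3)^t := by
  rw [sumW, sum_split {x0} _ _ (2*((k:ℝ)-2)^t + ((k:ℝ)-3)*((k:ℝ)-3)^t) ?_]
  · have h1 : ({x0} : Finset (Fin k)) \ {x1} = {x0} := by
      ext y
      simp only [Finset.mem_sdiff, Finset.mem_singleton]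
      constructor
      · rintro ⟨h, _⟩; exact h
      · rintro rfl; exact ⟨rfl, Ne.symm h10⟩
    have h2 : ({x0} : Finset (Fin k)) ∪ {x1} = {x0, x1} := rfl
    rw [h1, h2, Finset.sum_singleton, L6 t h10, Finset.card_pair (Ne.symm h10)]
    push_cast; ring
  · intro x2 hC hE
    simp only [Finset.mem_singleton] at hC hE
    exact L7 t h10 hC hE

lemma W5 (h10 : x1 ≠ x0) (h30 : x3 ≠ x0) (h31 : x3 ≠ x1) : sumW t x0 x1 x3 =
    ((k:ℝ)-1)^t + (3*(k:ℝ)-8)*((k:ℝ)-2)^t + (((k:ℝ)-3)*((k:ℝ)-3))*((k:ℝ)-3)^t := by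
  rw [sumW, sum_split {x0, x3} _ _ (2*((k:ℝ)-2)^t + ((k:ℝ)-4)*((k:ℝ)-3)^t) ?_]
  · have h1 : ({x0, x3} : Finset (Fin k)) \ {x1} = {x0, x3} := by
      ext y
      simp only [Finset.mem_sdiff, Finset.mem_insert, Finset.mem_singleton]
      constructor
      · rintro ⟨h, _⟩; exact h
      · rintro (rfl | rfl)
        · exact ⟨Or.inl rfl, Ne.symm h10⟩
        · exact ⟨Or.inr rfl, h31⟩
    have h2 : ({x0, x3} : Finset (Fin k)) ∪ {x1} = {x0, x3, x1} := by
      ext y; simp only [Finset.mem_union, Finset.mem_insert, Finset.mem_singleton] <;> tauto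
    rw [h1, h2, Finset.sum_pair (Ne.symm h30), L8 t h10 h30 h31, L9 t h10 h30 h31,
      card_triple _ _ _ (Ne.symm h30) (Ne.symm h10) h31]
    push_cast; ring
  · intro x2 hC hE
    simp only [Finset.mem_insert, Finset.mem_singleton, not_or] at hC hE
    exact L10 t h10 h30 h31 hC.1 hE hC.2

end Wlem

section assembly
variable (s t : ℕ)

def sumA (s t : ℕ) (x0 x1 : Fin k) : ℝ :=
  ∑ x3 ∈ univ, ((k:ℝ) - ((({x0, x1, x3} : Finset (Fin k)).card : ℕ) : ℝ)) ^ s * sumW t x0 x1 x3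

lemma X3a (x0 : Fin k) : sumA s t x0 x0 = (((k:ℝ)-1)^s * (((k:ℝ)-1)*(((k:ℝ)-2)^t + ((k:ℝ)-2)*((k:ℝ)-3)^t)) + ((k:ℝ)-1) * (((k:ℝ)-2)^s * (((k:ℝ)-2)*((k:ℝ)-2)^t + (((k:ℝ)-2)*((k:ℝ)-2))*((k:ℝ)-3)^t))) := by
  rw [sumA, sum_split' {x0} _ (((k:ℝ)-2)^s * (((k:ℝ)-2)*((k:ℝ)-2)^t + (((k:ℝ)-2)*((k:ℝ)-2))*((k:ℝ)-3)^t)) ?_]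
  · rw [Finset.sum_singleton, set_aaa, Finset.card_singleton, W1 t]
    push_cast; ring
  · intro x3 hC
    simp only [Finset.mem_singleton] at hC
    rw [set_aab, Finset.card_pair (Ne.symm hC), W2 t hC]
    push_cast; ring

lemma X3b (x0 x1 : Fin k) (h10 : x1 ≠ x0) : sumA s t x0 x1 = (((k:ℝ)-2)^s * (2*((k:ℝ)-2)*((k:ℝ)-2)^t + ((k:ℝ)-2)*((k:ℝ)-3)*((k:ℝ)-3)^t) + ((k:ℝ)-2)^s * (((k:ℝ)-1)^t + 3*((k:ℝ)-2)*((k:ℝ)-2)^t + ((k:ℝ)-2)*((k:ℝ)-3)*((k:ℝ)-3)^t) + ((k:ℝ)-2) * (((k:ℝ)-3)^s * (((k:ℝ)-1)^t + (3*(k:ℝ)-8)*((k:ℝ)-2)^t + (((k:ℝ)-3)*((k:ℝ)-3))*((k:ℝ)-3)^t))) := by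
  rw [sumA, sum_split' {x0, x1} _ (((k:ℝ)-3)^s * (((k:ℝ)-1)^t + (3*(k:ℝ)-8)*((k:ℝ)-2)^t + (((k:ℝ)-3)*((k:ℝ)-3))*((k:ℝ)-3)^t)) ?_]
  · rw [Finset.sum_pair (Ne.symm h10), set_aba, set_abb,
      Finset.card_pair (Ne.symm h10), W3 t h10, W4 t h10]
    push_cast; ring
  · intro x3 hC
    simp only [Finset.mem_insert, Finset.mem_singleton, not_or] at hC
    rw [card_triple _ _ _ (Ne.symm h10) (Ne.symm hC.1) (Ne.symm hC.2), W5 t h10 hC.1 hC.2]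
    push_cast; ring

lemma X1 (x0 : Fin k) : ∑ x1 ∈ univ, sumA s t x0 x1 = ((((k:ℝ)-1)^s * (((k:ℝ)-1)*(((k:ℝ)-2)^t + ((k:ℝ)-2)*((k:ℝ)-3)^t)) + ((k:ℝ)-1) * (((k:ℝ)-2)^s * (((k:ℝ)-2)*((k:ℝ)-2)^t + (((k:ℝ)-2)*((k:ℝ)-2))*((k:ℝ)-3)^t))) + ((k:ℝ)-1) * (((k:ℝ)-2)^s * (2*((k:ℝ)-2)*((k:ℝ)-2)^t + ((k:ℝ)-2)*((k:ℝ)-3)*((k:ℝ)-3)^t) + ((k:ℝ)-2)^s * (((k:ℝ)-1)^t + 3*((k:ℝ)-2)*((k:ℝ)-2)^t + ((k:ℝ)-2)*((k:ℝ)-3)*((k:ℝ)-3)^t) + ((k:ℝ)-2) * (((k:ℝ)-3)^s * (((k:ℝ)-1)^t + (3*(k:ℝ)-8)*((k:ℝ)-2)^t + (((k:ℝ)-3)*((k:ℝ)-3))*((k:ℝ)-3)^t)))) := by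
  rw [sum_split' {x0} _ (((k:ℝ)-2)^s * (2*((k:ℝ)-2)*((k:ℝ)-2)^t + ((k:ℝ)-2)*((k:ℝ)-3)*((k:ℝ)-3)^t) + ((k:ℝ)-2)^s * (((k:ℝ)-1)^t + 3*((k:ℝ)-2)*((k:ℝ)-2)^t + ((k:ℝ)-2)*((k:ℝ)-3)*((k:ℝ)-3)^t) + ((k:ℝ)-2) * (((k:ℝ)-3)^s * (((k:ℝ)-1)^t + (3*(k:ℝ)-8)*((k:ℝ)-2)^t + (((k:ℝ)-3)*((k:ℝ)-3))*((k:ℝ)-3)^t))) ?_]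
  · rw [Finset.sum_singleton, X3a, Finset.card_singleton]
    push_cast; ring
  · intro x1 hC
    simp only [Finset.mem_singleton] at hC
    exact X3b s t x0 x1 hC

lemma totalSum : ∑ x0 ∈ (univ : Finset (Fin k)), ∑ x1 ∈ univ, sumA s t x0 x1 = (k:ℝ) * ((((k:ℝ)-1)^s * (((k:ℝ)-1)*(((k:ℝ)-2)^t + ((k:ℝ)-2)*((k:ℝ)-3)^t)) + ((k:ℝ)-1) * (((k:ℝ)-2)^s * (((k:ℝ)-2)*((k:ℝ)-2)^t + (((k:ℝ)-2)*((k:ℝ)-2))*((k:ℝ)-3)^t))) + ((k:ℝ)-1) * (((k:ℝ)-2)^s * (2*((k:ℝ)-2)*((k:ℝ)-2)^t + ((k:ℝ)-2)*((k:ℝ)-3)*((k:ℝ)-3)^t) + ((k:ℝ)-2)^s * (((k:ℝ)-1)^t + 3*((k:ℝ)-2)*((k:ℝ)-2)^t + ((k:ℝ)-2)*((k:ℝ)-3)*((k:ℝ)-3)^t) + ((k:ℝ)-2) * (((k:ℝ)-3)^s * (((k:ℝ)-1)^t + (3*(k:ℝ)-8)*((k:ℝ)-2)^t + (((k:ℝ)-3)*((k:ℝ)-3))*((k:ℝ)-3)^t))))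 := by
  rw [Finset.sum_congr rfl (fun x0 _ => X1 s t x0), Finset.sum_const, Finset.card_univ,
    Fintype.card_fin, nsmul_eq_mul]

end assembly

lemma sum_cons (n : ℕ) (G : (Fin (n + 1) → Fin k) → ℝ) :
    ∑ c : Fin (n + 1) → Fin k, G c = ∑ x : Fin k, ∑ g : Fin n → Fin k, G (Fin.cons x g) := by
  rw [← (Fin.consEquiv (fun _ : Fin (n + 1) => Fin k)).sum_comp, Fintype.sum_prod_type]
  rfl

lemma sum_base (G : (Fin 0 → Fin k) → ℝ) : ∑ c : Fin 0 → Fin k, G c = G ![] :=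
  Fintype.sum_subsingleton _ ![]

lemma sum_five (F : (Fin 5 → Fin k) → ℝ) :
    ∑ c : Fin 5 → Fin k, F c =
      ∑ x0 : Fin k, ∑ x1 : Fin k, ∑ x2 : Fin k, ∑ x3 : Fin k, ∑ x4 : Fin k,
        F ![x0, x1, x2, x3, x4] := by
  rw [sum_cons]
  refine Finset.sum_congr rfl fun x0 _ => ?_
  rw [sum_cons]
  refine Finset.sum_congr rfl fun x1 _ => ?_
  rw [sum_cons]
  refine Finset.sum_congr rfl fun x2 _ => ?_
  rw [sum_cons]
  refine Finset.sum_congr rfl fun x3 _ => ?_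
  rw [sum_cons]
  refine Finset.sum_congr rfl fun x4 _ => ?_
  rw [sum_base]
  rfl

lemma bridge (s t : ℕ) :
    ((∑ c ∈ univ.filter (GoodT (k := k)),
        (univ \ {c 0, c 1, c 3}).card ^ s * (univ \ {c 0, c 2, c 4}).card ^ t : ℕ) : ℝ) =
      ∑ x0 ∈ (univ : Finset (Fin k)), ∑ x1 ∈ univ, sumA s t x0 x1 := by
  push_cast
  rw [Finset.sum_filter, sum_five]
  refine Finset.sum_congr rfl fun x0 _ => ?_
  refine Finset.sum_congr rfl fun x1 _ => ?_
  rw [Finset.sum_comm]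
  rw [show sumA s t x0 x1 = ∑ x3 ∈ univ,
    ((k:ℝ) - ((({x0, x1, x3} : Finset (Fin k)).card : ℕ) : ℝ)) ^ s * sumW t x0 x1 x3 from rfl]
  refine Finset.sum_congr rfl fun x3 _ => ?_
  have hsimp : ∀ x2 x4 : Fin k,
      (if GoodT ![x0, x1, x2, x3, x4] then
        ((((univ \ {(![x0, x1, x2, x3, x4]) 0, (![x0, x1, x2, x3, x4]) 1,
            (![x0, x1, x2, x3, x4]) 3} : Finset (Fin k)).card : ℕ) : ℝ) ^ s *
         (((univ \ {(![x0, x1, x2, x3, x4]) 0, (![x0, x1, x2, x3, x4]) 2,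
            (![x0, x1, x2, x3, x4]) 4} : Finset (Fin k)).card : ℕ) : ℝ) ^ t) else 0) =
      (if x1 ≠ x2 ∧ (x3 ≠ x4 ∧ x1 ≠ x4) then
        (((k:ℝ) - ((({x0, x1, x3} : Finset (Fin k)).card : ℕ) : ℝ)) ^ s *
          innerB t x0 x2 x4) else 0) := by
    intro x2 x4
    simp only [GoodT, Matrix.cons_val_zero, Matrix.cons_val_one, Matrix.head_cons,
      Matrix.cons_val_two, Matrix.tail_cons, Matrix.cons_val_three, Matrix.cons_val_four,
      card_sdiff_univ, innerB]
  calc ∑ x2 : Fin k, ∑ x4 : Fin k,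
        (if GoodT ![x0, x1, x2, x3, x4] then _ else 0) =
      ∑ x2 : Fin k, ∑ x4 : Fin k,
        (if x1 ≠ x2 ∧ (x3 ≠ x4 ∧ x1 ≠ x4) then
          (((k:ℝ) - ((({x0, x1, x3} : Finset (Fin k)).card : ℕ) : ℝ)) ^ s *
            innerB t x0 x2 x4) else 0) := by
        exact Finset.sum_congr rfl fun x2 _ => Finset.sum_congr rfl fun x4 _ => hsimp x2 x4
    _ = ∑ x2 : Fin k, if x1 ≠ x2 then (∑ x4 : Fin k,
          if x3 ≠ x4 ∧ x1 ≠ x4 then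
            (((k:ℝ) - ((({x0, x1, x3} : Finset (Fin k)).card : ℕ) : ℝ)) ^ s *
              innerB t x0 x2 x4) else 0) else 0 :=
        Finset.sum_congr rfl fun x2 _ => ite_push _ _ _
    _ = ((k:ℝ) - ((({x0, x1, x3} : Finset (Fin k)).card : ℕ) : ℝ)) ^ s * sumW t x0 x1 x3 := by
        rw [← Finset.sum_filter,
          show (univ.filter fun x2 : Fin k => x1 ≠ x2) = univ \ {x1} by
            ext y
            simp only [Finset.mem_filter, Finset.mem_univ, true_and, Finset.mem_sdiff,
              Finset.mem_singleton]
            exact ne_comm]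
        rw [sumW, Finset.mul_sum]
        refine Finset.sum_congr rfl fun x2 _ => ?_
        rw [← Finset.sum_filter,
          show (univ.filter fun x4 : Fin k => x3 ≠ x4 ∧ x1 ≠ x4) = univ \ {x1, x3} by
            ext y
            simp only [Finset.mem_filter, Finset.mem_univ, true_and, Finset.mem_sdiff,
              Finset.mem_insert, Finset.mem_singleton, not_or]
            constructor
            · rintro ⟨h1, h2⟩; exact ⟨Ne.symm h2, Ne.symm h1⟩
            · rintro ⟨h1, h2⟩; exact ⟨Ne.symm h2, Ne.symm h1⟩]
        rw [sumX4, Finset.mul_sum]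


def colEquiv (s t k : ℕ) : {f : Fin 5 ⊕ Fin s ⊕ Fin t → Fin k // ∀ u v, (graphY s t).Adj u v → f u ≠ f v} ≃
    Σ c : {c : Fin 5 → Fin k // GoodT c},
      (Fin s → {x : Fin k // x ≠ c.1 0 ∧ x ≠ c.1 1 ∧ x ≠ c.1 3}) ×
      (Fin t → {x : Fin k // x ≠ c.1 0 ∧ x ≠ c.1 2 ∧ x ≠ c.1 4}) where
  toFun f :=
    ⟨⟨fun i => f.1 (inl i), ((proper_iff s t k f.1).mp f.2).1⟩,
      fun i => ⟨f.1 (inr (inl i)), ((proper_iff s t k f.1).mp f.2).2.1 i⟩,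
      fun j => ⟨f.1 (inr (inr j)), ((proper_iff s t k f.1).mp f.2).2.2 j⟩⟩
  invFun x :=
    ⟨fun v => match v with
      | inl i => x.1.1 i
      | inr (inl i) => (x.2.1 i).1
      | inr (inr j) => (x.2.2 j).1,
      (proper_iff s t k _).mpr ⟨x.1.2, fun i => (x.2.1 i).2, fun j => (x.2.2 j).2⟩⟩
  left_inv f := Subtype.ext (funext fun v => by rcases v with i | i | j <;> rfl)
  right_inv x := rfl

lemma count_step1 (s t k : ℕ) :
    numColorings (graphY s t) k =
      ∑ c ∈ univ.filter (GoodT (k := k)),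
        (univ \ {c 0, c 1, c 3}).card ^ s * (univ \ {c 0, c 2, c 4}).card ^ t := by
  classical
  rw [numColorings, Nat.card_congr (colEquiv s t k), Nat.card_eq_fintype_card,
    Fintype.card_sigma]
  rw [Finset.sum_subtype (p := GoodT (k := k)) _ (by simp)]
  refine Finset.sum_congr rfl fun c _ => ?_
  obtain ⟨c, hc⟩ := c
  rw [Fintype.card_prod, Fintype.card_fun, Fintype.card_fun]
  have h1 : Fintype.card {x : Fin k // x ≠ c 0 ∧ x ≠ c 1 ∧ x ≠ c 3} =
      (univ \ {c 0, c 1, c 3}).card := by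
    rw [Fintype.card_subtype]
    congr 1
    ext x
    simp [and_assoc]
  have h2 : Fintype.card {x : Fin k // x ≠ c 0 ∧ x ≠ c 2 ∧ x ≠ c 4} =
      (univ \ {c 0, c 2, c 4}).card := by
    rw [Fintype.card_subtype]
    congr 1
    ext x
    simp [and_assoc]
  rw [h1, h2, Fintype.card_fin, Fintype.card_fin]


noncomputable def Qp (s t : ℕ) : Polynomial ℝ :=
  X * ((X-1)^s * ((X-1)*((X-2)^t + (X-2)*(X-3)^t))
      + (X-1) * ((X-2)^s * ((X-2)*(X-2)^t + ((X-2)*(X-2))*(X-3)^t))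
      + (X-1) * ((X-2)^s * (2*(X-2)*(X-2)^t + (X-2)*(X-3)*(X-3)^t)
          + (X-2)^s * ((X-1)^t + 3*(X-2)*(X-2)^t + (X-2)*(X-3)*(X-3)^t)
          + (X-2) * ((X-3)^s * ((X-1)^t + (3*X-8)*(X-2)^t + ((X-3)*(X-3))*(X-3)^t))))

lemma Qp_eval (s t : ℕ) (x : ℝ) :
    (Qp s t).eval x =
      x * ((x-1)^s * ((x-1)*((x-2)^t + (x-2)*(x-3)^t))
        + (x-1) * ((x-2)^s * ((x-2)*(x-2)^t + ((x-2)*(x-2))*(x-3)^t))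
        + (x-1) * ((x-2)^s * (2*(x-2)*(x-2)^t + (x-2)*(x-3)*(x-3)^t)
            + (x-2)^s * ((x-1)^t + 3*(x-2)*(x-2)^t + (x-2)*(x-3)*(x-3)^t)
            + (x-2) * ((x-3)^s * ((x-1)^t + (3*x-8)*(x-2)^t + ((x-3)*(x-3))*(x-3)^t)))) := by
  simp [Qp]

lemma Qp_deriv (s t : ℕ) (hs : 3 ≤ s) (ht : 3 ≤ t) :
    (Polynomial.derivative (Qp s t)).eval 2 =
      2 * ((-1 : ℝ) ^ s + (-1 : ℝ) ^ t + (-1 : ℝ) ^ (s + t)) := by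
  have hs0 : s ≠ 0 := by omega
  have ht0 : t ≠ 0 := by omega
  have hs1 : s - 1 ≠ 0 := by omega
  have ht1 : t - 1 ≠ 0 := by omega
  simp only [Qp, derivative_mul, derivative_add, derivative_sub, derivative_pow,
    derivative_X, derivative_ofNat, derivative_one, derivative_X_sub_C]
  simp only [eval_add, eval_mul, eval_sub, eval_pow, eval_X, eval_ofNat, eval_natCast,
    eval_one, eval_zero]
  norm_num [zero_pow hs0, zero_pow ht0, zero_pow hs1, zero_pow ht1]
  rw [pow_add]
  ring


lemma count_eq (s t k : ℕ) :
    ((numColorings (graphY s t) k : ℕ) : ℝ) = (Qp s t).eval (k : ℝ) := by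
  rw [count_step1 s t k, bridge s t, totalSum s t, Qp_eval]

end ChromYAux

/-- For all `s, t ≥ 3`, the derivative of the chromatic polynomial of `Y(s,t)` evaluated at
`x = 2` equals `2((-1)^s + (-1)^t + (-1)^(s+t))`. -/
theorem derivative_chromaticPolynomial_graphY_at_two (s t : ℕ) (hs : 3 ≤ s) (ht : 3 ≤ t)
    (P : Polynomial ℝ) (hP : IsChromaticPolynomial (graphY s t) P) :
    (Polynomial.derivative P).eval 2 =
      2 * ((-1 : ℝ) ^ s + (-1 : ℝ) ^ t + (-1 : ℝ) ^ (s + t)) := by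
  have hQ := ChromYAux.count_eq s t
  have hroot : ∀ n : ℕ, (P - ChromYAux.Qp s t).IsRoot (n : ℝ) := by
    intro n
    simp only [Polynomial.IsRoot, Polynomial.eval_sub, hP n, hQ n, sub_self]
  have hzero : P - ChromYAux.Qp s t = 0 := by
    apply Polynomial.eq_zero_of_infinite_isRoot
    exact Set.infinite_of_injective_forall_mem Nat.cast_injective hroot
  have hPQ : P = ChromYAux.Qp s t := by
    have := sub_eq_zero.mp hzero
    exact this
  rw [hPQ, ChromYAux.Qp_deriv s t hs ht]
end

section
/- For all odd integers s, t ≥ 3, the chromatic polynomial of Y(s,t) has a real root strictly between 1 and 2. -/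
open Finset

namespace ChromAux

variable {k : ℕ}

/-- card of the triple {x,y,z} -/
def c3 (x y z : Fin k) : ℕ := ({x, y, z} : Finset (Fin k)).card

lemma c3_comm23 (x y z : Fin k) : c3 x y z = c3 x z y := by
  unfold c3; congr 1; ext w
  simp only [Finset.mem_insert, Finset.mem_singleton]
  tauto

lemma c3_self (x y : Fin k) : c3 x y y = if x = y then 1 else 2 := by
  unfold c3
  have : ({x, y, y} : Finset (Fin k)) = {x, y} := by
    ext w; simp only [Finset.mem_insert, Finset.mem_singleton]; tauto
  rw [this]
  split_ifs with h
  · subst h; simp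
  · exact Finset.card_pair h

lemma sum_c3 (f : ℕ → ℝ) (x y : Fin k) :
    ∑ z : Fin k, f (c3 x y z) =
      if x = y then f 1 + ((k:ℝ) - 1) * f 2 else 2 * f 2 + ((k:ℝ) - 2) * f 3 := by
  rw [← Finset.sum_add_sum_compl ({x, y} : Finset (Fin k))]
  have hconst : ∀ z ∈ ({x, y} : Finset (Fin k))ᶜ,
      f (c3 x y z) = f (({x,y} : Finset (Fin k)).card + 1) := by
    intro z hz
    simp only [Finset.mem_compl, Finset.mem_insert, Finset.mem_singleton, not_or] at hz
    have : ({x, y, z} : Finset (Fin k)) = insert z {x, y} := by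
      ext w; simp only [Finset.mem_insert, Finset.mem_singleton]; tauto
    unfold c3
    rw [this, Finset.card_insert_of_notMem (by simp [hz.1, hz.2])]
  rw [Finset.sum_congr rfl hconst, Finset.sum_const, Finset.card_compl]
  split_ifs with hxy
  · subst hxy
    have h1 : ({x, x} : Finset (Fin k)) = {x} := by simp
    have hk : 1 ≤ k := (Fin.pos x)
    rw [h1]
    simp only [Finset.card_singleton, Finset.sum_singleton]
    have : c3 x x x = 1 := by unfold c3; simp
    rw [this, Fintype.card_fin, nsmul_eq_mul]
    push_cast [Nat.cast_sub hk]
    ring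
  · have hcard : ({x, y} : Finset (Fin k)).card = 2 := Finset.card_pair hxy
    have hk : 2 ≤ k := by
      have h := Finset.card_le_univ ({x, y} : Finset (Fin k))
      rw [hcard] at h; simpa using h
    rw [hcard, Finset.sum_pair hxy, Fintype.card_fin, nsmul_eq_mul]
    have e1 : c3 x y x = 2 := by
      unfold c3
      have : ({x, y, x} : Finset (Fin k)) = {x, y} := by
        ext w; simp only [Finset.mem_insert, Finset.mem_singleton]; tauto
      rw [this, hcard]
    have e2 : c3 x y y = 2 := by rw [c3_self]; simp [hxy]
    rw [e1, e2]
    push_cast [Nat.cast_sub hk]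
    ring

lemma sum_ite_diag (A B : ℝ) (x : Fin k) :
    ∑ z : Fin k, (if x = z then A else B) = A + ((k:ℝ) - 1) * B := by
  have h : ∀ z : Fin k, (if x = z then A else B) = (if x = z then A - B else 0) + B := by
    intro z; split_ifs <;> ring
  have hk : 1 ≤ k := (Fin.pos x)
  rw [Finset.sum_congr rfl (fun z _ => h z), Finset.sum_add_distrib, Finset.sum_ite_eq,
    Finset.sum_const, Finset.card_univ, Fintype.card_fin, nsmul_eq_mul]
  simp only [Finset.mem_univ, if_true]
  have : (1:ℝ) ≤ (k:ℝ) := by exact_mod_cast hk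
  ring

lemma peel1 (f : Fin k → ℝ) (a : Fin k) :
    ∑ z : Fin k, (if z ≠ a then f z else 0) = (∑ z : Fin k, f z) - f a := by
  have h : ∀ z : Fin k, (if z ≠ a then f z else 0) = f z - (if z = a then f z else 0) := by
    intro z; by_cases hz : z = a <;> simp [hz]
  rw [Finset.sum_congr rfl (fun z _ => h z), Finset.sum_sub_distrib, Finset.sum_ite_eq']
  simp

lemma peel2 (f : Fin k → ℝ) (a b : Fin k) :
    ∑ z : Fin k, (if z ≠ a ∧ z ≠ b then f z else 0) =
      (∑ z : Fin k, f z) - f a - f b + (if a = b then f a else 0) := by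
  by_cases hab : a = b
  · subst hab
    have h : ∀ z : Fin k, (if z ≠ a ∧ z ≠ a then f z else 0) = (if z ≠ a then f z else 0) := by
      intro z; by_cases hz : z = a <;> simp [hz]
    rw [Finset.sum_congr rfl (fun z _ => h z), peel1]
    simp only [ne_eq, if_true, if_pos rfl]
    ring
  · have h : ∀ z : Fin k, (if z ≠ a ∧ z ≠ b then f z else 0)
        = f z - (if z = a then f z else 0) - (if z = b then f z else 0) := by
      intro z
      by_cases h1 : z = a
      · subst h1; simp [hab]
      · by_cases h2 : z = b
        · subst h2; have hba : z ≠ a := fun hh => hab hh.symm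
          simp [h1, hba]
        · simp [h1, h2]
    rw [Finset.sum_congr rfl (fun z _ => h z)]
    rw [Finset.sum_sub_distrib, Finset.sum_sub_distrib, Finset.sum_ite_eq', Finset.sum_ite_eq']
    simp [hab]


/-- value of `∑ z, f (c3 x y z)` when `x = y` -/
def ve (k : ℕ) (f : ℕ → ℝ) : ℝ := f 1 + ((k:ℝ) - 1) * f 2
/-- value of `∑ z, f (c3 x y z)` when `x ≠ y` -/
def vn (k : ℕ) (f : ℕ → ℝ) : ℝ := 2 * f 2 + ((k:ℝ) - 2) * f 3
def pv (f : ℕ → ℝ) (x y : Fin k) : ℝ := if x = y then ve k f else vn k f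

lemma sum_c3' (f : ℕ → ℝ) (x y : Fin k) :
    ∑ z : Fin k, f (c3 x y z) = pv f x y := by
  rw [sum_c3]; unfold pv ve vn; rfl

def Efun (h : ℕ → ℝ) (x0 x1 x3 x2 : Fin k) : ℝ :=
  (∑ z : Fin k, h (c3 x0 x2 z)) - h (c3 x0 x2 x3) - h (c3 x0 x2 x1)
    + (if x3 = x1 then h (c3 x0 x2 x3) else 0)

lemma sum_quint (g h : ℕ → ℝ) :
    ∑ x0 : Fin k, ∑ x1 : Fin k, ∑ x2 : Fin k, ∑ x3 : Fin k, ∑ x4 : Fin k,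
      (if x1 ≠ x2 ∧ x3 ≠ x4 ∧ x1 ≠ x4 then g (c3 x0 x1 x3) * h (c3 x0 x2 x4) else 0)
    = (k:ℝ) * ((k:ℝ)-1) * ((g 1 * h 2 + g 2 * h 1)
        + ((k:ℝ)-2) * (g 1 * h 3 + g 3 * h 1) + 6*((k:ℝ)-2) * (g 2 * h 2)
        + ((k:ℝ)-2)*(3*(k:ℝ)-8) * (g 2 * h 3 + g 3 * h 2)
        + ((k:ℝ)-2)*((k:ℝ)-3)^2 * (g 3 * h 3)) := by
  have hx4 : ∀ x0 x1 x2 x3 : Fin k,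
      (∑ x4 : Fin k, if x1 ≠ x2 ∧ x3 ≠ x4 ∧ x1 ≠ x4
          then g (c3 x0 x1 x3) * h (c3 x0 x2 x4) else 0)
      = if x1 ≠ x2 then g (c3 x0 x1 x3) * Efun h x0 x1 x3 x2 else 0 := by
    intro x0 x1 x2 x3
    by_cases h12 : x1 ≠ x2
    · rw [if_pos h12]
      have hpt : ∀ x4 : Fin k,
          (if x1 ≠ x2 ∧ x3 ≠ x4 ∧ x1 ≠ x4 then g (c3 x0 x1 x3) * h (c3 x0 x2 x4) else 0)
          = g (c3 x0 x1 x3) * (if x4 ≠ x3 ∧ x4 ≠ x1 then h (c3 x0 x2 x4) else 0) := by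
        intro x4
        by_cases hc : x4 ≠ x3 ∧ x4 ≠ x1
        · rw [if_pos ⟨h12, Ne.symm hc.1, Ne.symm hc.2⟩, if_pos hc]
        · rw [if_neg, if_neg hc, mul_zero]
          intro hcond
          exact hc ⟨Ne.symm hcond.2.1, Ne.symm hcond.2.2⟩
      rw [Finset.sum_congr rfl fun x4 _ => hpt x4, ← Finset.mul_sum,
        peel2 (fun z => h (c3 x0 x2 z)) x3 x1]
      rfl
    · rw [if_neg h12]
      exact Finset.sum_eq_zero fun x4 _ => if_neg (by tauto)
  have hswap : ∀ x0 x1 : Fin k,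
      (∑ x2 : Fin k, ∑ x3 : Fin k, if x1 ≠ x2 then g (c3 x0 x1 x3) * Efun h x0 x1 x3 x2 else 0)
      = ∑ x3 : Fin k, ∑ x2 : Fin k,
          (if x1 ≠ x2 then g (c3 x0 x1 x3) * Efun h x0 x1 x3 x2 else 0) :=
    fun x0 x1 => Finset.sum_comm
  have hx2 : ∀ x0 x1 x3 : Fin k,
      (∑ x2 : Fin k, if x1 ≠ x2 then g (c3 x0 x1 x3) * Efun h x0 x1 x3 x2 else 0)
      = g (c3 x0 x1 x3) * ((∑ x2 : Fin k, Efun h x0 x1 x3 x2) - Efun h x0 x1 x3 x1) := by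
    intro x0 x1 x3
    have hpt : ∀ x2 : Fin k,
        (if x1 ≠ x2 then g (c3 x0 x1 x3) * Efun h x0 x1 x3 x2 else 0)
        = (if x2 ≠ x1 then g (c3 x0 x1 x3) * Efun h x0 x1 x3 x2 else 0) := by
      intro x2; simp only [ne_comm]
    rw [Finset.sum_congr rfl fun x2 _ => hpt x2,
      peel1 (fun x2 => g (c3 x0 x1 x3) * Efun h x0 x1 x3 x2) x1, ← Finset.mul_sum]
    ring
  have sum_E : ∀ x0 x1 x3 : Fin k,
      (∑ x2 : Fin k, Efun h x0 x1 x3 x2)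
      = (ve k h + ((k:ℝ)-1) * vn k h) - pv h x0 x3 - pv h x0 x1
          + (if x3 = x1 then pv h x0 x3 else 0) := by
    intro x0 x1 x3
    unfold Efun
    rw [Finset.sum_add_distrib, Finset.sum_sub_distrib, Finset.sum_sub_distrib]
    have e1 : (∑ x2 : Fin k, ∑ z : Fin k, h (c3 x0 x2 z)) = ve k h + ((k:ℝ)-1) * vn k h := by
      rw [Finset.sum_congr rfl fun x2 _ => sum_c3' h x0 x2]
      unfold pv
      rw [sum_ite_diag]
    have e2 : ∀ w : Fin k, (∑ x2 : Fin k, h (c3 x0 x2 w)) = pv h x0 w := by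
      intro w
      rw [Finset.sum_congr rfl fun x2 _ => by rw [c3_comm23 x0 x2 w], sum_c3' h x0 w]
    have e3 : (∑ x2 : Fin k, if x3 = x1 then h (c3 x0 x2 x3) else 0)
        = (if x3 = x1 then pv h x0 x3 else 0) := by
      split_ifs with hc
      · exact e2 x3
      · exact Finset.sum_const_zero
    rw [e1, e2 x3, e2 x1, e3]
  have E_at : ∀ x0 x1 x3 : Fin k,
      Efun h x0 x1 x3 x1 = pv h x0 x1 - h (c3 x0 x1 x3)
        - (if x0 = x1 then h 1 else h 2) + (if x3 = x1 then h (c3 x0 x1 x3) else 0) := by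
    intro x0 x1 x3
    unfold Efun
    rw [sum_c3' h x0 x1, c3_self x0 x1, apply_ite h]
  have hmain : ∀ x0 : Fin k,
      (∑ x1 : Fin k, ∑ x3 : Fin k,
        g (c3 x0 x1 x3) * ((∑ x2 : Fin k, Efun h x0 x1 x3 x2) - Efun h x0 x1 x3 x1))
      = (ve k g * ((ve k h + ((k:ℝ)-1) * vn k h) - 2 * ve k h + h 1)
          + ((k:ℝ)-1) * (vn k g * ((ve k h + ((k:ℝ)-1) * vn k h) - 2 * vn k h + h 2)))
        - (ve k g * ve k h + ((k:ℝ)-1) * (vn k g * vn k h))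
        + (g 1 * ve k h + ((k:ℝ)-1) * (g 2 * vn k h))
        + ((g 1 * h 1 + ((k:ℝ)-1) * (g 2 * h 2))
            + ((k:ℝ)-1) * (2 * (g 2 * h 2) + ((k:ℝ)-2) * (g 3 * h 3)))
        - (g 1 * h 1 + ((k:ℝ)-1) * (g 2 * h 2)) := by
    intro x0
    have hW : ∀ x1 x3 : Fin k,
        g (c3 x0 x1 x3) * ((∑ x2 : Fin k, Efun h x0 x1 x3 x2) - Efun h x0 x1 x3 x1)
        = g (c3 x0 x1 x3) * ((ve k h + ((k:ℝ)-1) * vn k h) - 2 * pv h x0 x1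
              + (if x0 = x1 then h 1 else h 2))
          + (-(g (c3 x0 x1 x3) * pv h x0 x3))
          + g (c3 x0 x1 x3) * (if x3 = x1 then pv h x0 x3 else 0)
          + g (c3 x0 x1 x3) * h (c3 x0 x1 x3)
          + (-(g (c3 x0 x1 x3) * (if x3 = x1 then h (c3 x0 x1 x3) else 0))) := by
      intro x1 x3
      rw [sum_E, E_at]
      ring
    rw [Finset.sum_congr rfl fun x1 _ => Finset.sum_congr rfl fun x3 _ => hW x1 x3]
    simp only [Finset.sum_add_distrib, Finset.sum_neg_distrib]
    have S1 : (∑ x1 : Fin k, ∑ x3 : Fin k,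
        g (c3 x0 x1 x3) * ((ve k h + ((k:ℝ)-1) * vn k h) - 2 * pv h x0 x1
          + (if x0 = x1 then h 1 else h 2)))
        = ve k g * ((ve k h + ((k:ℝ)-1) * vn k h) - 2 * ve k h + h 1)
          + ((k:ℝ)-1) * (vn k g * ((ve k h + ((k:ℝ)-1) * vn k h) - 2 * vn k h + h 2)) := by
      have inner : ∀ x1 : Fin k, (∑ x3 : Fin k,
          g (c3 x0 x1 x3) * ((ve k h + ((k:ℝ)-1) * vn k h) - 2 * pv h x0 x1
            + (if x0 = x1 then h 1 else h 2)))
          = if x0 = x1 then ve k g * ((ve k h + ((k:ℝ)-1) * vn k h) - 2 * ve k h + h 1)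
            else vn k g * ((ve k h + ((k:ℝ)-1) * vn k h) - 2 * vn k h + h 2) := by
        intro x1
        rw [← Finset.sum_mul, sum_c3' g x0 x1]
        unfold pv
        split_ifs <;> ring
      rw [Finset.sum_congr rfl fun x1 _ => inner x1, sum_ite_diag]
    have S2 : (∑ x1 : Fin k, ∑ x3 : Fin k, g (c3 x0 x1 x3) * pv h x0 x3)
        = ve k g * ve k h + ((k:ℝ)-1) * (vn k g * vn k h) := by
      rw [Finset.sum_comm]
      have inner : ∀ x3 : Fin k, (∑ x1 : Fin k, g (c3 x0 x1 x3) * pv h x0 x3)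
          = if x0 = x3 then ve k g * ve k h else vn k g * vn k h := by
        intro x3
        rw [Finset.sum_congr rfl fun x1 _ => by rw [c3_comm23 x0 x1 x3], ← Finset.sum_mul,
          sum_c3' g x0 x3]
        unfold pv
        split_ifs <;> ring
      rw [Finset.sum_congr rfl fun x3 _ => inner x3, sum_ite_diag]
    have S3 : (∑ x1 : Fin k, ∑ x3 : Fin k,
          g (c3 x0 x1 x3) * (if x3 = x1 then pv h x0 x3 else 0))
        = g 1 * ve k h + ((k:ℝ)-1) * (g 2 * vn k h) := by
      have inner : ∀ x1 : Fin k, (∑ x3 : Fin k,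
          g (c3 x0 x1 x3) * (if x3 = x1 then pv h x0 x3 else 0))
          = if x0 = x1 then g 1 * ve k h else g 2 * vn k h := by
        intro x1
        have hpt : ∀ x3 : Fin k, g (c3 x0 x1 x3) * (if x3 = x1 then pv h x0 x3 else 0)
            = if x3 = x1 then g (c3 x0 x1 x3) * pv h x0 x3 else 0 := by
          intro x3; split_ifs <;> simp
        rw [Finset.sum_congr rfl fun x3 _ => hpt x3, Finset.sum_ite_eq']
        simp only [Finset.mem_univ, if_true]
        rw [c3_self, apply_ite g]
        unfold pv
        split_ifs <;> ring
      rw [Finset.sum_congr rfl fun x1 _ => inner x1, sum_ite_diag]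
    have S4 : (∑ x1 : Fin k, ∑ x3 : Fin k, g (c3 x0 x1 x3) * h (c3 x0 x1 x3))
        = (g 1 * h 1 + ((k:ℝ)-1) * (g 2 * h 2))
          + ((k:ℝ)-1) * (2 * (g 2 * h 2) + ((k:ℝ)-2) * (g 3 * h 3)) := by
      have inner : ∀ x1 : Fin k, (∑ x3 : Fin k, g (c3 x0 x1 x3) * h (c3 x0 x1 x3))
          = if x0 = x1 then g 1 * h 1 + ((k:ℝ)-1) * (g 2 * h 2)
            else 2 * (g 2 * h 2) + ((k:ℝ)-2) * (g 3 * h 3) := by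
        intro x1
        have := sum_c3 (fun n => g n * h n) x0 x1
        simpa using this
      rw [Finset.sum_congr rfl fun x1 _ => inner x1, sum_ite_diag]
    have S5 : (∑ x1 : Fin k, ∑ x3 : Fin k,
          g (c3 x0 x1 x3) * (if x3 = x1 then h (c3 x0 x1 x3) else 0))
        = g 1 * h 1 + ((k:ℝ)-1) * (g 2 * h 2) := by
      have inner : ∀ x1 : Fin k, (∑ x3 : Fin k,
          g (c3 x0 x1 x3) * (if x3 = x1 then h (c3 x0 x1 x3) else 0))
          = if x0 = x1 then g 1 * h 1 else g 2 * h 2 := by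
        intro x1
        have hpt : ∀ x3 : Fin k, g (c3 x0 x1 x3) * (if x3 = x1 then h (c3 x0 x1 x3) else 0)
            = if x3 = x1 then g (c3 x0 x1 x3) * h (c3 x0 x1 x3) else 0 := by
          intro x3; split_ifs <;> simp
        rw [Finset.sum_congr rfl fun x3 _ => hpt x3, Finset.sum_ite_eq']
        simp only [Finset.mem_univ, if_true]
        rw [c3_self, apply_ite g, apply_ite h]
        split_ifs <;> ring
      rw [Finset.sum_congr rfl fun x1 _ => inner x1, sum_ite_diag]
    rw [S1, S2, S3, S4, S5]
    ring
  rw [Finset.sum_congr rfl fun x0 _ => Finset.sum_congr rfl fun x1 _ =>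
    Finset.sum_congr rfl fun x2 _ => Finset.sum_congr rfl fun x3 _ => hx4 x0 x1 x2 x3]
  rw [Finset.sum_congr rfl fun x0 _ => Finset.sum_congr rfl fun x1 _ => hswap x0 x1]
  rw [Finset.sum_congr rfl fun x0 _ => Finset.sum_congr rfl fun x1 _ =>
    Finset.sum_congr rfl fun x3 _ => hx2 x0 x1 x3]
  rw [Finset.sum_congr rfl fun x0 _ => hmain x0]
  rw [Finset.sum_const, Finset.card_univ, Fintype.card_fin, nsmul_eq_mul]
  unfold ve vn
  ring

variable {s t k : ℕ}

def Cond (s t k : ℕ) (f : Fin 5 ⊕ Fin s ⊕ Fin t → Fin k) : Prop :=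
  f (Sum.inl 1) ≠ f (Sum.inl 2) ∧ f (Sum.inl 3) ≠ f (Sum.inl 4) ∧ f (Sum.inl 1) ≠ f (Sum.inl 4)
  ∧ (∀ i : Fin s, f (Sum.inr (Sum.inl i)) ≠ f (Sum.inl 0) ∧ f (Sum.inr (Sum.inl i)) ≠ f (Sum.inl 1)
      ∧ f (Sum.inr (Sum.inl i)) ≠ f (Sum.inl 3))
  ∧ (∀ j : Fin t, f (Sum.inr (Sum.inr j)) ≠ f (Sum.inl 0) ∧ f (Sum.inr (Sum.inr j)) ≠ f (Sum.inl 2)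
      ∧ f (Sum.inr (Sum.inr j)) ≠ f (Sum.inl 4))

lemma proper_iff (f : Fin 5 ⊕ Fin s ⊕ Fin t → Fin k) :
    (∀ u v, (graphY s t).Adj u v → f u ≠ f v) ↔ Cond s t k f := by
  constructor
  · intro hf
    refine ⟨?_, ?_, ?_, fun i => ⟨?_, ?_, ?_⟩, fun j => ⟨?_, ?_, ?_⟩⟩
    · exact hf _ _ ((SimpleGraph.fromRel_adj _ _ _).2
        ⟨by simp, Or.inl (Or.inl (Or.inl ⟨rfl, rfl⟩))⟩)
    · exact hf _ _ ((SimpleGraph.fromRel_adj _ _ _).2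
        ⟨by simp, Or.inl (Or.inl (Or.inr (Or.inl ⟨rfl, rfl⟩)))⟩)
    · exact hf _ _ ((SimpleGraph.fromRel_adj _ _ _).2
        ⟨by simp, Or.inl (Or.inr ⟨rfl, rfl⟩)⟩)
    · exact hf _ _ ((SimpleGraph.fromRel_adj _ _ _).2
        ⟨by simp, Or.inl (Or.inl (Or.inr (Or.inr (Or.inl ⟨⟨i, rfl⟩, Or.inl rfl⟩))))⟩)
    · exact hf _ _ ((SimpleGraph.fromRel_adj _ _ _).2
        ⟨by simp, Or.inl (Or.inl (Or.inr (Or.inr (Or.inl ⟨⟨i, rfl⟩, Or.inr (Or.inl rfl)⟩))))⟩)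
    · exact hf _ _ ((SimpleGraph.fromRel_adj _ _ _).2
        ⟨by simp, Or.inl (Or.inl (Or.inr (Or.inr (Or.inl ⟨⟨i, rfl⟩, Or.inr (Or.inr rfl)⟩))))⟩)
    · exact hf _ _ ((SimpleGraph.fromRel_adj _ _ _).2
        ⟨by simp, Or.inl (Or.inl (Or.inr (Or.inr (Or.inr ⟨⟨j, rfl⟩, Or.inl rfl⟩))))⟩)
    · exact hf _ _ ((SimpleGraph.fromRel_adj _ _ _).2
        ⟨by simp, Or.inl (Or.inl (Or.inr (Or.inr (Or.inr ⟨⟨j, rfl⟩, Or.inr (Or.inl rfl)⟩))))⟩)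
    · exact hf _ _ ((SimpleGraph.fromRel_adj _ _ _).2
        ⟨by simp, Or.inl (Or.inl (Or.inr (Or.inr (Or.inr ⟨⟨j, rfl⟩, Or.inr (Or.inr rfl)⟩))))⟩)
  · rintro ⟨h12, h34, h14, hS, hT⟩ u v hadj
    unfold graphY at hadj
    rw [SimpleGraph.fromRel_adj] at hadj
    obtain ⟨-, hr | hr⟩ := hadj
    · unfold YAdj XAdj at hr
      rcases hr with (⟨hu, hv⟩ | ⟨hu, hv⟩ | ⟨⟨i, hu⟩, hv | hv | hv⟩ |
        ⟨⟨j, hu⟩, hv | hv | hv⟩) | ⟨hu, hv⟩ <;> subst hu <;> subst hv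
      · exact h12
      · exact h34
      · exact (hS i).1
      · exact (hS i).2.1
      · exact (hS i).2.2
      · exact (hT j).1
      · exact (hT j).2.1
      · exact (hT j).2.2
      · exact h14
    · unfold YAdj XAdj at hr
      rcases hr with (⟨hu, hv⟩ | ⟨hu, hv⟩ | ⟨⟨i, hu⟩, hv | hv | hv⟩ |
        ⟨⟨j, hu⟩, hv | hv | hv⟩) | ⟨hu, hv⟩ <;> subst hu <;> subst hv
      · exact Ne.symm h12
      · exact Ne.symm h34
      · exact Ne.symm (hS i).1
      · exact Ne.symm (hS i).2.1
      · exact Ne.symm (hS i).2.2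
      · exact Ne.symm (hT j).1
      · exact Ne.symm (hT j).2.1
      · exact Ne.symm (hT j).2.2
      · exact Ne.symm h14

def Valid (k : ℕ) (c : Fin k × Fin k × Fin k × Fin k × Fin k) : Prop :=
  c.2.1 ≠ c.2.2.1 ∧ c.2.2.2.1 ≠ c.2.2.2.2 ∧ c.2.1 ≠ c.2.2.2.2

def colEquiv (s t k : ℕ) : {f : Fin 5 ⊕ Fin s ⊕ Fin t → Fin k // Cond s t k f} ≃
    Σ c : {c : Fin k × Fin k × Fin k × Fin k × Fin k // Valid k c},
      (Fin s → {z : Fin k // z ≠ c.1.1 ∧ z ≠ c.1.2.1 ∧ z ≠ c.1.2.2.2.1}) ×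
      (Fin t → {z : Fin k // z ≠ c.1.1 ∧ z ≠ c.1.2.2.1 ∧ z ≠ c.1.2.2.2.2}) where
  toFun f := ⟨⟨(f.1 (Sum.inl 0), f.1 (Sum.inl 1), f.1 (Sum.inl 2), f.1 (Sum.inl 3),
      f.1 (Sum.inl 4)), f.2.1, f.2.2.1, f.2.2.2.1⟩,
    fun i => ⟨f.1 (Sum.inr (Sum.inl i)), f.2.2.2.2.1 i⟩,
    fun j => ⟨f.1 (Sum.inr (Sum.inr j)), f.2.2.2.2.2 j⟩⟩
  invFun x := ⟨Sum.elim
      (![x.1.1.1, x.1.1.2.1, x.1.1.2.2.1, x.1.1.2.2.2.1, x.1.1.2.2.2.2])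
      (Sum.elim (fun i => (x.2.1 i).1) (fun j => (x.2.2 j).1)),
    x.1.2.1, x.1.2.2.1, x.1.2.2.2,
    fun i => (x.2.1 i).2, fun j => (x.2.2 j).2⟩
  left_inv f := Subtype.ext (funext fun v => by
    rcases v with m | i | j
    · fin_cases m <;> rfl
    · rfl
    · rfl)
  right_inv x := rfl


lemma c3_le (a b c : Fin k) : c3 a b c ≤ k := by
  have h := Finset.card_le_univ ({a, b, c} : Finset (Fin k))
  simpa [c3] using h

instance : DecidablePred (Valid k) := fun c => by unfold Valid; infer_instance

lemma card_avoid (a b c : Fin k) :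
    Fintype.card {z : Fin k // z ≠ a ∧ z ≠ b ∧ z ≠ c} = k - c3 a b c := by
  rw [Fintype.card_subtype]
  have h : (univ.filter fun z : Fin k => z ≠ a ∧ z ≠ b ∧ z ≠ c)
      = ({a, b, c} : Finset (Fin k))ᶜ := by
    ext z
    simp [not_or]
  rw [h, Finset.card_compl, Fintype.card_fin]
  rfl

lemma numColorings_graphY (s t k : ℕ) :
    numColorings (graphY s t) k
    = ∑ c : Fin k × Fin k × Fin k × Fin k × Fin k,
        if Valid k c then (k - c3 c.1 c.2.1 c.2.2.2.1) ^ s * (k - c3 c.1 c.2.2.1 c.2.2.2.2) ^ t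
        else 0 := by
  unfold numColorings
  rw [Nat.card_congr ((Equiv.subtypeEquivRight (fun f => proper_iff f)).trans (colEquiv s t k))]
  rw [Nat.card_eq_fintype_card, Fintype.card_sigma]
  have hterm : ∀ c : {c : Fin k × Fin k × Fin k × Fin k × Fin k // Valid k c},
      Fintype.card ((Fin s → {z : Fin k // z ≠ c.1.1 ∧ z ≠ c.1.2.1 ∧ z ≠ c.1.2.2.2.1}) ×
        (Fin t → {z : Fin k // z ≠ c.1.1 ∧ z ≠ c.1.2.2.1 ∧ z ≠ c.1.2.2.2.2}))
      = (k - c3 c.1.1 c.1.2.1 c.1.2.2.2.1) ^ s * (k - c3 c.1.1 c.1.2.2.1 c.1.2.2.2.2) ^ t := by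
    intro c
    rw [Fintype.card_prod, Fintype.card_fun, Fintype.card_fun, Fintype.card_fin,
      Fintype.card_fin, card_avoid, card_avoid]
  rw [Finset.sum_congr rfl fun c _ => hterm c]
  rw [← Finset.sum_subtype (univ.filter (Valid k)) (fun c => by simp)
    (fun c => (k - c3 c.1 c.2.1 c.2.2.2.1) ^ s * (k - c3 c.1 c.2.2.1 c.2.2.2.2) ^ t)]
  rw [Finset.sum_filter]

theorem numColorings_real (s t k : ℕ) :
    (numColorings (graphY s t) k : ℝ)
    = (k:ℝ) * ((k:ℝ)-1) * (
        (((k:ℝ)-1)^s * ((k:ℝ)-2)^t + ((k:ℝ)-2)^s * ((k:ℝ)-1)^t)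
        + ((k:ℝ)-2) * (((k:ℝ)-1)^s * ((k:ℝ)-3)^t + ((k:ℝ)-3)^s * ((k:ℝ)-1)^t)
        + 6*((k:ℝ)-2) * (((k:ℝ)-2)^s * ((k:ℝ)-2)^t)
        + ((k:ℝ)-2)*(3*(k:ℝ)-8) * (((k:ℝ)-2)^s * ((k:ℝ)-3)^t + ((k:ℝ)-3)^s * ((k:ℝ)-2)^t)
        + ((k:ℝ)-2)*((k:ℝ)-3)^2 * (((k:ℝ)-3)^s * ((k:ℝ)-3)^t)) := by
  rw [numColorings_graphY, Nat.cast_sum]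
  have hcast : ∀ c : Fin k × Fin k × Fin k × Fin k × Fin k,
      ((if Valid k c then (k - c3 c.1 c.2.1 c.2.2.2.1) ^ s * (k - c3 c.1 c.2.2.1 c.2.2.2.2) ^ t
        else 0 : ℕ) : ℝ)
      = if c.2.1 ≠ c.2.2.1 ∧ c.2.2.2.1 ≠ c.2.2.2.2 ∧ c.2.1 ≠ c.2.2.2.2 then
          (fun n : ℕ => ((k:ℝ) - (n:ℝ))^s) (c3 c.1 c.2.1 c.2.2.2.1) *
          (fun n : ℕ => ((k:ℝ) - (n:ℝ))^t) (c3 c.1 c.2.2.1 c.2.2.2.2) else 0 := by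
    intro c
    unfold Valid
    split_ifs with hV
    · refine (congrArg (Nat.cast (R := ℝ)) (if_pos (show Valid k c from hV))).trans ?_
      push_cast [Nat.cast_sub (c3_le _ _ _)]
      ring
    · simp
      exact if_neg hV
  rw [Finset.sum_congr rfl fun c _ => hcast c]
  rw [show (∑ c : Fin k × Fin k × Fin k × Fin k × Fin k,
      if c.2.1 ≠ c.2.2.1 ∧ c.2.2.2.1 ≠ c.2.2.2.2 ∧ c.2.1 ≠ c.2.2.2.2 then
        (fun n : ℕ => ((k:ℝ) - (n:ℝ))^s) (c3 c.1 c.2.1 c.2.2.2.1) *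
        (fun n : ℕ => ((k:ℝ) - (n:ℝ))^t) (c3 c.1 c.2.2.1 c.2.2.2.2) else 0)
    = ∑ x0 : Fin k, ∑ x1 : Fin k, ∑ x2 : Fin k, ∑ x3 : Fin k, ∑ x4 : Fin k,
      (if x1 ≠ x2 ∧ x3 ≠ x4 ∧ x1 ≠ x4
        then (fun n : ℕ => ((k:ℝ) - (n:ℝ))^s) (c3 x0 x1 x3) *
          (fun n : ℕ => ((k:ℝ) - (n:ℝ))^t) (c3 x0 x2 x4) else 0)
    from by simp only [Fintype.sum_prod_type]]
  rw [sum_quint (fun n : ℕ => ((k:ℝ) - (n:ℝ))^s) (fun n : ℕ => ((k:ℝ) - (n:ℝ))^t)]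
  norm_num

open Polynomial in
noncomputable def Qpoly (s t : ℕ) : Polynomial ℝ :=
  X * (X - 1) * (
    ((X-1)^s * (X-2)^t + (X-2)^s * (X-1)^t)
    + (X-2) * ((X-1)^s * (X-3)^t + (X-3)^s * (X-1)^t)
    + 6*(X-2) * ((X-2)^s * (X-2)^t)
    + (X-2)*(3*X-8) * ((X-2)^s * (X-3)^t + (X-3)^s * (X-2)^t)
    + (X-2)*(X-3)^2 * ((X-3)^s * (X-3)^t))

lemma Qpoly_eval (s t : ℕ) (x : ℝ) :
    (Qpoly s t).eval x = x * (x-1) * (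
      ((x-1)^s * (x-2)^t + (x-2)^s * (x-1)^t)
      + (x-2) * ((x-1)^s * (x-3)^t + (x-3)^s * (x-1)^t)
      + 6*(x-2) * ((x-2)^s * (x-2)^t)
      + (x-2)*(3*x-8) * ((x-2)^s * (x-3)^t + (x-3)^s * (x-2)^t)
      + (x-2)*(x-3)^2 * ((x-3)^s * (x-3)^t)) := by
  simp [Qpoly]

lemma P_eq_Qpoly (s t : ℕ) (P : Polynomial ℝ) (hP : IsChromaticPolynomial (graphY s t) P) :
    P = Qpoly s t := by
  apply Polynomial.eq_of_infinite_eval_eq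
  apply Set.infinite_of_injective_forall_mem (f := fun n : ℕ => (n : ℝ)) Nat.cast_injective
  intro n
  simp only [Set.mem_setOf_eq]
  rw [hP n, Qpoly_eval, numColorings_real]

lemma pow_bound3 {a b q : ℝ} (ha : 0 ≤ a) (hab : a ≤ b) (hq : a^3 ≤ q * b^3) {m : ℕ}
    (hm : 3 ≤ m) : a ^ m ≤ q * b ^ m := by
  obtain ⟨d, rfl⟩ : ∃ d, m = 3 + d := ⟨m - 3, by omega⟩
  rw [pow_add, pow_add, ← mul_assoc]
  have hb : 0 ≤ b := le_trans ha hab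
  have had : a ^ d ≤ b ^ d := pow_le_pow_left₀ ha hab d
  calc a^3 * a^d ≤ (q * b^3) * a^d :=
        mul_le_mul_of_nonneg_right hq (pow_nonneg ha d)
    _ ≤ (q * b^3) * b^d :=
        mul_le_mul_of_nonneg_left had (le_trans (pow_nonneg ha 3) hq)

lemma eval_neg (s t : ℕ) (hs : 3 ≤ s) (ht : 3 ≤ t) (hsodd : Odd s) (htodd : Odd t) :
    (Qpoly s t).eval (11/10 : ℝ) < 0 := by
  rw [Qpoly_eval]
  have e1 : (11/10 : ℝ) - 1 = 1/10 := by norm_num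
  have e2 : (11/10 : ℝ) - 2 = -(9/10) := by norm_num
  have e3 : (11/10 : ℝ) - 3 = -(19/10) := by norm_num
  rw [e1, e2, e3]
  simp only [hsodd.neg_pow, htodd.neg_pow, neg_sq]
  apply mul_neg_of_pos_of_neg (by norm_num)
  have hAs : (1/10 : ℝ)^s ≤ (1/6859) * (19/10)^s :=
    pow_bound3 (by norm_num) (by norm_num) (by norm_num) hs
  have hAt : (1/10 : ℝ)^t ≤ (1/6859) * (19/10)^t :=
    pow_bound3 (by norm_num) (by norm_num) (by norm_num) ht
  have hBs : (9/10 : ℝ)^s ≤ (729/6859) * (19/10)^s :=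
    pow_bound3 (by norm_num) (by norm_num) (by norm_num) hs
  have hBt : (9/10 : ℝ)^t ≤ (729/6859) * (19/10)^t :=
    pow_bound3 (by norm_num) (by norm_num) (by norm_num) ht
  have hRs : (0:ℝ) < (19/10)^s := by positivity
  have hRt : (0:ℝ) < (19/10)^t := by positivity
  have h1s : (0:ℝ) ≤ (1/10)^s := by positivity
  have h1t : (0:ℝ) ≤ (1/10)^t := by positivity
  have h9s : (0:ℝ) ≤ (9/10)^s := by positivity
  have h9t : (0:ℝ) ≤ (9/10)^t := by positivity
  nlinarith [mul_le_mul_of_nonneg_right hAs (le_of_lt hRt),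
    mul_le_mul_of_nonneg_right hAt (le_of_lt hRs),
    mul_le_mul_of_nonneg_right hBs (le_of_lt hRt),
    mul_le_mul_of_nonneg_right hBt (le_of_lt hRs),
    mul_pos hRs hRt, mul_nonneg h1s h9t, mul_nonneg h9s h1t, mul_nonneg h9s h9t]

set_option maxHeartbeats 1000000 in
lemma eval_pos' (s t : ℕ) (hs : 3 ≤ s) (ht : 3 ≤ t) (hsodd : Odd s) (htodd : Odd t)
    (ε : ℝ) (hε0 : 0 < ε) (hε32 : ε ≤ 1/32)
    (hber : (3/4:ℝ) ≤ (1-ε)^(s+t+2)) (hrle : (1+ε)^(s+t+2) ≤ 4/3) :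
    0 < (Qpoly s t).eval (2 - ε) := by
  rw [Qpoly_eval]
  have e1 : (2 - ε) - 1 = 1 - ε := by ring
  have e2 : (2 - ε) - 2 = -ε := by ring
  have e3 : (2 - ε) - 3 = -(1+ε) := by ring
  rw [e1, e2, e3]
  simp only [hsodd.neg_pow, htodd.neg_pow, neg_sq]
  have hp0 : (0:ℝ) ≤ 1 - ε := by linarith
  have hp1 : (1:ℝ) - ε ≤ 1 := by linarith
  have hpdec : (1-ε)^(s+t+2) = (1-ε)^s * (1-ε)^t * ((1-ε)*(1-ε)) := by
    rw [pow_add, pow_add]; ring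
  have hrdec : (1+ε)^(s+t+2) = (1+ε)^s * (1+ε)^t * ((1+ε)*(1+ε)) := by
    rw [pow_add, pow_add]; ring
  have h1 : (0:ℝ) ≤ (1-ε)^s := by positivity
  have h2 : (0:ℝ) ≤ (1-ε)^t := by positivity
  have h3 : (0:ℝ) < (1+ε)^s := by positivity
  have h4 : (0:ℝ) < (1+ε)^t := by positivity
  have h5 : (0:ℝ) < ε^s := by positivity
  have h6 : (0:ℝ) < ε^t := by positivity
  have hpspt : (3/4 : ℝ) ≤ (1-ε)^s * (1-ε)^t := by
    have h1' : (1-ε)^s * (1-ε)^t * ((1-ε)*(1-ε)) ≤ (1-ε)^s * (1-ε)^t * 1 := by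
      apply mul_le_mul_of_nonneg_left (by nlinarith) (by positivity)
    rw [← hpdec] at h1'
    nlinarith
  have hps1 : (1-ε)^s ≤ 1 := pow_le_one₀ hp0 hp1
  have hpt1 : (1-ε)^t ≤ 1 := pow_le_one₀ hp0 hp1
  have hεs : ε^s ≤ ε^3 := pow_le_pow_of_le_one (le_of_lt hε0) (by linarith) hs
  have hεt : ε^t ≤ ε^3 := pow_le_pow_of_le_one (le_of_lt hε0) (by linarith) ht
  have hpt_rt : (1-ε)^t ≤ (1+ε)^t := pow_le_pow_left₀ hp0 (by linarith) t
  have hps_rs : (1-ε)^s ≤ (1+ε)^s := pow_le_pow_left₀ hp0 (by linarith) s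
  have hrst : (1+ε)^s * (1+ε)^t * ((1+ε)*(1+ε)) ≤ 4/3 := by rw [← hrdec]; exact hrle
  have hε3 : ε^3 ≤ ε * (1/32)^2 := by
    calc ε^3 = ε * ε^2 := by ring
      _ ≤ ε * (1/32)^2 := by
          apply mul_le_mul_of_nonneg_left _ (le_of_lt hε0)
          apply pow_le_pow_left₀ (le_of_lt hε0) hε32
  have hA : (1-ε)^s * ε^t ≤ ε^3 := by
    calc (1-ε)^s * ε^t ≤ 1 * ε^3 := mul_le_mul hps1 hεt (le_of_lt h6) (by norm_num)
      _ = ε^3 := by ring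
  have hB : ε^s * (1-ε)^t ≤ ε^3 := by
    calc ε^s * (1-ε)^t ≤ ε^3 * 1 := mul_le_mul hεs hpt1 h2 (by positivity)
      _ = ε^3 := by ring
  have hC : (3/4:ℝ) ≤ (1-ε)^s * (1+ε)^t :=
    le_trans hpspt (mul_le_mul_of_nonneg_left hpt_rt h1)
  have hD : (3/4:ℝ) ≤ (1+ε)^s * (1-ε)^t :=
    le_trans hpspt (mul_le_mul_of_nonneg_right hps_rs h2)
  have hEE : ε^s * ε^t ≤ ε^3 := by
    have hm : ε^s * ε^t ≤ ε^3 * ε^3 := mul_le_mul hεs hεt (le_of_lt h6) (by positivity)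
    have hε31 : ε^3 ≤ 1 := by
      apply pow_le_one₀ (le_of_lt hε0); linarith
    nlinarith [pow_nonneg (le_of_lt hε0) 3]
  have hF1 : (0:ℝ) ≤ ε^s * (1+ε)^t := by positivity
  have hF2 : (0:ℝ) ≤ (1+ε)^s * ε^t := by positivity
  apply mul_pos (by nlinarith)
  nlinarith [mul_le_mul_of_nonneg_left hrst (le_of_lt hε0),
    mul_le_mul_of_nonneg_left hC (le_of_lt hε0),
    mul_le_mul_of_nonneg_left hD (le_of_lt hε0),
    mul_le_mul_of_nonneg_left hEE (le_of_lt hε0),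
    mul_nonneg (mul_nonneg (le_of_lt hε0) (by linarith : (0:ℝ) ≤ 2+3*ε)) hF1,
    mul_nonneg (mul_nonneg (le_of_lt hε0) (by linarith : (0:ℝ) ≤ 2+3*ε)) hF2,
    mul_le_mul_of_nonneg_left hA (le_of_lt hε0),
    mul_le_mul_of_nonneg_left hB (le_of_lt hε0),
    hε3, hε0, hε32, hA, hB]

lemma eval_pos (s t : ℕ) (hs : 3 ≤ s) (ht : 3 ≤ t) (hsodd : Odd s) (htodd : Odd t) :
    0 < (Qpoly s t).eval (2 - 1/(4*((s:ℝ)+(t:ℝ)+2))) := by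
  have hNs : (3:ℝ) ≤ (s:ℝ) := by exact_mod_cast hs
  have hNt : (3:ℝ) ≤ (t:ℝ) := by exact_mod_cast ht
  have hN8 : (8:ℝ) ≤ (s:ℝ)+(t:ℝ)+2 := by linarith
  have hNpos : (0:ℝ) < (s:ℝ)+(t:ℝ)+2 := by linarith
  have hε0 : 0 < 1/(4*((s:ℝ)+(t:ℝ)+2)) := by positivity
  have hε32 : 1/(4*((s:ℝ)+(t:ℝ)+2)) ≤ 1/32 := by
    rw [div_le_div_iff₀ (by positivity) (by norm_num)]
    linarith
  have hNε : ((s:ℝ)+(t:ℝ)+2) * (1/(4*((s:ℝ)+(t:ℝ)+2))) = 1/4 := by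
    field_simp
  have hcastN : ((s + t + 2 : ℕ) : ℝ) = (s:ℝ)+(t:ℝ)+2 := by push_cast; ring
  have hber : (3/4 : ℝ) ≤ (1-1/(4*((s:ℝ)+(t:ℝ)+2)))^(s+t+2) := by
    have h := one_add_mul_le_pow (a := -(1/(4*((s:ℝ)+(t:ℝ)+2)))) (by linarith) (s+t+2)
    rw [hcastN] at h
    calc (3/4 : ℝ) = 1 + ((s:ℝ)+(t:ℝ)+2) * (-(1/(4*((s:ℝ)+(t:ℝ)+2)))) := by
          rw [mul_neg, hNε]; norm_num
      _ ≤ (1 + -(1/(4*((s:ℝ)+(t:ℝ)+2))))^(s+t+2) := h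
      _ = (1-1/(4*((s:ℝ)+(t:ℝ)+2)))^(s+t+2) := by ring_nf
  have hrle : (1+1/(4*((s:ℝ)+(t:ℝ)+2)))^(s+t+2) ≤ 4/3 := by
    have hprod : ((1-1/(4*((s:ℝ)+(t:ℝ)+2)))*(1+1/(4*((s:ℝ)+(t:ℝ)+2))))^(s+t+2) ≤ 1 := by
      apply pow_le_one₀ (by nlinarith) (by nlinarith)
    rw [mul_pow] at hprod
    have hrpos : (0:ℝ) < (1+1/(4*((s:ℝ)+(t:ℝ)+2)))^(s+t+2) := by positivity
    nlinarith [hber]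
  exact eval_pos' s t hs ht hsodd htodd _ hε0 hε32 hber hrle

end ChromAux

/-- For all odd `s, t ≥ 3`, the chromatic polynomial of `Y(s,t)` has a real root strictly
between `1` and `2`. -/
theorem graphY_has_chromatic_root_between_one_and_two (s t : ℕ) (hs : 3 ≤ s) (ht : 3 ≤ t)
    (hsodd : Odd s) (htodd : Odd t)
    (P : Polynomial ℝ) (hP : IsChromaticPolynomial (graphY s t) P) :
    ∃ x : ℝ, 1 < x ∧ x < 2 ∧ P.eval x = 0 := by
  rw [ChromAux.P_eq_Qpoly s t P hP]
  have hNs : (3:ℝ) ≤ (s:ℝ) := by exact_mod_cast hs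
  have hNt : (3:ℝ) ≤ (t:ℝ) := by exact_mod_cast ht
  have hε0 : 0 < 1/(4*((s:ℝ)+(t:ℝ)+2)) := by positivity
  have hε32 : 1/(4*((s:ℝ)+(t:ℝ)+2)) ≤ 1/32 := by
    rw [div_le_div_iff₀ (by positivity) (by norm_num)]
    linarith
  have hx12 : (11/10 : ℝ) ≤ 2 - 1/(4*((s:ℝ)+(t:ℝ)+2)) := by linarith
  have hcont : ContinuousOn (fun x : ℝ => (ChromAux.Qpoly s t).eval x)
      (Set.Icc (11/10 : ℝ) (2 - 1/(4*((s:ℝ)+(t:ℝ)+2)))) :=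
    (ChromAux.Qpoly s t).continuousOn
  have hsub := intermediate_value_Ioo hx12 hcont
  have h0 : (0:ℝ) ∈ Set.Ioo ((fun x : ℝ => (ChromAux.Qpoly s t).eval x) (11/10 : ℝ))
      ((fun x : ℝ => (ChromAux.Qpoly s t).eval x) (2 - 1/(4*((s:ℝ)+(t:ℝ)+2)))) :=
    ⟨ChromAux.eval_neg s t hs ht hsodd htodd, ChromAux.eval_pos s t hs ht hsodd htodd⟩
  obtain ⟨x, hx, hx0⟩ := hsub h0
  exact ⟨x, by
    have := hx.1
    norm_num at this ⊢
    linarith, by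
    have := hx.2
    linarith, hx0⟩
end

section
/- For all integers s, t ≥ 3, the set W = {v0, v1, v3} is an independent set of 3 vertices in X(s,t) whose deletion leaves a graph with exactly s + 1 connected components; in particular, since s + 1 > 3, the graph X(s,t) is not 1-tough. -/
/-- A graph `G` is 1-tough if for every nonempty set `W` of vertices, the number of
connected components of `G − W` is at most `|W|`. -/
def IsOneTough {V : Type} (G : SimpleGraph V) : Prop :=
  ∀ W : Set V, W.Nonempty → Nat.card ((G.induce Wᶜ).ConnectedComponent) ≤ W.ncard

section aux

variable {s t : ℕ}

/-- classify vertices outside W -/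
def classify {s t : ℕ} : (Fin 5 ⊕ Fin s ⊕ Fin t) → Fin s ⊕ Unit
  | Sum.inr (Sum.inl i) => Sum.inl i
  | _ => Sum.inr ()

lemma adj_S (i : Fin s) (y : Fin 5 ⊕ Fin s ⊕ Fin t)
    (h : (graphX s t).Adj (Sum.inr (Sum.inl i)) y) :
    y = Sum.inl 0 ∨ y = Sum.inl 1 ∨ y = Sum.inl 3 := by
  rw [graphX, SimpleGraph.fromRel_adj] at h
  obtain ⟨-, h | h⟩ := h <;>
    simp only [XAdj] at h <;>
    rcases h with ⟨h1, h2⟩ | ⟨h1, h2⟩ | ⟨⟨i', h1⟩, h2⟩ | ⟨⟨j, h1⟩, h2⟩ <;>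
    simp_all

lemma adj_T_v2 (j : Fin t) : (graphX s t).Adj (Sum.inr (Sum.inr j)) (Sum.inl 2) := by
  rw [graphX, SimpleGraph.fromRel_adj]
  exact ⟨by simp, Or.inl (Or.inr <| Or.inr <| Or.inr ⟨⟨j, rfl⟩, Or.inr (Or.inl rfl)⟩)⟩

lemma adj_T_v4 (j : Fin t) : (graphX s t).Adj (Sum.inr (Sum.inr j)) (Sum.inl 4) := by
  rw [graphX, SimpleGraph.fromRel_adj]
  exact ⟨by simp, Or.inl (Or.inr <| Or.inr <| Or.inr ⟨⟨j, rfl⟩, Or.inr (Or.inr rfl)⟩)⟩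

lemma classify_eq_inl {z : Fin 5 ⊕ Fin s ⊕ Fin t} {i : Fin s}
    (h : classify (t := t) z = Sum.inl i) : z = Sum.inr (Sum.inl i) := by
  match z with
  | Sum.inl k => simp [classify] at h
  | Sum.inr (Sum.inl i') => simp_all [classify]
  | Sum.inr (Sum.inr j) => simp [classify] at h

end aux

/-- For all `s, t ≥ 3`, the set `W = {v0, v1, v3}` is an independent set of 3 vertices in
`X(s,t)` whose deletion leaves a graph with exactly `s + 1` connected components; in
particular, since `s + 1 > 3`, the graph `X(s,t)` is not 1-tough. -/
theorem graphX_not_one_tough (s t : ℕ) (hs : 3 ≤ s) (ht : 3 ≤ t)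
    (W : Set (Fin 5 ⊕ Fin s ⊕ Fin t)) (hW : W = {Sum.inl 0, Sum.inl 1, Sum.inl 3}) :
    (∀ x ∈ W, ∀ y ∈ W, ¬ (graphX s t).Adj x y) ∧
    W.ncard = 3 ∧
    Nat.card ((graphX s t).induce Wᶜ).ConnectedComponent = s + 1 ∧
    ¬ IsOneTough (graphX s t) := by
  subst hW
  set W : Set (Fin 5 ⊕ Fin s ⊕ Fin t) := {Sum.inl 0, Sum.inl 1, Sum.inl 3} with hW
  have hindep : ∀ x ∈ W, ∀ y ∈ W, ¬ (graphX s t).Adj x y := by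
    intro x hx y hy hadj
    rw [graphX, SimpleGraph.fromRel_adj] at hadj
    obtain ⟨hne, h | h⟩ := hadj <;>
      simp only [XAdj] at h <;>
      rcases h with ⟨h1, h2⟩ | ⟨h1, h2⟩ | ⟨⟨i', h1⟩, h2⟩ | ⟨⟨j, h1⟩, h2⟩ <;>
      simp_all [hW] <;> aesop
  have hcard3 : W.ncard = 3 := by
    rw [hW]
    rw [Set.ncard_insert_of_notMem (by simp), Set.ncard_insert_of_notMem (by simp),
      Set.ncard_singleton]
  -- the component count
  have hcompcard : Nat.card ((graphX s t).induce Wᶜ).ConnectedComponent = s + 1 := by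
    set G' := (graphX s t).induce Wᶜ with hG'
    have hmemS : ∀ i : Fin s, (Sum.inr (Sum.inl i) : Fin 5 ⊕ Fin s ⊕ Fin t) ∈ Wᶜ := by
      intro i; simp [hW]
    have hmem2 : (Sum.inl 2 : Fin 5 ⊕ Fin s ⊕ Fin t) ∈ Wᶜ := by simp [hW]
    have hmemT : ∀ j : Fin t, (Sum.inr (Sum.inr j) : Fin 5 ⊕ Fin s ⊕ Fin t) ∈ Wᶜ := by
      intro j; simp [hW]
    -- edge invariance of classify
    have hedge : ∀ x y : ↥Wᶜ, G'.Adj x y → classify x.val = classify y.val := by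
      have key : ∀ x y : ↥Wᶜ, G'.Adj x y → classify x.val = Sum.inr () := by
        intro x y hxy
        have hadj : (graphX s t).Adj x.val y.val := hxy
        obtain ⟨xv, hx⟩ := x
        match xv with
        | Sum.inl k => rfl
        | Sum.inr (Sum.inr j) => rfl
        | Sum.inr (Sum.inl i) =>
          exfalso
          have := adj_S i y.val hadj
          have hy := y.2
          rcases this with h | h | h <;> rw [h] at hy <;> simp [hW] at hy
      intro x y h
      rw [key x y h, key y x h.symm]
    have f := fun v : ↥Wᶜ => classify (s := s) (t := t) v.val
    -- classify descends to components
    have hwalk0 : ∀ (v w : ↥Wᶜ) (p : G'.Walk v w), classify v.val = classify w.val := by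
      intro v w p
      induction p with
      | nil => rfl
      | cons h p ih => exact (hedge _ _ h).trans ih
    have hwalk : ∀ (v w : ↥Wᶜ) (p : G'.Walk v w), p.IsPath →
        classify v.val = classify w.val := fun v w p _ => hwalk0 v w p
    set F : G'.ConnectedComponent → Fin s ⊕ Unit :=
      SimpleGraph.ConnectedComponent.lift (fun v => classify v.val) hwalk with hF
    -- reachability to v2
    have hj0 : (0 : ℕ) < t := by omega
    let j0 : Fin t := ⟨0, hj0⟩
    have hadjT2 : ∀ j : Fin t, G'.Adj ⟨Sum.inr (Sum.inr j), hmemT j⟩ ⟨Sum.inl 2, hmem2⟩ := by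
      intro j
      show (graphX s t).Adj _ _
      exact adj_T_v2 j
    have hreach : ∀ x : ↥Wᶜ, classify x.val = Sum.inr () →
        G'.Reachable x ⟨Sum.inl 2, hmem2⟩ := by
      rintro ⟨xv, hx⟩ hcl
      match xv, hx, hcl with
      | Sum.inr (Sum.inr j), hx, _ => exact (hadjT2 j).reachable
      | Sum.inl k, hx, hcl2 =>
        have hk : k = 2 ∨ k = 4 := by
          simp only [hW, Set.mem_compl_iff, Set.mem_insert_iff, Set.mem_singleton_iff,
            not_or] at hx
          have h0 : k ≠ 0 := fun h => hx.1 (by rw [h])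
          have h1 : k ≠ 1 := fun h => hx.2.1 (by rw [h])
          have h3 : k ≠ 3 := fun h => hx.2.2 (by rw [h])
          clear hcl hcl2
          fin_cases k
          · exact absurd rfl h0
          · exact absurd rfl h1
          · exact Or.inl rfl
          · exact absurd rfl h3
          · exact Or.inr rfl
        rcases hk with rfl | rfl
        · exact SimpleGraph.Reachable.refl _
        · have h1 : G'.Adj ⟨Sum.inl 4, hx⟩ ⟨Sum.inr (Sum.inr j0), hmemT j0⟩ :=
            (show (graphX s t).Adj _ _ from (adj_T_v4 j0).symm)
          exact h1.reachable.trans (hadjT2 j0).reachable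
      | Sum.inr (Sum.inl i), hx, hcl => simp [classify] at hcl
    have key : ∀ x y : ↥Wᶜ, classify x.val = classify y.val → G'.Reachable x y := by
      intro x y h
      rcases h' : classify (t := t) x.val with i | u
      · rw [h'] at h
        have hx := classify_eq_inl h'
        have hy := classify_eq_inl h.symm
        have : x = y := Subtype.ext (hx.trans hy.symm)
        rw [this]
      · rw [h'] at h
        exact (hreach x h').trans (hreach y h.symm).symm
    have hinj : ∀ c d : G'.ConnectedComponent, F c = F d → c = d :=
      SimpleGraph.ConnectedComponent.ind₂ fun x y h =>
        SimpleGraph.ConnectedComponent.sound (key x y h)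
    have hsurj : Function.Surjective F := by
      rintro (i | ⟨⟩)
      · exact ⟨G'.connectedComponentMk ⟨Sum.inr (Sum.inl i), hmemS i⟩, rfl⟩
      · exact ⟨G'.connectedComponentMk ⟨Sum.inl 2, hmem2⟩, rfl⟩
    have hbij : Function.Bijective F := ⟨fun a b => hinj a b, hsurj⟩
    rw [Nat.card_eq_of_bijective F hbij]
    simp [Nat.card_sum, Nat.card_eq_fintype_card]
  refine ⟨hindep, hcard3, hcompcard, ?_⟩
  intro h1t
  have := h1t W ⟨Sum.inl 0, by simp [hW]⟩
  rw [hcompcard, hcard3] at this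
  omega
end

section
/- For all integers s, t ≥ 3, the graph X(s,t) is not hamiltonian; that is, it contains no cycle passing through every vertex exactly once. (This follows because deleting the 3-element set {v0, v1, v3} leaves more than 3 components, while every hamiltonian graph is 1-tough.) -/
open SimpleGraph

-- aux: every vertex is the fst of some dart of a hamiltonian cycle
lemma exists_dart_fst {V : Type} [DecidableEq V] {G : SimpleGraph V} {a : V}
    {p : G.Walk a a} (hp : p.IsHamiltonianCycle) (v : V) :
    ∃ d ∈ p.darts, d.fst = v := by
  have hmem : v ∈ p.support := hp.mem_support v
  rw [← p.map_fst_darts_append, List.mem_append] at hmem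
  rcases hmem with h | h
  · rcases List.mem_map.1 h with ⟨d, hd, hd'⟩
    exact ⟨d, hd, hd'⟩
  · have hv : v = a := by simpa using h
    subst hv
    cases p with
    | nil => exact absurd rfl hp.ne_nil
    | cons h q => exact ⟨⟨(_, _), h⟩, by simp [SimpleGraph.Walk.darts_cons], rfl⟩

lemma snd_nodup {V : Type} [DecidableEq V] {G : SimpleGraph V} {a : V}
    {p : G.Walk a a} (hp : p.IsHamiltonianCycle) :
    (p.darts.map (fun d => d.snd)).Nodup := by
  rw [SimpleGraph.Walk.map_snd_darts]
  rw [← SimpleGraph.Walk.support_tail_of_not_nil p hp.not_nil]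
  exact List.nodup_iff_count_le_one.2 fun x => le_of_eq (hp.isHamiltonian_tail x)


/-- For all `s, t ≥ 3`, the graph `X(s,t)` is not hamiltonian: it contains no cycle passing
through every vertex exactly once. -/
theorem graphX_not_hamiltonian (s t : ℕ) (hs : 3 ≤ s) (ht : 3 ≤ t) :
    ¬ ∃ (a : Fin 5 ⊕ Fin s ⊕ Fin t) (p : (graphX s t).Walk a a), p.IsHamiltonianCycle := by
  rintro ⟨a, p, hp⟩
  classical
  have key : ∀ x : Fin s ⊕ Fin t,
      ∃ w : Fin 5, ∃ d ∈ p.darts, d.fst = Sum.inr x ∧ d.snd = Sum.inl w := by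
    intro x
    obtain ⟨d, hd, hfst⟩ := exists_dart_fst hp (Sum.inr x)
    have hadj : (graphX s t).Adj d.fst d.snd := d.adj
    rw [hfst] at hadj
    obtain ⟨hne, h | h⟩ := hadj
    · rcases h with ⟨h1, -⟩ | ⟨h1, -⟩ | ⟨-, h3 | h3 | h3⟩ | ⟨-, h3 | h3 | h3⟩ <;>
        first
          | exact absurd h1 (by simp)
          | exact ⟨_, d, hd, hfst, h3⟩
    · rcases h with ⟨-, h2⟩ | ⟨-, h2⟩ | ⟨-, h2 | h2 | h2⟩ | ⟨-, h2 | h2 | h2⟩ <;>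
        exact absurd h2 (by simp)
  choose g d hd hdf hds using key
  have hg : Function.Injective g := by
    intro x y hxy
    have hdd : d x = d y :=
      List.inj_on_of_nodup_map (snd_nodup hp) (hd x) (hd y) (by rw [hds, hds, hxy])
    have := (hdf x).symm.trans (hdd ▸ hdf y)
    exact Sum.inr.inj this
  have := Fintype.card_le_of_injective g hg
  simp [Fintype.card_sum] at this
  omega
end

section
/- If G is a finite loopless graph (simple graph) with n vertices, then its chromatic polynomial P(G, x) is non-zero with sign (-1)^n for every real x ∈ (-∞, 0); that is, (-1)^n P(G, x) > 0 for all x < 0. -/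
/-- The contraction of the edge `u v` of `G`: delete `v` and attach its neighbors to `u`. -/
def contractEdge {V : Type} (G : SimpleGraph V) (u v : V) : SimpleGraph {w : V // w ≠ v} where
  Adj a b := a.1 ≠ b.1 ∧ (G.Adj a.1 b.1 ∨ (a.1 = u ∧ G.Adj v b.1) ∨ (b.1 = u ∧ G.Adj v a.1))
  symm := ⟨by
    rintro a b ⟨hne, h⟩
    refine ⟨hne.symm, ?_⟩
    rcases h with h | ⟨h1, h2⟩ | ⟨h1, h2⟩
    · exact Or.inl h.symm
    · exact Or.inr (Or.inr ⟨h1, h2⟩)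
    · exact Or.inr (Or.inl ⟨h1, h2⟩)⟩
  loopless := ⟨fun a h => h.1 rfl⟩

/-- The deletion–contraction counting identity. -/
lemma numColorings_deleteEdges {V : Type} [Fintype V] [DecidableEq V] (G : SimpleGraph V)
    {u v : V} (huv : G.Adj u v) (k : ℕ) :
    numColorings (G.deleteEdges {s(u, v)}) k
      = numColorings G k + numColorings (contractEdge G u v) k := by
  classical
  set Gd := G.deleteEdges {s(u, v)} with hGd
  have hne : u ≠ v := G.ne_of_adj huv
  -- the split of proper colorings of `Gd` according to `f u = f v` or not
  have e0 : {f : V → Fin k // ∀ a b, Gd.Adj a b → f a ≠ f b}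
      ≃ ({f : V → Fin k // (∀ a b, Gd.Adj a b → f a ≠ f b) ∧ ¬ f u = f v}
        ⊕ {f : V → Fin k // (∀ a b, Gd.Adj a b → f a ≠ f b) ∧ f u = f v}) := by
    refine (Equiv.sumCompl (fun f : {f : V → Fin k // ∀ a b, Gd.Adj a b → f a ≠ f b} =>
      ¬ f.1 u = f.1 v)).symm.trans (Equiv.sumCongr ?_ ?_)
    · exact Equiv.subtypeSubtypeEquivSubtypeInter
        (fun f : V → Fin k => ∀ a b, Gd.Adj a b → f a ≠ f b) (fun f => ¬ f u = f v)
    · exact (Equiv.subtypeEquivRight (fun f => not_not)).trans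
        (Equiv.subtypeSubtypeEquivSubtypeInter
          (fun f : V → Fin k => ∀ a b, Gd.Adj a b → f a ≠ f b) (fun f => f u = f v))
  -- colorings with `f u ≠ f v` are exactly proper colorings of `G`
  have e1 : {f : V → Fin k // (∀ a b, Gd.Adj a b → f a ≠ f b) ∧ ¬ f u = f v}
      ≃ {f : V → Fin k // ∀ a b, G.Adj a b → f a ≠ f b} := by
    refine Equiv.subtypeEquivRight (fun f => ?_)
    constructor
    · rintro ⟨hf, hfuv⟩ a b hab
      by_cases hmem : s(a, b) = s(u, v)
      · rw [Sym2.eq_iff] at hmem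
        rcases hmem with ⟨rfl, rfl⟩ | ⟨rfl, rfl⟩
        · exact hfuv
        · exact fun h => hfuv h.symm
      · exact hf a b (by rw [hGd, SimpleGraph.deleteEdges_adj]; exact ⟨hab, by simpa using hmem⟩)
    · intro hf
      refine ⟨fun a b hab => hf a b ?_, hf u v huv⟩
      rw [hGd, SimpleGraph.deleteEdges_adj] at hab
      exact hab.1
  -- colorings with `f u = f v` are exactly proper colorings of the contraction
  have e2 : {f : V → Fin k // (∀ a b, Gd.Adj a b → f a ≠ f b) ∧ f u = f v}
      ≃ {g : {w : V // w ≠ v} → Fin k // ∀ a b, (contractEdge G u v).Adj a b → g a ≠ g b} := by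
    refine
      { toFun := fun f => ⟨fun w => f.1 w.1, ?_⟩
        invFun := fun g => ⟨fun w => if h : w = v then g.1 ⟨u, hne⟩ else g.1 ⟨w, h⟩, ?_, ?_⟩
        left_inv := ?_
        right_inv := ?_ }
    · rintro a b ⟨hab, h⟩
      obtain ⟨hf, hfe⟩ := f.2
      show f.1 a.1 ≠ f.1 b.1
      rcases h with h | ⟨h1, h2⟩ | ⟨h1, h2⟩
      · refine hf a.1 b.1 ?_
        rw [hGd, SimpleGraph.deleteEdges_adj]
        refine ⟨h, ?_⟩
        simp only [Set.mem_singleton_iff, Sym2.eq_iff]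
        rintro (⟨-, hbv⟩ | ⟨hav, -⟩)
        · exact b.2 hbv
        · exact a.2 hav
      · have hvb : f.1 v ≠ f.1 b.1 := by
          refine hf v b.1 ?_
          rw [hGd, SimpleGraph.deleteEdges_adj]
          refine ⟨h2, ?_⟩
          simp only [Set.mem_singleton_iff, Sym2.eq_iff]
          rintro (⟨hvu, -⟩ | ⟨-, hbu⟩)
          · exact hne hvu.symm
          · exact hab (h1.trans hbu.symm)
        rw [h1, hfe]
        exact hvb
      · have hva : f.1 v ≠ f.1 a.1 := by
          refine hf v a.1 ?_
          rw [hGd, SimpleGraph.deleteEdges_adj]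
          refine ⟨h2, ?_⟩
          simp only [Set.mem_singleton_iff, Sym2.eq_iff]
          rintro (⟨hvu, -⟩ | ⟨-, hau⟩)
          · exact hne hvu.symm
          · exact hab (hau.trans h1.symm)
        rw [h1, hfe]
        exact fun h => hva h.symm
    · -- the extension is a proper coloring of `Gd`
      intro a b hab
      rw [hGd, SimpleGraph.deleteEdges_adj] at hab
      obtain ⟨hab, hmem⟩ := hab
      simp only [Set.mem_singleton_iff, Sym2.eq_iff, not_or, not_and] at hmem
      have hab' : a ≠ b := G.ne_of_adj hab
      by_cases ha : a = v
      · have hb : b ≠ v := fun h => hab' (ha.trans h.symm)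
        have hbu : b ≠ u := fun h => hmem.2 ha h
        have := g.2 ⟨u, hne⟩ ⟨b, hb⟩ ⟨fun h => hbu h.symm, Or.inr (Or.inl ⟨rfl, ha ▸ hab⟩)⟩
        simpa [ha, hb] using this
      · by_cases hb : b = v
        · have hau : a ≠ u := fun h => hmem.1 h hb
          have := g.2 ⟨a, ha⟩ ⟨u, hne⟩ ⟨hau, Or.inr (Or.inr ⟨rfl, hb ▸ hab.symm⟩)⟩
          simpa [ha, hb] using this
        · have := g.2 ⟨a, ha⟩ ⟨b, hb⟩ ⟨hab', Or.inl hab⟩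
          simpa [ha, hb] using this
    · -- the extension takes the same value at `u` and `v`
      simp [hne]
    · rintro ⟨f, hf, hfe⟩
      ext w
      by_cases hw : w = v
      · subst hw
        simp [hfe]
      · simp [hw]
    · rintro ⟨g, hg⟩
      ext w
      have hwv : w.1 ≠ v := w.2
      simp [hwv]
  calc Nat.card {f : V → Fin k // ∀ a b, Gd.Adj a b → f a ≠ f b}
      = Nat.card ({f : V → Fin k // (∀ a b, Gd.Adj a b → f a ≠ f b) ∧ ¬ f u = f v}
        ⊕ {f : V → Fin k // (∀ a b, Gd.Adj a b → f a ≠ f b) ∧ f u = f v}) := Nat.card_congr e0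
    _ = _ := by
        rw [Nat.card_sum, Nat.card_congr e1, Nat.card_congr e2]
        rfl

/-- Existence of the chromatic polynomial together with the sign property,
by deletion–contraction induction. -/
lemma chromatic_exists : ∀ n : ℕ, ∀ (V : Type) [Fintype V], Fintype.card V = n →
    ∀ G : SimpleGraph V, ∃ P : Polynomial ℝ, IsChromaticPolynomial G P ∧
      ∀ x : ℝ, x < 0 → 0 < (-1 : ℝ) ^ n * P.eval x := by
  intro n
  induction n using Nat.strong_induction_on with
  | _ n ih =>
    intro V _ hn G₀
    classical
    suffices h : ∀ m : ℕ, ∀ G : SimpleGraph V, (G.edgeSet).ncard = m →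
        ∃ P : Polynomial ℝ, IsChromaticPolynomial G P ∧
          ∀ x : ℝ, x < 0 → 0 < (-1 : ℝ) ^ n * P.eval x from h _ G₀ rfl
    intro m
    induction m using Nat.strong_induction_on with
    | _ m ihm =>
      intro G hm
      rcases Nat.eq_zero_or_pos m with rfl | hmpos
      · -- no edges: P = X ^ n
        have hE : G.edgeSet = ∅ := (Set.ncard_eq_zero (Set.toFinite _)).mp hm
        have hadj : ∀ a b : V, ¬ G.Adj a b := by
          intro a b hab
          have : s(a, b) ∈ G.edgeSet := hab
          simp [hE] at this
        refine ⟨Polynomial.X ^ n, ?_, ?_⟩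
        · intro k
          have hcount : numColorings G k = k ^ n := by
            unfold numColorings
            rw [Nat.card_congr (Equiv.subtypeUnivEquiv (fun f => fun a b hab =>
              absurd hab (hadj a b)))]
            rw [Nat.card_fun, Nat.card_eq_fintype_card, Nat.card_eq_fintype_card,
              Fintype.card_fin, hn]
          simp [hcount]
        · intro x hx
          have hpow : (-1 : ℝ) ^ n * x ^ n = (-x) ^ n := by rw [neg_pow]; ring
          rw [Polynomial.eval_pow, Polynomial.eval_X, hpow]
          exact pow_pos (by linarith) n
      · -- there is an edge
        obtain ⟨e, he⟩ : G.edgeSet.Nonempty := by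
          rw [← Set.ncard_pos (Set.toFinite _), hm]
          exact hmpos
        induction e using Sym2.ind with
        | _ u v =>
        have huv : G.Adj u v := he
        have hne : u ≠ v := G.ne_of_adj huv
        have hnpos : 0 < n := by
          rw [← hn]
          exact Fintype.card_pos_iff.mpr ⟨u⟩
        obtain ⟨n', rfl⟩ : ∃ n', n = n' + 1 := ⟨n - 1, by omega⟩
        -- deletion
        have hGdcard : ((G.deleteEdges {s(u, v)}).edgeSet).ncard = m - 1 := by
          rw [SimpleGraph.edgeSet_deleteEdges,
            Set.ncard_diff_singleton_of_mem he, hm]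
        obtain ⟨Pd, hPd, hPdsign⟩ := ihm (m - 1) (by omega) (G.deleteEdges {s(u, v)}) hGdcard
        -- contraction
        have hcard' : Fintype.card {w : V // w ≠ v} = n' := by
          have h1 : Fintype.card {w : V // ¬ w = v} = Fintype.card V
              - Fintype.card {w : V // w = v} := Fintype.card_subtype_compl _
          rw [Fintype.card_subtype_eq] at h1
          have : Fintype.card {w : V // w ≠ v} = Fintype.card {w : V // ¬ w = v} := rfl
          omega
        obtain ⟨Pc, hPc, hPcsign⟩ := ih n' (by omega) {w : V // w ≠ v} hcard'
          (contractEdge G u v)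
        refine ⟨Pd - Pc, ?_, ?_⟩
        · intro k
          have hcount := numColorings_deleteEdges G huv k
          rw [Polynomial.eval_sub, hPd k, hPc k, hcount]
          push_cast
          ring
        · intro x hx
          have h1 := hPdsign x hx
          have h2 := hPcsign x hx
          rw [Polynomial.eval_sub]
          rw [pow_succ] at h1 ⊢
          nlinarith [h1, h2]

/-- If `G` is a finite loopless (simple) graph with `n` vertices, then its chromatic
polynomial is non-zero with sign `(-1)^n` for every real `x < 0`. -/
theorem chromaticPolynomial_sign_neg {V : Type} [Fintype V] (G : SimpleGraph V)
    (P : Polynomial ℝ) (hP : IsChromaticPolynomial G P) :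
    ∀ x : ℝ, x < 0 → 0 < (-1 : ℝ) ^ (Fintype.card V) * P.eval x := by
  obtain ⟨Q, hQ, hQsign⟩ := chromatic_exists (Fintype.card V) V rfl G
  have hPQ : P = Q := by
    apply Polynomial.eq_of_infinite_eval_eq
    apply Set.Infinite.mono (s := Set.range (Nat.cast : ℕ → ℝ))
    · rintro x ⟨k, rfl⟩
      simp only [Set.mem_setOf_eq]
      rw [hP k, hQ k]
    · exact Set.infinite_range_of_injective Nat.cast_injective
  rw [hPQ]
  exact fun x hx => hQsign x hx
end

section
/- If G is a finite loopless graph (simple graph) with c connected components, then x = 0 is a root of its chromatic polynomial P(G, x) of multiplicity exactly c. -/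
open Finset Polynomial

namespace ChromAux

variable {V : Type} [Fintype V] [DecidableEq V]
set_option linter.unusedSectionVars false

/-- number of connected components -/
noncomputable def ncg (G : SimpleGraph V) : ℕ := Nat.card G.ConnectedComponent

lemma ncg_le_of_le {G G' : SimpleGraph V} (h : G ≤ G') : ncg G' ≤ ncg G := by
  apply Nat.card_le_card_of_surjective
    (SimpleGraph.ConnectedComponent.map (SimpleGraph.Hom.ofLE h))
  intro c
  refine c.ind (fun v => ⟨G.connectedComponentMk v, rfl⟩)

lemma reachable_of_adj_inv {G : SimpleGraph V} {β : Type*} (f : V → β)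
    (hf : ∀ u v, G.Adj u v → f u = f v) {u v : V} (h : G.Reachable u v) : f u = f v := by
  obtain ⟨w⟩ := h
  induction w with
  | nil => rfl
  | cons h p ih => exact (hf _ _ h).trans ih

lemma sup_edge_adj {G : SimpleGraph V} {x y a b : V} (hxy : x ≠ y) :
    (G ⊔ SimpleGraph.fromEdgeSet {s(x, y)}).Adj a b ↔
      G.Adj a b ∨ (a = x ∧ b = y) ∨ (a = y ∧ b = x) := by
  simp only [SimpleGraph.sup_adj, SimpleGraph.fromEdgeSet_adj, Set.mem_singleton_iff,
    Sym2.eq_iff]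
  constructor
  · rintro (h | ⟨(⟨rfl, rfl⟩ | ⟨rfl, rfl⟩), h2⟩)
    · exact Or.inl h
    · exact Or.inr (Or.inl ⟨rfl, rfl⟩)
    · exact Or.inr (Or.inr ⟨rfl, rfl⟩)
  · rintro (h | ⟨rfl, rfl⟩ | ⟨rfl, rfl⟩)
    · exact Or.inl h
    · exact Or.inr ⟨Or.inl ⟨rfl, rfl⟩, hxy⟩
    · exact Or.inr ⟨Or.inr ⟨rfl, rfl⟩, hxy.symm⟩

lemma reachable_sup_edge {G : SimpleGraph V} {x y u v : V} (hxy : x ≠ y)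
    (h : (G ⊔ SimpleGraph.fromEdgeSet {s(x, y)}).Reachable u v) :
    G.Reachable u v ∨ (G.Reachable u x ∧ G.Reachable y v) ∨
      (G.Reachable u y ∧ G.Reachable x v) := by
  obtain ⟨w⟩ := h
  induction w with
  | nil => exact Or.inl (SimpleGraph.Reachable.refl _)
  | cons h p ih =>
    rename_i a b c
    rw [sup_edge_adj hxy] at h
    rcases h with h | ⟨rfl, rfl⟩ | ⟨rfl, rfl⟩
    · rcases ih with h' | ⟨h1, h2⟩ | ⟨h1, h2⟩
      · exact Or.inl (h.reachable.trans h')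
      · exact Or.inr (Or.inl ⟨h.reachable.trans h1, h2⟩)
      · exact Or.inr (Or.inr ⟨h.reachable.trans h1, h2⟩)
    · rcases ih with h' | ⟨h1, h2⟩ | ⟨h1, h2⟩
      · exact Or.inr (Or.inl ⟨SimpleGraph.Reachable.refl _, h'⟩)
      · exact Or.inr (Or.inl ⟨SimpleGraph.Reachable.refl _, h2⟩)
      · exact Or.inl h2
    · rcases ih with h' | ⟨h1, h2⟩ | ⟨h1, h2⟩
      · exact Or.inr (Or.inr ⟨SimpleGraph.Reachable.refl _, h'⟩)
      · exact Or.inl h2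
      · exact Or.inr (Or.inr ⟨SimpleGraph.Reachable.refl _, h2⟩)


noncomputable instance (G : SimpleGraph V) : Fintype G.ConnectedComponent :=
  Fintype.ofFinite _

lemma ncg_sup_edge_of_reachable {G : SimpleGraph V} {x y : V} (hxy : x ≠ y)
    (hr : G.Reachable x y) : ncg (G ⊔ SimpleGraph.fromEdgeSet {s(x, y)}) = ncg G := by
  refine (Nat.card_eq_of_bijective
    (SimpleGraph.ConnectedComponent.map (SimpleGraph.Hom.ofLE le_sup_left))
    ⟨?_, ?_⟩).symm
  · refine SimpleGraph.ConnectedComponent.ind₂ (fun u v h => ?_)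
    simp only [SimpleGraph.ConnectedComponent.map_mk] at h
    have h' := SimpleGraph.ConnectedComponent.exact h
    rcases reachable_sup_edge hxy h' with h2 | ⟨h2, h3⟩ | ⟨h2, h3⟩
    · exact SimpleGraph.ConnectedComponent.sound h2
    · exact SimpleGraph.ConnectedComponent.sound ((h2.trans hr).trans h3)
    · exact SimpleGraph.ConnectedComponent.sound ((h2.trans hr.symm).trans h3)
  · intro c
    exact c.ind (fun v => ⟨G.connectedComponentMk v, rfl⟩)

lemma ncg_sup_edge_of_not_reachable {G : SimpleGraph V} {x y : V} (hxy : x ≠ y)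
    (hr : ¬ G.Reachable x y) :
    ncg (G ⊔ SimpleGraph.fromEdgeSet {s(x, y)}) + 1 = ncg G := by
  classical
  set G' := G ⊔ SimpleGraph.fromEdgeSet {s(x, y)} with hG'
  have hadjxy : G'.Adj x y := by
    rw [sup_edge_adj hxy]; exact Or.inr (Or.inl ⟨rfl, rfl⟩)
  have key : Nat.card G'.ConnectedComponent
      = Nat.card {c : G.ConnectedComponent // c ≠ G.connectedComponentMk y} := by
    refine (Nat.card_eq_of_bijective
      (fun c => SimpleGraph.ConnectedComponent.map
        (SimpleGraph.Hom.ofLE le_sup_left) c.1) ⟨?_, ?_⟩).symm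
    · rintro ⟨c, hc⟩ ⟨d, hd⟩ h
      obtain ⟨u, rfl⟩ := c.exists_rep
      obtain ⟨v, rfl⟩ := d.exists_rep
      simp only [SimpleGraph.ConnectedComponent.map_mk] at h
      have h' := SimpleGraph.ConnectedComponent.exact h
      apply Subtype.ext
      rcases reachable_sup_edge hxy h' with h2 | ⟨h2, h3⟩ | ⟨h2, h3⟩
      · exact SimpleGraph.ConnectedComponent.sound h2
      · exact absurd (SimpleGraph.ConnectedComponent.sound h3.symm) hd
      · exact absurd (SimpleGraph.ConnectedComponent.sound h2) hc
    · intro c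
      obtain ⟨w, rfl⟩ := c.exists_rep
      by_cases hw : G.Reachable w y
      · refine ⟨⟨G.connectedComponentMk x, ?_⟩, ?_⟩
        · intro hcon
          exact hr (SimpleGraph.ConnectedComponent.exact hcon)
        · simp only [SimpleGraph.ConnectedComponent.map_mk]
          refine SimpleGraph.ConnectedComponent.sound ?_
          exact (hadjxy.reachable).trans ((hw.mono le_sup_left).symm)
      · refine ⟨⟨G.connectedComponentMk w, ?_⟩, rfl⟩
        intro hcon
        exact hw (SimpleGraph.ConnectedComponent.exact hcon)
  have hpos : 0 < Nat.card G.ConnectedComponent := by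
    have : Nonempty G.ConnectedComponent := ⟨G.connectedComponentMk y⟩
    simp [Nat.card_eq_fintype_card, Fintype.card_pos]
  have hsub : Nat.card {c : G.ConnectedComponent // c ≠ G.connectedComponentMk y}
      = Nat.card G.ConnectedComponent - 1 := by
    simp only [Nat.card_eq_fintype_card]
    rw [Fintype.card_subtype_compl (· = G.connectedComponentMk y),
      Fintype.card_subtype_eq]
  unfold ncg
  rw [key, hsub]
  omega


/-- component count for an edge finset -/
noncomputable def nc (S : Finset (Sym2 V)) : ℕ := ncg (SimpleGraph.fromEdgeSet (S : Set (Sym2 V)))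

lemma nc_le {S T : Finset (Sym2 V)} (h : S ⊆ T) : nc T ≤ nc S :=
  ncg_le_of_le (SimpleGraph.fromEdgeSet_mono (Finset.coe_subset.mpr h))

lemma reach_mono {S T : Finset (Sym2 V)} (h : S ⊆ T) {x y : V}
    (hr : (SimpleGraph.fromEdgeSet (S : Set (Sym2 V))).Reachable x y) :
    (SimpleGraph.fromEdgeSet (T : Set (Sym2 V))).Reachable x y :=
  hr.mono (SimpleGraph.fromEdgeSet_mono (by exact_mod_cast h))

lemma fromEdgeSet_insert' (e : Sym2 V) (S : Finset (Sym2 V)) :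
    SimpleGraph.fromEdgeSet ((insert e S : Finset (Sym2 V)) : Set (Sym2 V))
      = SimpleGraph.fromEdgeSet (S : Set (Sym2 V)) ⊔ SimpleGraph.fromEdgeSet {e} := by
  rw [Finset.coe_insert, Set.insert_eq, SimpleGraph.fromEdgeSet_union]
  exact sup_comm _ _

lemma nc_insert_of_reachable {x y : V} (hxy : x ≠ y) {U : Finset (Sym2 V)}
    (hr : (SimpleGraph.fromEdgeSet (U : Set (Sym2 V))).Reachable x y) :
    nc (insert s(x, y) U) = nc U := by
  rw [nc, fromEdgeSet_insert']
  exact ncg_sup_edge_of_reachable hxy hr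

lemma nc_insert_of_not_reachable {x y : V} (hxy : x ≠ y) {U : Finset (Sym2 V)}
    (hr : ¬ (SimpleGraph.fromEdgeSet (U : Set (Sym2 V))).Reachable x y) :
    nc (insert s(x, y) U) + 1 = nc U := by
  rw [nc, fromEdgeSet_insert']
  exact ncg_sup_edge_of_not_reachable hxy hr

lemma card_monochrome (H : SimpleGraph V) (k : ℕ) :
    Nat.card {f : V → Fin k // ∀ u v, H.Adj u v → f u = f v} = k ^ ncg H := by
  classical
  have e : {f : V → Fin k // ∀ u v, H.Adj u v → f u = f v}
      ≃ (H.ConnectedComponent → Fin k) :=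
  { toFun := fun f => Quot.lift f.1 (fun a b h => reachable_of_adj_inv f.1 f.2 h)
    invFun := fun g => ⟨fun v => g (H.connectedComponentMk v), fun u v h =>
      congrArg g (SimpleGraph.ConnectedComponent.sound h.reachable)⟩
    left_inv := fun f => Subtype.ext rfl
    right_inv := fun g => funext fun c => SimpleGraph.ConnectedComponent.ind (fun v => rfl) c }
  rw [Nat.card_congr e, Nat.card_fun]
  simp [ncg]


/-- `f` is monochromatic on the (potential) edge `e`. -/
def Mono {α : Type*} (f : V → α) (e : Sym2 V) : Prop :=
  ∀ x y, s(x, y) = e → f x = f y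

lemma mono_mk {α : Type*} {f : V → α} {x y : V} : Mono f s(x, y) ↔ f x = f y := by
  constructor
  · intro h; exact h x y rfl
  · intro h a b hab
    rcases Sym2.eq_iff.mp hab with ⟨rfl, rfl⟩ | ⟨rfl, rfl⟩
    · exact h
    · exact h.symm

lemma forall_mono_iff {α : Type*} {f : V → α} {t : Finset (Sym2 V)} :
    (∀ e ∈ t, Mono f e) ↔
      (∀ u v, (SimpleGraph.fromEdgeSet (t : Set (Sym2 V))).Adj u v → f u = f v) := by
  constructor
  · intro h u v hadj
    rw [SimpleGraph.fromEdgeSet_adj] at hadj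
    exact mono_mk.mp (h _ (by exact_mod_cast hadj.1 : s(u,v) ∈ t))
  · intro h e he
    obtain ⟨a, b, rfl⟩ : ∃ a b, e = s(a, b) := Sym2.ind (fun a b => ⟨a, b, rfl⟩) e
    rw [mono_mk]
    by_cases hab : a = b
    · subst hab; rfl
    · exact h a b ((SimpleGraph.fromEdgeSet_adj _).mpr ⟨by exact_mod_cast he, hab⟩)

lemma card_mono_subtype (t : Finset (Sym2 V)) (k : ℕ) :
    Nat.card {f : V → Fin k // ∀ e ∈ t, Mono f e} = k ^ nc t := by
  rw [show {f : V → Fin k // ∀ e ∈ t, Mono f e}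
      = {f : V → Fin k // ∀ u v,
          (SimpleGraph.fromEdgeSet (t : Set (Sym2 V))).Adj u v → f u = f v} from by
    simp only [forall_mono_iff]]
  exact card_monochrome _ k

lemma count_expansion (G : SimpleGraph V) (E : Finset (Sym2 V))
    (hE : (E : Set (Sym2 V)) = G.edgeSet) (k : ℕ) :
    (numColorings G k : ℝ)
      = ∑ t ∈ E.powerset, (-1 : ℝ) ^ t.card * (k : ℝ) ^ nc t := by
  classical
  have h1 : (numColorings G k : ℝ)
      = ∑ f : V → Fin k, (if ∀ u v, G.Adj u v → f u ≠ f v then (1 : ℝ) else 0) := by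
    rw [numColorings, Nat.card_eq_fintype_card, Fintype.card_subtype, Finset.sum_boole]
  have h2 : ∀ f : V → Fin k,
      (if ∀ u v, G.Adj u v → f u ≠ f v then (1 : ℝ) else 0)
        = ∏ e ∈ E, ((-(if Mono f e then (1 : ℝ) else 0)) + 1) := by
    intro f
    by_cases hp : ∀ u v, G.Adj u v → f u ≠ f v
    · rw [if_pos hp, eq_comm]
      apply Finset.prod_eq_one
      intro e he
      obtain ⟨a, b, rfl⟩ : ∃ a b, e = s(a, b) := Sym2.ind (fun a b => ⟨a, b, rfl⟩) e
      have hadj : G.Adj a b := by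
        rw [← SimpleGraph.mem_edgeSet, ← hE]
        exact_mod_cast he
      rw [if_neg (fun hm => hp a b hadj (mono_mk.mp hm))]
      ring
    · rw [if_neg hp, eq_comm]
      push_neg at hp
      obtain ⟨u, v, hadj, hfe⟩ := hp
      apply Finset.prod_eq_zero (i := s(u, v))
      · have : s(u, v) ∈ G.edgeSet := G.mem_edgeSet.mpr hadj
        rw [← hE] at this
        exact_mod_cast this
      · rw [if_pos (mono_mk.mpr hfe)]
        ring
  rw [h1]
  simp only [h2]
  rw [Finset.sum_congr rfl (fun f _ => Finset.prod_add _ _ E)]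
  rw [Finset.sum_comm]
  apply Finset.sum_congr rfl
  intro t ht
  have h3 : ∀ f : V → Fin k,
      (∏ e ∈ t, (-(if Mono f e then (1 : ℝ) else 0))) * ∏ e ∈ E \ t, (1 : ℝ)
        = (-1 : ℝ) ^ t.card * (if ∀ e ∈ t, Mono f e then (1 : ℝ) else 0) := by
    intro f
    rw [Finset.prod_const_one, mul_one]
    have : ∀ e ∈ t, (-(if Mono f e then (1 : ℝ) else 0))
        = (-1) * (if Mono f e then (1 : ℝ) else 0) := by intro e _; ring
    rw [Finset.prod_congr rfl this, Finset.prod_mul_distrib, Finset.prod_const,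
      Finset.prod_boole]
    simp
  rw [Finset.sum_congr rfl (fun f _ => h3 f), ← Finset.mul_sum]
  congr 1
  rw [Finset.sum_boole, ← Nat.cast_pow, ← card_mono_subtype t k,
    Nat.card_eq_fintype_card, Fintype.card_subtype]


lemma sign_lemma (F : Finset (Sym2 V)) : ∀ (T : Finset (Sym2 V)),
    (∀ e ∈ F, ∀ x y : V, e = s(x, y) →
      ¬ (SimpleGraph.fromEdgeSet (T : Set (Sym2 V))).Reachable x y) →
    0 < (-1 : ℤ) ^ (nc T - nc (T ∪ F)) *
      ∑ S ∈ F.powerset,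
        (if nc (T ∪ S) = nc (T ∪ F) then (-1 : ℤ) ^ S.card else 0) := by
  induction F using Finset.strongInduction with
  | _ F IH =>
    intro T hF
    rcases F.eq_empty_or_nonempty with rfl | ⟨e, he⟩
    · simp
    obtain ⟨x, y, rfl⟩ : ∃ x y, e = s(x, y) := Sym2.ind (fun a b => ⟨a, b, rfl⟩) e
    have hxyT : ¬ (SimpleGraph.fromEdgeSet (T : Set (Sym2 V))).Reachable x y :=
      hF _ he x y rfl
    have hxy : x ≠ y := by rintro rfl; exact hxyT (SimpleGraph.Reachable.refl x)
    have hss : F.erase s(x, y) ⊂ F := Finset.erase_ssubset he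
    have heF' : s(x, y) ∉ F.erase s(x, y) := Finset.notMem_erase _ _
    have hF'sub : F.erase s(x, y) ⊆ F := Finset.erase_subset _ _
    have hFi : F = insert s(x, y) (F.erase s(x, y)) := (Finset.insert_erase he).symm
    set F' := F.erase s(x, y) with hF'def
    set T₂ := insert s(x, y) T with hT₂def
    set m := nc (T ∪ F) with hmdef
    -- basic set identities
    have hTF_eq : T ∪ F = insert s(x, y) (T ∪ F') := by
      nth_rewrite 1 [hFi]; rw [Finset.union_insert]
    have hT₂F' : T₂ ∪ F' = T ∪ F := by
      rw [hT₂def, Finset.insert_union, ← Finset.union_insert, ← hFi]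
    have hT₂sub : T₂ ⊆ T ∪ F := by
      rw [hT₂def]
      exact Finset.insert_subset (Finset.mem_union_right _ he) Finset.subset_union_left
    have hmleT₂ : ∀ S ∈ F'.powerset, m ≤ nc (T₂ ∪ S) := by
      intro S hS
      refine nc_le (Finset.union_subset hT₂sub ?_)
      exact (Finset.mem_powerset.mp hS).trans (hF'sub.trans Finset.subset_union_right)
    have hmleT : ∀ S ∈ F'.powerset, m ≤ nc (T ∪ S) := by
      intro S hS
      refine nc_le (Finset.union_subset Finset.subset_union_left ?_)
      exact (Finset.mem_powerset.mp hS).trans (hF'sub.trans Finset.subset_union_right)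
    -- split the sum
    rw [hFi, Finset.sum_powerset_insert heF']
    have hBconv : ∀ S ∈ F'.powerset,
        (if nc (T ∪ insert s(x, y) S) = m then (-1 : ℤ) ^ (insert s(x, y) S).card else 0)
          = -(if nc (T₂ ∪ S) = m then (-1 : ℤ) ^ S.card else 0) := by
      intro S hS
      have heS : s(x, y) ∉ S := fun h => heF' (Finset.mem_powerset.mp hS h)
      have hun : T ∪ insert s(x, y) S = T₂ ∪ S := by
        rw [Finset.union_insert, hT₂def, Finset.insert_union]
      rw [Finset.card_insert_of_notMem heS, hun]
      by_cases hc : nc (T₂ ∪ S) = m <;> simp [hc, pow_succ]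
    rw [Finset.sum_congr rfl hBconv, Finset.sum_neg_distrib]
    -- names for the two sums
    set A := ∑ S ∈ F'.powerset,
      (if nc (T ∪ S) = m then (-1 : ℤ) ^ S.card else 0) with hAdef
    set W₂ := ∑ S ∈ F'.powerset,
      (if nc (T₂ ∪ S) = m then (-1 : ℤ) ^ S.card else 0) with hW₂def
    by_cases hcase : ∃ f ∈ F', ∃ a b : V, f = s(a, b) ∧
        (SimpleGraph.fromEdgeSet (T₂ : Set (Sym2 V))).Reachable a b
    · -- case (i) : some edge of F' joins two T₂-connected vertices
      obtain ⟨f₀, hf₀, a, b, rfl, hab⟩ := hcase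
      have hnab : ¬ (SimpleGraph.fromEdgeSet (T : Set (Sym2 V))).Reachable a b :=
        hF _ (hF'sub hf₀) a b rfl
      have hab_ne : a ≠ b := by rintro rfl; exact hnab (SimpleGraph.Reachable.refl a)
      -- W₂ = 0 via the involution toggling f₀
      have hW₂ : W₂ = 0 := by
        rw [hW₂def]
        refine Finset.sum_involution
          (fun S _ => if s(a, b) ∈ S then S.erase s(a, b) else insert s(a, b) S)
          ?_ ?_ ?_ ?_
        · intro S hS
          have hpair : ∀ S' ∈ F'.powerset, s(a, b) ∉ S' →
              ((if nc (T₂ ∪ insert s(a, b) S') = m then (-1 : ℤ) ^ (insert s(a, b) S').card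
                  else 0)
                + (if nc (T₂ ∪ S') = m then (-1 : ℤ) ^ S'.card else 0) = 0) := by
            intro S' hS' hnotin
            have hreach : (SimpleGraph.fromEdgeSet ((T₂ ∪ S' : Finset (Sym2 V)) :
                Set (Sym2 V))).Reachable a b :=
              reach_mono Finset.subset_union_left hab
            have hnc : nc (T₂ ∪ insert s(a, b) S') = nc (T₂ ∪ S') := by
              rw [Finset.union_insert]
              exact nc_insert_of_reachable hab_ne hreach
            rw [Finset.card_insert_of_notMem hnotin, hnc]
            by_cases hc : nc (T₂ ∪ S') = m <;> simp [hc, pow_succ]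
          by_cases hfS : s(a, b) ∈ S
          · simp only [if_pos hfS]
            have h1 : S = insert s(a, b) (S.erase s(a, b)) := (Finset.insert_erase hfS).symm
            have h2 : S.erase s(a, b) ∈ F'.powerset := Finset.mem_powerset.mpr
              ((Finset.erase_subset _ _).trans (Finset.mem_powerset.mp hS))
            have h3 := hpair _ h2 (Finset.notMem_erase _ _)
            rwa [← h1] at h3
          · simp only [if_neg hfS]
            rw [add_comm]
            exact hpair S hS hfS
        · intro S hS _
          by_cases hfS : s(a, b) ∈ S
          · simp only [if_pos hfS]
            exact Finset.erase_ne_self.mpr hfS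
          · simp only [if_neg hfS]
            exact Finset.insert_ne_self.mpr hfS
        · intro S hS
          by_cases hfS : s(a, b) ∈ S
          · simp only [if_pos hfS]
            exact Finset.mem_powerset.mpr
              ((Finset.erase_subset _ _).trans (Finset.mem_powerset.mp hS))
          · simp only [if_neg hfS]
            exact Finset.mem_powerset.mpr
              (Finset.insert_subset hf₀ (Finset.mem_powerset.mp hS))
        · intro S hS
          by_cases hfS : s(a, b) ∈ S
          · simp [hfS, Finset.insert_erase hfS]
          · simp [hfS, Finset.erase_insert hfS]
      -- the deleted graph has the same number of components
      have hreachxy : (SimpleGraph.fromEdgeSet ((T ∪ F' : Finset (Sym2 V)) :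
          Set (Sym2 V))).Reachable x y := by
        have hsplit : SimpleGraph.fromEdgeSet ((T₂ : Finset (Sym2 V)) : Set (Sym2 V))
            = SimpleGraph.fromEdgeSet (T : Set (Sym2 V))
              ⊔ SimpleGraph.fromEdgeSet {s(x, y)} := fromEdgeSet_insert' _ _
        rw [hsplit] at hab
        have hadjab : (SimpleGraph.fromEdgeSet ((T ∪ F' : Finset (Sym2 V)) :
            Set (Sym2 V))).Adj a b :=
          (SimpleGraph.fromEdgeSet_adj _).mpr
            ⟨by exact_mod_cast Finset.mem_union_right _ hf₀, hab_ne⟩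
        have hmonoT : ∀ {u v : V},
            (SimpleGraph.fromEdgeSet (T : Set (Sym2 V))).Reachable u v →
            (SimpleGraph.fromEdgeSet ((T ∪ F' : Finset (Sym2 V)) :
              Set (Sym2 V))).Reachable u v :=
          fun h => reach_mono Finset.subset_union_left h
        rcases reachable_sup_edge hxy hab with h1 | ⟨h1, h2⟩ | ⟨h1, h2⟩
        · exact absurd h1 hnab
        · exact ((hmonoT h1).symm.trans (hadjab.reachable.trans (hmonoT h2).symm))
        · exact ((hmonoT h2).trans (hadjab.symm.reachable.trans (hmonoT h1)))
      have hd : nc (T ∪ F') = m := by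
        rw [hmdef, hTF_eq]
        exact (nc_insert_of_reachable hxy hreachxy).symm
      have hIH := IH F' hss T (fun f hf => hF f (hF'sub hf))
      rw [hd] at hIH
      rw [hW₂, neg_zero, add_zero]
      rw [hmdef] at hIH ⊢
      exact hIH
    · -- case (ii) : F' is loopless relative to T₂
      push_neg at hcase
      have hF'T₂ : ∀ f ∈ F', ∀ a b : V, f = s(a, b) →
          ¬ (SimpleGraph.fromEdgeSet ((T₂ : Finset (Sym2 V)) : Set (Sym2 V))).Reachable a b :=
        fun f hf a b hfab hr => hcase f hf a b hfab hr
      have hIH₂ := IH F' hss T₂ hF'T₂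
      rw [hT₂F'] at hIH₂
      -- hIH₂ : 0 < (-1)^(nc T₂ - m) * W₂
      have hT₂card : nc T₂ + 1 = nc T := nc_insert_of_not_reachable hxy hxyT
      have hmT₂ : m ≤ nc T₂ := hmleT₂ ∅ (Finset.empty_mem_powerset _) |>.trans
        (le_of_eq (by rw [Finset.union_empty]))
      have hsign : (-1 : ℤ) ^ (nc T - m) = -(-1 : ℤ) ^ (nc T₂ - m) := by
        have : nc T - m = (nc T₂ - m) + 1 := by omega
        rw [this, pow_succ]
        ring
      have hpos₂ : 0 < (-1 : ℤ) ^ (nc T - m) * (-W₂) := by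
        rw [hsign]
        calc 0 < (-1 : ℤ) ^ (nc T₂ - m) * W₂ := hIH₂
        _ = -(-1 : ℤ) ^ (nc T₂ - m) * -W₂ := by ring
      by_cases hd : nc (T ∪ F') = m
      · have hIH₁ := IH F' hss T (fun f hf => hF f (hF'sub hf))
        rw [hd] at hIH₁
        calc (0 : ℤ) < (-1 : ℤ) ^ (nc T - m) * A + (-1 : ℤ) ^ (nc T - m) * (-W₂) :=
              add_pos hIH₁ hpos₂
        _ = (-1 : ℤ) ^ (nc T - m) * (A + -W₂) := by ring
      · have hA : A = 0 := by
          rw [hAdef]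
          apply Finset.sum_eq_zero
          intro S hS
          have h1 : nc (T ∪ F') ≤ nc (T ∪ S) :=
            nc_le (Finset.union_subset_union_right (Finset.mem_powerset.mp hS))
          have h2 : m ≤ nc (T ∪ F') := hmleT F' (Finset.mem_powerset_self _)
          rw [if_neg (by omega)]
        rw [hA, zero_add]
        exact hpos₂

end ChromAux

/-- If `G` is a finite loopless (simple) graph with `c` connected components, then `x = 0`
is a root of its chromatic polynomial of multiplicity exactly `c`. -/
theorem chromaticPolynomial_rootMultiplicity_zero {V : Type} [Fintype V] (G : SimpleGraph V)
    (P : Polynomial ℝ) (hP : IsChromaticPolynomial G P) :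
    P.rootMultiplicity 0 = Nat.card G.ConnectedComponent := by
  classical
  obtain ⟨E, hE⟩ : ∃ E : Finset (Sym2 V), (E : Set (Sym2 V)) = G.edgeSet :=
    ⟨(Set.toFinite G.edgeSet).toFinset, Set.Finite.coe_toFinset _⟩
  set c := ChromAux.nc E with hcdef
  have hcG : c = Nat.card G.ConnectedComponent := by
    rw [hcdef, ChromAux.nc, hE, SimpleGraph.fromEdgeSet_edgeSet, ChromAux.ncg]
  set Q : Polynomial ℝ := ∑ t ∈ E.powerset,
    Polynomial.C ((-1 : ℝ) ^ t.card) * Polynomial.X ^ (ChromAux.nc t) with hQdef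
  have hPQ : P = Q := by
    apply Polynomial.eq_of_infinite_eval_eq
    have hsub : Set.range ((↑·) : ℕ → ℝ) ⊆ {x | P.eval x = Q.eval x} := by
      rintro _ ⟨k, rfl⟩
      have h1 : P.eval (k : ℝ) = (numColorings G k : ℝ) := hP k
      have h2 : Q.eval (k : ℝ)
          = ∑ t ∈ E.powerset, (-1 : ℝ) ^ t.card * (k : ℝ) ^ ChromAux.nc t := by
        rw [hQdef, Polynomial.eval_finset_sum]
        refine Finset.sum_congr rfl (fun t ht => ?_)
        simp
      simp only [Set.mem_setOf_eq]
      rw [h1, h2, ChromAux.count_expansion G E hE k]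
    exact Set.Infinite.mono hsub (Set.infinite_range_of_injective Nat.cast_injective)
  have hQcoeff : ∀ i, Q.coeff i
      = ∑ t ∈ E.powerset, (if i = ChromAux.nc t then (-1 : ℝ) ^ t.card else 0) := by
    intro i
    rw [hQdef, Polynomial.finset_sum_coeff]
    refine Finset.sum_congr rfl (fun t ht => ?_)
    rw [Polynomial.coeff_C_mul, Polynomial.coeff_X_pow]
    by_cases h : i = ChromAux.nc t <;> simp [h]
  -- coefficients below `c` vanish
  have hlow : ∀ i < c, Q.coeff i = 0 := by
    intro i hi
    rw [hQcoeff i]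
    apply Finset.sum_eq_zero
    intro t ht
    have : c ≤ ChromAux.nc t := ChromAux.nc_le (Finset.mem_powerset.mp ht)
    rw [if_neg (by omega)]
  -- the coefficient at `c` is nonzero
  have hloop : ∀ e ∈ E, ∀ x y : V, e = s(x, y) →
      ¬ (SimpleGraph.fromEdgeSet (((∅ : Finset (Sym2 V))) : Set (Sym2 V))).Reachable x y := by
    intro e he x y hexy hr
    have hadj : G.Adj x y := by
      rw [← SimpleGraph.mem_edgeSet, ← hE]
      exact_mod_cast hexy ▸ he
    rw [Finset.coe_empty, SimpleGraph.fromEdgeSet_empty, SimpleGraph.reachable_bot] at hr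
    exact hadj.ne hr
  have hsign := ChromAux.sign_lemma E ∅ hloop
  simp only [Finset.empty_union] at hsign
  have hW : (∑ S ∈ E.powerset,
      if ChromAux.nc S = ChromAux.nc E then (-1 : ℤ) ^ S.card else 0) ≠ 0 := by
    intro h0
    rw [h0, mul_zero] at hsign
    exact lt_irrefl 0 hsign
  have hcne : Q.coeff c ≠ 0 := by
    rw [hQcoeff c]
    have hcast : (∑ t ∈ E.powerset, (if c = ChromAux.nc t then (-1 : ℝ) ^ t.card else 0))
        = ((∑ S ∈ E.powerset,
            if ChromAux.nc S = ChromAux.nc E then (-1 : ℤ) ^ S.card else 0 : ℤ) : ℝ) := by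
      push_cast
      refine Finset.sum_congr rfl (fun t ht => ?_)
      by_cases h : ChromAux.nc t = ChromAux.nc E
      · rw [if_pos h, if_pos (by rw [hcdef, h])]
      · rw [if_neg h, if_neg (by rw [hcdef]; exact fun hh => h hh.symm)]
    rw [hcast]
    exact_mod_cast hW
  have hQne : Q ≠ 0 := fun h => hcne (by rw [h, Polynomial.coeff_zero])
  rw [hPQ, Polynomial.rootMultiplicity_eq_natTrailingDegree', ← hcG]
  exact le_antisymm (Polynomial.natTrailingDegree_le_of_ne_zero hcne)
    (Polynomial.le_natTrailingDegree hQne hlow)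
end

section
/- If G is a finite loopless graph (simple graph) with n vertices and c connected components, then its chromatic polynomial P(G, x) is non-zero with sign (-1)^{n+c} for every real x ∈ (0, 1); that is, (-1)^{n+c} P(G, x) > 0 for all 0 < x < 1. -/
open Polynomial SimpleGraph

section helpers
variable {V : Type} [Fintype V]

lemma card_ne_add_one {α : Type*} [Finite α] (x : α) :
    Nat.card {y : α // y ≠ x} + 1 = Nat.card α := by
  classical
  have e := Equiv.sumCompl (fun y : α => y ≠ x)
  have h1 : Nat.card {y : α // ¬ y ≠ x} = 1 := by
    rw [Nat.card_eq_one_iff_unique]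
    constructor
    · exact ⟨fun a b => Subtype.ext (by
        have ha := a.2; have hb := b.2
        simp only [not_not] at ha hb
        rw [ha, hb])⟩
    · exact ⟨⟨x, by simp⟩⟩
  calc Nat.card {y : α // y ≠ x} + 1
      = Nat.card ({y : α // y ≠ x} ⊕ {y : α // ¬ y ≠ x}) := by
        rw [Nat.card_sum, h1]
    _ = Nat.card α := Nat.card_congr e

lemma cc_card_of_no_edges (G : SimpleGraph V) (h : G.edgeSet = ∅) :
    Nat.card G.ConnectedComponent = Fintype.card V := by
  have hb : Function.Bijective (G.connectedComponentMk) := by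
    constructor
    · intro a b hab
      obtain ⟨w⟩ := (SimpleGraph.ConnectedComponent.eq).mp hab
      cases w with
      | nil => rfl
      | cons h' _ =>
        exact absurd ((G.mem_edgeSet).mpr h') (by simp [h])
    · intro K
      exact K.exists_rep
  rw [← Nat.card_eq_fintype_card]
  exact (Nat.card_eq_of_bijective _ hb).symm

lemma numColorings_of_no_edges (G : SimpleGraph V) (h : G.edgeSet = ∅) (k : ℕ) :
    numColorings G k = k ^ Fintype.card V := by
  have e : {f : V → Fin k // ∀ u v, G.Adj u v → f u ≠ f v} ≃ (V → Fin k) :=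
    Equiv.subtypeUnivEquiv (fun f u v hadj =>
      absurd ((G.mem_edgeSet).mpr hadj) (by simp [h]))
  rw [numColorings, Nat.card_congr e, Nat.card_fun, Nat.card_eq_fintype_card,
    Nat.card_eq_fintype_card, Fintype.card_fin]
section graphs
variable {V : Type} [Fintype V] {G : SimpleGraph V} {u v : V}

/-- Walks in `G` decompose relative to `G` minus the edge `uv`. -/
lemma reach_cases (huv : G.Adj u v) {a b : V}
    (h : G.Reachable a b) :
    (G.deleteEdges {s(u,v)}).Reachable a b ∨
    ((G.deleteEdges {s(u,v)}).Reachable a u ∧ (G.deleteEdges {s(u,v)}).Reachable v b) ∨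
    ((G.deleteEdges {s(u,v)}).Reachable a v ∧ (G.deleteEdges {s(u,v)}).Reachable u b) := by
  set G₀ := G.deleteEdges {s(u,v)} with hG₀
  obtain ⟨w⟩ := h
  induction w with
  | nil => exact Or.inl (Reachable.refl _)
  | @cons a c b hac p ih =>
    by_cases h0 : G₀.Adj a c
    · have hr : G₀.Reachable a c := h0.reachable
      rcases ih with h1 | ⟨h1, h2⟩ | ⟨h1, h2⟩
      · exact Or.inl (hr.trans h1)
      · exact Or.inr (Or.inl ⟨hr.trans h1, h2⟩)
      · exact Or.inr (Or.inr ⟨hr.trans h1, h2⟩)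
    · have he : s(a,c) = s(u,v) := by
        by_contra hne
        exact h0 (by rw [hG₀, SimpleGraph.deleteEdges_adj]; exact ⟨hac, by simpa using hne⟩)
      rcases Sym2.eq_iff.mp he with ⟨rfl, rfl⟩ | ⟨rfl, rfl⟩
      · -- a = u, c = v
        rcases ih with h1 | ⟨h1, h2⟩ | ⟨h1, h2⟩
        · exact Or.inr (Or.inl ⟨Reachable.refl _, h1⟩)
        · exact Or.inl (h1.symm.trans h2)
        · exact Or.inl h2
      · -- a = v, c = u
        rcases ih with h1 | ⟨h1, h2⟩ | ⟨h1, h2⟩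
        · exact Or.inr (Or.inr ⟨Reachable.refl _, h1⟩)
        · exact Or.inl h2
        · exact Or.inl (h1.symm.trans h2)

lemma reach_iff_of_reach (huv : G.Adj u v)
    (hr : (G.deleteEdges {s(u,v)}).Reachable u v) (a b : V) :
    G.Reachable a b ↔ (G.deleteEdges {s(u,v)}).Reachable a b := by
  constructor
  · intro h
    rcases reach_cases huv h with h1 | ⟨h1, h2⟩ | ⟨h1, h2⟩
    · exact h1
    · exact (h1.trans hr).trans h2
    · exact (h1.trans hr.symm).trans h2
  · exact fun h => h.mono (SimpleGraph.deleteEdges_le _)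

open scoped Classical in
/-- redirect `v` to `u`. -/
noncomputable def rmap (u v a : V) : V := if a = v then u else a

lemma rmap_ne_right (huv : u ≠ v) (a : V) : rmap u v a ≠ v := by
  unfold rmap; split_ifs with h
  · exact huv
  · exact h

lemma rmap_of_ne {a : V} (h : a ≠ v) : rmap u v a = a := by
  unfold rmap; split_ifs with h'
  · exact absurd h' h
  · rfl

lemma rmap_self : rmap u v v = u := by unfold rmap; simp

/-- the graph on `V` obtained from `G` by redirecting all edges at `v` to `u`,
leaving `v` isolated. -/
noncomputable def mergeGraph (G : SimpleGraph V) (u v : V) : SimpleGraph V where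
  Adj a b := a ≠ b ∧ ∃ a' b', G.Adj a' b' ∧ rmap u v a' = a ∧ rmap u v b' = b
  symm := by
    constructor
    rintro a b ⟨hne, a', b', hadj, ha, hb⟩
    exact ⟨hne.symm, b', a', hadj.symm, hb, ha⟩
  loopless := by constructor; rintro a ⟨hne, -⟩; exact hne rfl

lemma mergeGraph_not_adj_left (huv : u ≠ v) (a : V) : ¬ (mergeGraph G u v).Adj v a := by
  rintro ⟨hne, a', b', hadj, ha, hb⟩
  exact rmap_ne_right huv a' ha

lemma mergeGraph_reach_left (huv : u ≠ v) (a : V)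
    (h : (mergeGraph G u v).Reachable v a) : v = a := by
  obtain ⟨w⟩ := h
  cases w with
  | nil => rfl
  | @cons _ c _ h' _ => exact absurd h' (mergeGraph_not_adj_left huv c)

end graphs
set_option linter.unusedSectionVars false

section components
variable {V : Type} [Fintype V] {G : SimpleGraph V} {u v : V}

lemma cc_card_nonbridge (huv : G.Adj u v)
    (hr : (G.deleteEdges {s(u,v)}).Reachable u v) :
    Nat.card (G.deleteEdges {s(u,v)}).ConnectedComponent
      = Nat.card G.ConnectedComponent := by
  set G₀ := G.deleteEdges {s(u,v)} with hG₀
  let φ : G₀.ConnectedComponent → G.ConnectedComponent :=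
    SimpleGraph.ConnectedComponent.lift (fun a => G.connectedComponentMk a)
      (fun a b p _ => SimpleGraph.ConnectedComponent.eq.mpr
        (Reachable.mono (SimpleGraph.deleteEdges_le _) ⟨p⟩))
  have hbij : Function.Bijective φ := by
    constructor
    · intro K L
      refine SimpleGraph.ConnectedComponent.ind₂ (fun a b h => ?_) K L
      have : G.Reachable a b := SimpleGraph.ConnectedComponent.eq.mp h
      exact SimpleGraph.ConnectedComponent.eq.mpr
        ((reach_iff_of_reach huv hr a b).mp this)
    · intro K
      refine SimpleGraph.ConnectedComponent.ind (fun a => ?_) K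
      exact ⟨G₀.connectedComponentMk a, rfl⟩
  exact Nat.card_eq_of_bijective φ hbij

lemma cc_card_bridge (huv : G.Adj u v)
    (hnr : ¬ (G.deleteEdges {s(u,v)}).Reachable u v) :
    Nat.card (G.deleteEdges {s(u,v)}).ConnectedComponent
      = Nat.card G.ConnectedComponent + 1 := by
  classical
  set G₀ := G.deleteEdges {s(u,v)} with hG₀
  let f : V → {K : G₀.ConnectedComponent // K ≠ G₀.connectedComponentMk v} :=
    fun a =>
      if h : G₀.Reachable a v
      then ⟨G₀.connectedComponentMk u,
        fun he => hnr (SimpleGraph.ConnectedComponent.eq.mp he)⟩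
      else ⟨G₀.connectedComponentMk a,
        fun he => h (SimpleGraph.ConnectedComponent.eq.mp he)⟩
  have wd : ∀ a b, G.Reachable a b → f a = f b := by
    intro a b hab
    rcases reach_cases huv hab with h1 | ⟨h1, h2⟩ | ⟨h1, h2⟩
    · by_cases ha : G₀.Reachable a v
      · have hb : G₀.Reachable b v := h1.symm.trans ha
        simp only [f, dif_pos ha, dif_pos hb]
      · have hb : ¬ G₀.Reachable b v := fun hb => ha (h1.trans hb)
        simp only [f, dif_neg ha, dif_neg hb]
        exact Subtype.ext (SimpleGraph.ConnectedComponent.eq.mpr h1)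
    · -- a ↝ u, v ↝ b
      have ha : ¬ G₀.Reachable a v := fun h => hnr (h1.symm.trans h)
      have hb : G₀.Reachable b v := h2.symm
      simp only [f, dif_neg ha, dif_pos hb]
      exact Subtype.ext (SimpleGraph.ConnectedComponent.eq.mpr h1)
    · -- a ↝ v, u ↝ b
      have hb : ¬ G₀.Reachable b v := fun h => hnr (h2.trans h)
      simp only [f, dif_pos (show G₀.Reachable a v from h1), dif_neg hb]
      exact Subtype.ext (SimpleGraph.ConnectedComponent.eq.mpr h2)
  let F : G.ConnectedComponent → {K : G₀.ConnectedComponent // K ≠ G₀.connectedComponentMk v} :=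
    SimpleGraph.ConnectedComponent.lift f (fun a b p _ => wd a b ⟨p⟩)
  let ψ : G₀.ConnectedComponent → G.ConnectedComponent :=
    SimpleGraph.ConnectedComponent.lift (fun a => G.connectedComponentMk a)
      (fun a b p _ => SimpleGraph.ConnectedComponent.eq.mpr
        (Reachable.mono (SimpleGraph.deleteEdges_le _) ⟨p⟩))
  have left : ∀ K : G.ConnectedComponent, ψ (F K).val = K := by
    refine SimpleGraph.ConnectedComponent.ind (fun a => ?_)
    show ψ (f a).val = G.connectedComponentMk a
    by_cases ha : G₀.Reachable a v
    · simp only [f, dif_pos ha]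
      show G.connectedComponentMk u = G.connectedComponentMk a
      exact SimpleGraph.ConnectedComponent.eq.mpr
        (huv.reachable.trans (ha.mono (SimpleGraph.deleteEdges_le _)).symm)
    · simp only [f, dif_neg ha]; rfl
  have right : ∀ K : {K : G₀.ConnectedComponent // K ≠ G₀.connectedComponentMk v},
      F (ψ K.val) = K := by
    rintro ⟨K, hK⟩
    revert hK
    refine SimpleGraph.ConnectedComponent.ind (fun a ha => ?_) K
    show F (G.connectedComponentMk a) = _
    have hav : ¬ G₀.Reachable a v := fun h =>
      ha (SimpleGraph.ConnectedComponent.eq.mpr h)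
    show f a = _
    simp only [f, dif_neg hav]
  have e : G.ConnectedComponent ≃
      {K : G₀.ConnectedComponent // K ≠ G₀.connectedComponentMk v} :=
    ⟨F, fun K => ψ K.val, left, right⟩
  rw [← Nat.card_congr e.symm]
  exact (card_ne_add_one _).symm

lemma reach_rmap (hr : G.Reachable u v) (a : V) : G.Reachable a (rmap u v a) := by
  by_cases h : a = v
  · subst h; rw [rmap_self]; exact hr.symm
  · rw [rmap_of_ne h]

lemma mergeGraph_reach_of_reach {a b : V} (h : G.Reachable a b) :
    (mergeGraph G u v).Reachable (rmap u v a) (rmap u v b) := by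
  obtain ⟨w⟩ := h
  induction w with
  | nil => exact Reachable.refl _
  | @cons a c b hac p ih =>
    refine Reachable.trans ?_ ih
    by_cases h : rmap u v a = rmap u v c
    · rw [h]
    · exact SimpleGraph.Adj.reachable ⟨h, a, c, hac, rfl, rfl⟩

lemma reach_of_mergeGraph_adj (hr : G.Reachable u v) {x y : V}
    (h : (mergeGraph G u v).Adj x y) : G.Reachable x y := by
  obtain ⟨hne, a', b', hadj, ha, hb⟩ := h
  have h1 : G.Reachable x a' := by rw [← ha]; exact (reach_rmap hr a').symm
  have h2 : G.Reachable b' y := by rw [← hb]; exact reach_rmap hr b'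
  exact (h1.trans hadj.reachable).trans h2

lemma reach_of_mergeGraph_reach (hr : G.Reachable u v) {x y : V}
    (h : (mergeGraph G u v).Reachable x y) : G.Reachable x y := by
  obtain ⟨w⟩ := h
  induction w with
  | nil => exact Reachable.refl _
  | @cons a c b hac p ih => exact (reach_of_mergeGraph_adj hr hac).trans ih

lemma cc_card_merge (huv : u ≠ v) (hr : G.Reachable u v) :
    Nat.card (mergeGraph G u v).ConnectedComponent
      = Nat.card G.ConnectedComponent + 1 := by
  classical
  set H := mergeGraph G u v with hH
  let θ : G.ConnectedComponent →
      {K : H.ConnectedComponent // K ≠ H.connectedComponentMk v} :=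
    SimpleGraph.ConnectedComponent.lift
      (fun a => ⟨H.connectedComponentMk (rmap u v a), by
        intro he
        have := SimpleGraph.ConnectedComponent.eq.mp he
        exact rmap_ne_right huv a (mergeGraph_reach_left huv _ this.symm).symm⟩)
      (fun a b p _ => Subtype.ext (SimpleGraph.ConnectedComponent.eq.mpr
        (mergeGraph_reach_of_reach ⟨p⟩)))
  let ψ : H.ConnectedComponent → G.ConnectedComponent :=
    SimpleGraph.ConnectedComponent.lift (fun x => G.connectedComponentMk (rmap u v x))
      (fun x y p _ => SimpleGraph.ConnectedComponent.eq.mpr (by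
        have hxy : G.Reachable x y := reach_of_mergeGraph_reach hr ⟨p⟩
        exact ((reach_rmap hr x).symm.trans hxy).trans (reach_rmap hr y)))
  have left : ∀ K : G.ConnectedComponent, ψ (θ K).val = K := by
    refine SimpleGraph.ConnectedComponent.ind (fun a => ?_)
    show G.connectedComponentMk (rmap u v (rmap u v a)) = G.connectedComponentMk a
    exact SimpleGraph.ConnectedComponent.eq.mpr
      (((reach_rmap hr _).symm.trans (reach_rmap hr a).symm))
  have right : ∀ K : {K : H.ConnectedComponent // K ≠ H.connectedComponentMk v},
      θ (ψ K.val) = K := by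
    rintro ⟨K, hK⟩
    revert hK
    refine SimpleGraph.ConnectedComponent.ind (fun x hx => ?_) K
    have hxv : x ≠ v := by rintro rfl; exact hx rfl
    refine Subtype.ext ?_
    show H.connectedComponentMk (rmap u v (rmap u v x)) = H.connectedComponentMk x
    rw [rmap_of_ne hxv, rmap_of_ne hxv]
  have e : G.ConnectedComponent ≃
      {K : H.ConnectedComponent // K ≠ H.connectedComponentMk v} :=
    ⟨θ, fun K => ψ K.val, left, right⟩
  rw [← Nat.card_congr e.symm]
  exact (card_ne_add_one _).symm

lemma card_edges_merge_le (hG : ¬ G.Adj u v) (huv : u ≠ v) :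
    Nat.card (mergeGraph G u v).edgeSet ≤ Nat.card G.edgeSet := by
  classical
  have key : ∀ a b, G.Adj a b → rmap u v a ≠ rmap u v b := by
    intro a b hadj h
    by_cases hav : a = v
    · by_cases hbv : b = v
      · exact hadj.ne (hav.trans hbv.symm)
      · rw [hav, rmap_self, rmap_of_ne hbv] at h
        have hvb : G.Adj v b := by rw [← hav]; exact hadj
        exact hG (by rw [h]; exact hvb.symm)
    · by_cases hbv : b = v
      · rw [hbv, rmap_self, rmap_of_ne hav] at h
        have hav' : G.Adj a v := by rw [← hbv]; exact hadj
        exact hG (by rw [← h]; exact hav')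
      · rw [rmap_of_ne hav, rmap_of_ne hbv] at h
        exact hadj.ne h
  have hmem : ∀ e ∈ G.edgeSet, Sym2.map (rmap u v) e ∈ (mergeGraph G u v).edgeSet := by
    intro e he
    induction e with
    | _ a b =>
      rw [Sym2.map_pair_eq, SimpleGraph.mem_edgeSet]
      rw [SimpleGraph.mem_edgeSet] at he
      exact ⟨key a b he, a, b, he, rfl, rfl⟩
  let f : G.edgeSet → (mergeGraph G u v).edgeSet :=
    fun e => ⟨Sym2.map (rmap u v) e.val, hmem e.val e.property⟩
  have hsurj : Function.Surjective f := by
    rintro ⟨e, he⟩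
    induction e with
    | _ x y =>
      rw [SimpleGraph.mem_edgeSet] at he
      obtain ⟨hne, a', b', hadj, ha, hb⟩ := he
      refine ⟨⟨s(a', b'), (SimpleGraph.mem_edgeSet G).mpr hadj⟩, ?_⟩
      apply Subtype.ext
      show Sym2.map (rmap u v) s(a', b') = s(x, y)
      rw [Sym2.map_pair_eq, ha, hb]
  exact Nat.card_le_card_of_surjective f hsurj

end components
set_option maxHeartbeats 800000

section counting
variable {V : Type} [Fintype V]

/-- properness of a coloring -/
def Proper (G : SimpleGraph V) {k : ℕ} (g : V → Fin k) : Prop :=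
  ∀ a b, G.Adj a b → g a ≠ g b

lemma numColorings_eq (G : SimpleGraph V) (k : ℕ) :
    numColorings G k = Nat.card {g : V → Fin k // Proper G g} := rfl

variable {G : SimpleGraph V} {u v : V} {k : ℕ}

lemma proper_iff (huv : G.Adj u v) (g : V → Fin k) :
    Proper G g ↔ Proper (G.deleteEdges {s(u,v)}) g ∧ g u ≠ g v := by
  constructor
  · intro h
    refine ⟨fun a b hab => h a b ((SimpleGraph.deleteEdges_adj).mp hab).1, h u v huv⟩
  · rintro ⟨h0, hne⟩ a b hab
    by_cases hd : (G.deleteEdges {s(u,v)}).Adj a b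
    · exact h0 a b hd
    · have he : s(a,b) = s(u,v) := by
        by_contra hcon
        exact hd (SimpleGraph.deleteEdges_adj.mpr ⟨hab, by simpa using hcon⟩)
      rcases Sym2.eq_iff.mp he with ⟨rfl, rfl⟩ | ⟨rfl, rfl⟩
      · exact hne
      · exact hne.symm

/-- split the proper colorings of `G - e` according to whether the endpoints of `e`
get equal colors. -/
lemma count_split (huv : G.Adj u v) :
    numColorings (G.deleteEdges {s(u,v)}) k
      = numColorings G k
        + Nat.card {g : V → Fin k // Proper (G.deleteEdges {s(u,v)}) g ∧ g u = g v} := by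
  classical
  set G₀ := G.deleteEdges {s(u,v)}
  rw [numColorings_eq, numColorings_eq]
  rw [Nat.card_congr (Equiv.sumCompl (fun x : {g : V → Fin k // Proper G₀ g} =>
    x.1 u = x.1 v)).symm, Nat.card_sum]
  have e1 : {x : {g : V → Fin k // Proper G₀ g} // x.1 u = x.1 v}
      ≃ {g : V → Fin k // Proper G₀ g ∧ g u = g v} :=
    Equiv.subtypeSubtypeEquivSubtypeInter (fun g : V → Fin k => Proper G₀ g)
      (fun g => g u = g v)
  have e2 : {x : {g : V → Fin k // Proper G₀ g} // ¬ x.1 u = x.1 v}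
      ≃ {g : V → Fin k // Proper G g} :=
    (Equiv.subtypeSubtypeEquivSubtypeInter (fun g : V → Fin k => Proper G₀ g)
      (fun g => ¬ g u = g v)).trans
      (Equiv.subtypeEquivRight (fun g => by rw [proper_iff huv g]))
  rw [Nat.card_congr e1, Nat.card_congr e2, Nat.add_comm]

open scoped Classical in
/-- twist a coloring by `σ` on the set of vertices reaching `v`. -/
noncomputable def twist (G : SimpleGraph V) (v : V) (σ : Equiv.Perm (Fin k))
    (g : V → Fin k) : V → Fin k :=
  fun w => if G.Reachable w v then σ (g w) else g w

lemma twist_proper (σ : Equiv.Perm (Fin k)) {g : V → Fin k} (hg : Proper G g) :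
    Proper G (twist G v σ g) := by
  intro a b hab
  unfold twist
  have hiff : G.Reachable a v ↔ G.Reachable b v :=
    ⟨fun h => hab.symm.reachable.trans h, fun h => hab.reachable.trans h⟩
  by_cases ha : G.Reachable a v
  · rw [if_pos ha, if_pos (hiff.mp ha)]
    exact fun h => hg a b hab (σ.injective h)
  · rw [if_neg ha, if_neg (fun h => ha (hiff.mpr h))]
    exact hg a b hab

lemma twist_twist (σ τ : Equiv.Perm (Fin k)) (g : V → Fin k) :
    twist G v τ (twist G v σ g) = twist G v (σ.trans τ) g := by
  funext w
  unfold twist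
  by_cases h : G.Reachable w v <;> simp [h]

lemma twist_refl (g : V → Fin k) : twist G v (Equiv.refl _) g = g := by
  funext w; unfold twist; by_cases h : G.Reachable w v <;> simp [h]

lemma twist_apply_of_not_reach (σ : Equiv.Perm (Fin k)) (g : V → Fin k) {w : V}
    (h : ¬ G.Reachable w v) : twist G v σ g w = g w := by
  unfold twist; rw [if_neg h]

lemma twist_apply_of_reach (σ : Equiv.Perm (Fin k)) (g : V → Fin k) {w : V}
    (h : G.Reachable w v) : twist G v σ g w = σ (g w) := by
  unfold twist; rw [if_pos h]

/-- when `u` cannot reach `v`, proper colorings are `k` times those with `g u = g v`. -/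
lemma count_bridge (hnr : ¬ G.Reachable u v) :
    Nat.card {g : V → Fin k // Proper G g}
      = Nat.card {g : V → Fin k // Proper G g ∧ g u = g v} * k := by
  classical
  have hvv : G.Reachable v v := Reachable.refl v
  let F : {g : V → Fin k // Proper G g}
      → {g : V → Fin k // Proper G g ∧ g u = g v} × Fin k :=
    fun g => (⟨twist G v (Equiv.swap (g.1 u) (g.1 v)) g.1,
      twist_proper _ g.2, by
        rw [twist_apply_of_not_reach _ _ hnr, twist_apply_of_reach _ _ hvv,
          Equiv.swap_apply_right]⟩, g.1 v)
  let Fi : {g : V → Fin k // Proper G g ∧ g u = g v} × Fin k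
      → {g : V → Fin k // Proper G g} :=
    fun p => ⟨twist G v (Equiv.swap (p.1.1 u) p.2) p.1.1, twist_proper _ p.1.2.1⟩
  have left : ∀ g, Fi (F g) = g := by
    rintro ⟨g, hg⟩
    apply Subtype.ext
    show twist G v (Equiv.swap (twist G v (Equiv.swap (g u) (g v)) g u) (g v))
      (twist G v (Equiv.swap (g u) (g v)) g) = g
    rw [twist_apply_of_not_reach _ _ hnr, twist_twist, Equiv.swap_swap, twist_refl]
  have right : ∀ p, F (Fi p) = p := by
    rintro ⟨⟨h, hh, hequ⟩, a⟩
    have h1 : twist G v (Equiv.swap (h u) a) h u = h u :=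
      twist_apply_of_not_reach _ _ hnr
    have h2 : twist G v (Equiv.swap (h u) a) h v = a := by
      rw [twist_apply_of_reach _ _ hvv, ← hequ, Equiv.swap_apply_left]
    refine Prod.ext (Subtype.ext ?_) h2
    show twist G v (Equiv.swap (twist G v (Equiv.swap (h u) a) h u)
        (twist G v (Equiv.swap (h u) a) h v))
      (twist G v (Equiv.swap (h u) a) h) = h
    rw [h1, h2, twist_twist, Equiv.swap_swap, twist_refl]
  have e : {g : V → Fin k // Proper G g}
      ≃ {g : V → Fin k // Proper G g ∧ g u = g v} × Fin k := ⟨F, Fi, left, right⟩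
  rw [Nat.card_congr e, Nat.card_prod]
  congr 1
  exact Nat.card_eq_fintype_card.trans (Fintype.card_fin k)

end counting
section mergecount
variable {V : Type} [Fintype V] {G : SimpleGraph V} {u v : V} {k : ℕ}

lemma rmap_ne_of_adj (hG : ¬ G.Adj u v) {a b : V} (hadj : G.Adj a b) :
    rmap u v a ≠ rmap u v b := by
  intro h
  by_cases hav : a = v
  · by_cases hbv : b = v
    · exact hadj.ne (hav.trans hbv.symm)
    · rw [hav, rmap_self, rmap_of_ne hbv] at h
      have hvb : G.Adj v b := by rw [← hav]; exact hadj
      exact hG (by rw [h]; exact hvb.symm)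
  · by_cases hbv : b = v
    · rw [hbv, rmap_self, rmap_of_ne hav] at h
      have hav' : G.Adj a v := by rw [← hbv]; exact hadj
      exact hG (by rw [← h]; exact hav')
    · rw [rmap_of_ne hav, rmap_of_ne hbv] at h
      exact hadj.ne h

lemma apply_rmap {g : V → Fin k} (hg : g v = g u) (w : V) : g (rmap u v w) = g w := by
  by_cases h : w = v
  · rw [h, rmap_self, hg]
  · rw [rmap_of_ne h]

lemma proper_merge_iff (hG : ¬ G.Adj u v) (g : V → Fin k) :
    (Proper (mergeGraph G u v) g ∧ g v = g u) ↔ (Proper G g ∧ g u = g v) := by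
  constructor
  · rintro ⟨hH, hvu⟩
    refine ⟨fun a b hadj => ?_, hvu.symm⟩
    have h := hH _ _ ⟨rmap_ne_of_adj hG hadj, a, b, hadj, rfl, rfl⟩
    rwa [apply_rmap hvu, apply_rmap hvu] at h
  · rintro ⟨hg, hequv⟩
    refine ⟨?_, hequv.symm⟩
    rintro a b ⟨hne, a', b', hadj, ha, hb⟩
    rw [← ha, ← hb, apply_rmap hequv.symm, apply_rmap hequv.symm]
    exact hg a' b' hadj

lemma proper_update [DecidableEq V] (huv : u ≠ v) {g : V → Fin k}
    (hg : Proper (mergeGraph G u v) g) (c : Fin k) :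
    Proper (mergeGraph G u v) (Function.update g v c) := by
  intro a b hadj
  have hav : a ≠ v := by rintro rfl; exact mergeGraph_not_adj_left huv b hadj
  have hbv : b ≠ v := by rintro rfl; exact mergeGraph_not_adj_left huv a hadj.symm
  rw [Function.update_of_ne hav, Function.update_of_ne hbv]
  exact hg a b hadj

lemma count_merge (hG : ¬ G.Adj u v) (huv : u ≠ v) :
    numColorings (mergeGraph G u v) k
      = Nat.card {g : V → Fin k // Proper G g ∧ g u = g v} * k := by
  classical
  set H := mergeGraph G u v with hH
  let F : {h : V → Fin k // Proper H h}
      → {g : V → Fin k // Proper H g ∧ g v = g u} × Fin k :=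
    fun h => (⟨Function.update h.1 v (h.1 u), proper_update huv h.2 _, by
      rw [Function.update_self, Function.update_of_ne huv]⟩, h.1 v)
  let Fi : {g : V → Fin k // Proper H g ∧ g v = g u} × Fin k
      → {h : V → Fin k // Proper H h} :=
    fun p => ⟨Function.update p.1.1 v p.2, proper_update huv p.1.2.1 _⟩
  have left : ∀ h, Fi (F h) = h := by
    rintro ⟨h, hh⟩
    apply Subtype.ext
    show Function.update (Function.update h v (h u)) v (h v) = h
    rw [Function.update_idem, Function.update_eq_self]
  have right : ∀ p, F (Fi p) = p := by
    rintro ⟨⟨g, pg, hgvu⟩, c⟩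
    refine Prod.ext (Subtype.ext ?_) ?_
    · show Function.update (Function.update g v c) v (Function.update g v c u)
        = g
      rw [Function.update_of_ne huv, Function.update_idem, ← hgvu,
        Function.update_eq_self]
    · show Function.update g v c v = c
      rw [Function.update_self]
  have e : {h : V → Fin k // Proper H h}
      ≃ {g : V → Fin k // Proper G g ∧ g u = g v} × Fin k :=
    (⟨F, Fi, left, right⟩ : {h : V → Fin k // Proper H h}
        ≃ {g : V → Fin k // Proper H g ∧ g v = g u} × Fin k).trans
      (Equiv.prodCongr (Equiv.subtypeEquivRight (proper_merge_iff hG)) (Equiv.refl _))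
  rw [numColorings_eq, Nat.card_congr e, Nat.card_prod]
  congr 1
  exact Nat.card_eq_fintype_card.trans (Fintype.card_fin k)

end mergecount
section main
variable {V : Type} [Fintype V]

open Polynomial

lemma numColorings_zero (G : SimpleGraph V) (hV : Nonempty V) :
    numColorings G 0 = 0 := by
  haveI : IsEmpty {f : V → Fin 0 // ∀ u v, G.Adj u v → f u ≠ f v} :=
    ⟨fun f => (f.1 (Classical.arbitrary V)).elim0⟩
  exact Nat.card_of_isEmpty

lemma main_base (G : SimpleGraph V) (h0 : Nat.card G.edgeSet = 0) :
    ∃ P : Polynomial ℝ,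
      (∀ k : ℕ, P.eval (k : ℝ) = numColorings G k) ∧
      X ^ (Nat.card G.ConnectedComponent) ∣ P ∧
      ∀ x : ℝ, 0 < x → x < 1 →
        0 < (-1 : ℝ) ^ (Fintype.card V + Nat.card G.ConnectedComponent) * P.eval x := by
  have h : G.edgeSet = ∅ := by
    rw [Nat.card_coe_set_eq] at h0
    exact (Set.ncard_eq_zero (Set.toFinite _)).mp h0
  refine ⟨X ^ Fintype.card V, ?_, ?_, ?_⟩
  · intro k
    rw [numColorings_of_no_edges G h, eval_pow, eval_X]
    push_cast
    rfl
  · rw [cc_card_of_no_edges G h]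
  · intro x hx0 hx1
    rw [cc_card_of_no_edges G h, eval_pow, eval_X]
    have h1 : (-1 : ℝ) ^ (Fintype.card V + Fintype.card V) = 1 := by
      rw [← two_mul, pow_mul]; norm_num
    rw [h1, one_mul]
    exact pow_pos hx0 _

lemma main_aux (m : ℕ) : ∀ G : SimpleGraph V, Nat.card G.edgeSet ≤ m →
    ∃ P : Polynomial ℝ,
      (∀ k : ℕ, P.eval (k : ℝ) = numColorings G k) ∧
      X ^ (Nat.card G.ConnectedComponent) ∣ P ∧
      ∀ x : ℝ, 0 < x → x < 1 →
        0 < (-1 : ℝ) ^ (Fintype.card V + Nat.card G.ConnectedComponent) * P.eval x := by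
  induction m with
  | zero => exact fun G hG => main_base G (Nat.le_zero.mp hG)
  | succ m ih =>
    intro G hG
    by_cases h0 : Nat.card G.edgeSet = 0
    · exact main_base G h0
    · obtain ⟨⟨e, he⟩⟩ := (Nat.card_ne_zero.mp h0).1
      revert he
      refine Sym2.ind (fun u v he => ?_) e
      have hadj : G.Adj u v := (G.mem_edgeSet).mp he
      have hne : u ≠ v := hadj.ne
      have hVne : Nonempty V := ⟨u⟩
      set n := Fintype.card V with hn
      set c := Nat.card G.ConnectedComponent with hc
      have hcpos : 1 ≤ c := by
        haveI : Nonempty G.ConnectedComponent := ⟨G.connectedComponentMk u⟩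
        exact Nat.card_pos
      set G₀ := G.deleteEdges {s(u,v)} with hG₀
      have hGadj₀ : ¬ G₀.Adj u v := by
        rw [hG₀, SimpleGraph.deleteEdges_adj]
        rintro ⟨-, hmem⟩
        exact hmem rfl
      have hcard₀ : Nat.card G₀.edgeSet ≤ m := by
        rw [hG₀, SimpleGraph.edgeSet_deleteEdges, Nat.card_coe_set_eq,
          Set.ncard_diff_singleton_of_mem he]
        rw [Nat.card_coe_set_eq] at hG h0
        omega
      obtain ⟨P₀, hP₀eval, hP₀dvd, hP₀sign⟩ := ih G₀ hcard₀
      -- G₀ has a root at 0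
      have hXP₀ : X ∣ P₀ := dvd_trans (dvd_pow_self X (by
        haveI : Nonempty G₀.ConnectedComponent := ⟨G₀.connectedComponentMk u⟩
        have : 1 ≤ Nat.card G₀.ConnectedComponent := Nat.card_pos
        omega)) hP₀dvd
      by_cases hbr : G₀.Reachable u v
      · -- non-bridge case
        set H := mergeGraph G₀ u v with hH
        have hcardH : Nat.card H.edgeSet ≤ m :=
          le_trans (card_edges_merge_le hGadj₀ hne) hcard₀
        obtain ⟨Q, hQeval, hQdvd, hQsign⟩ := ih H hcardH
        have hc₀ : Nat.card G₀.ConnectedComponent = c := cc_card_nonbridge hadj hbr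
        have hcH : Nat.card H.ConnectedComponent = c + 1 := by
          rw [hH, cc_card_merge hne hbr, hc₀]
        obtain ⟨Q', hQ'⟩ : X ∣ Q :=
          dvd_trans (dvd_pow_self X (by omega)) hQdvd
        have hQ'dvd : X ^ c ∣ Q' := by
          have h1 : X ^ (c+1) ∣ X * Q' := by rw [← hQ']; rw [hcH] at hQdvd; exact hQdvd
          rw [pow_succ'] at h1
          exact (mul_dvd_mul_iff_left (by exact X_ne_zero : (X : Polynomial ℝ) ≠ 0)).mp h1
        refine ⟨P₀ - Q', ?_, ?_, ?_⟩
        · intro k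
          rcases Nat.eq_zero_or_pos k with rfl | hk
          · have e1 : P₀.eval 0 = 0 := by
              obtain ⟨R, hR⟩ := hXP₀
              rw [hR, eval_mul, eval_X, zero_mul]
            have e2 : Q'.eval 0 = 0 := by
              obtain ⟨R, hR⟩ := hQ'dvd
              rw [hR, eval_mul, eval_pow, eval_X, zero_pow (by omega), zero_mul]
            rw [Nat.cast_zero, eval_sub, e1, e2, sub_zero,
              numColorings_zero G hVne, Nat.cast_zero]
          · have hkR : (k : ℝ) ≠ 0 := Nat.cast_ne_zero.mpr (by omega)
            apply mul_left_cancel₀ hkR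
            have hsplit := count_split (k := k) hadj
            have hmerge := count_merge (k := k) hGadj₀ hne
            have hQk : Q.eval (k : ℝ)
                = (Nat.card {g : V → Fin k // Proper G₀ g ∧ g u = g v} : ℝ) * k := by
              rw [hQeval k, hH, hmerge]; push_cast; ring
            have hQ'k : (k : ℝ) * Q'.eval (k : ℝ) = Q.eval (k : ℝ) := by
              rw [hQ', eval_mul, eval_X]
            have hP₀k : P₀.eval (k : ℝ)
                = (numColorings G k : ℝ)
                  + (Nat.card {g : V → Fin k // Proper G₀ g ∧ g u = g v} : ℝ) := by
              rw [hP₀eval k, hsplit]; push_cast; ring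
            rw [eval_sub, mul_sub, hQ'k, hQk, hP₀k]
            ring
        · rw [hc₀] at hP₀dvd
          exact dvd_sub hP₀dvd hQ'dvd
        · intro x hx0 hx1
          set s := (-1 : ℝ) ^ (n + c) with hs
          have h1 : 0 < s * P₀.eval x := by
            have := hP₀sign x hx0 hx1
            rwa [hc₀] at this
          have h2 : 0 < (-s) * Q.eval x := by
            have := hQsign x hx0 hx1
            rw [hcH] at this
            have hpow : (-1 : ℝ) ^ (n + (c + 1)) = -s := by
              rw [hs, ← Nat.add_assoc, pow_succ]; ring
            rwa [hpow] at this
          have hQx : Q.eval x = x * Q'.eval x := by rw [hQ', eval_mul, eval_X]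
          have h3 : s * Q'.eval x < 0 := by
            rw [hQx] at h2
            nlinarith
          rw [eval_sub, mul_sub]
          nlinarith
      · -- bridge case
        have hc₀ : Nat.card G₀.ConnectedComponent = c + 1 := cc_card_bridge hadj hbr
        obtain ⟨P₀', hP₀'⟩ : X ∣ P₀ := hXP₀
        have hP₀'dvd : X ^ c ∣ P₀' := by
          have h1 : X ^ (c+1) ∣ X * P₀' := by rw [← hP₀']; rw [hc₀] at hP₀dvd; exact hP₀dvd
          rw [pow_succ'] at h1
          exact (mul_dvd_mul_iff_left (by exact X_ne_zero : (X : Polynomial ℝ) ≠ 0)).mp h1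
        refine ⟨(X - 1) * P₀', ?_, ?_, ?_⟩
        · intro k
          rcases Nat.eq_zero_or_pos k with rfl | hk
          · have e2 : P₀'.eval 0 = 0 := by
              obtain ⟨R, hR⟩ := hP₀'dvd
              rw [hR, eval_mul, eval_pow, eval_X, zero_pow (by omega), zero_mul]
            rw [Nat.cast_zero, eval_mul, e2, mul_zero, numColorings_zero G hVne,
              Nat.cast_zero]
          · have hkR : (k : ℝ) ≠ 0 := Nat.cast_ne_zero.mpr (by omega)
            apply mul_left_cancel₀ hkR
            have hsplit := count_split (k := k) hadj
            have hbridge := count_bridge (k := k) hbr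
            rw [← numColorings_eq] at hbridge
            -- real versions
            have hP₀k : (k : ℝ) * P₀'.eval (k : ℝ) = (numColorings G₀ k : ℝ) := by
              rw [← hP₀eval k, hP₀', eval_mul, eval_X]
            have hsplitR : (numColorings G₀ k : ℝ)
                = (numColorings G k : ℝ)
                  + (Nat.card {g : V → Fin k // Proper G₀ g ∧ g u = g v} : ℝ) := by
              rw [hsplit]; push_cast; ring
            have hbridgeR : (numColorings G₀ k : ℝ)
                = (Nat.card {g : V → Fin k // Proper G₀ g ∧ g u = g v} : ℝ) * k := by
              rw [hbridge]; push_cast; ring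
            have goal : (k : ℝ) * ((k : ℝ) - 1) * P₀'.eval (k : ℝ)
                = (k : ℝ) * (numColorings G k : ℝ) := by
              have : ((k : ℝ) - 1) * ((k : ℝ) * P₀'.eval (k : ℝ))
                  = ((k : ℝ) - 1) * (numColorings G₀ k : ℝ) := by rw [hP₀k]
              nlinarith [hP₀k, hsplitR, hbridgeR]
            rw [eval_mul, eval_sub, eval_X, eval_one]
            nlinarith [goal]
        · exact Dvd.dvd.mul_left hP₀'dvd _
        · intro x hx0 hx1
          set s := (-1 : ℝ) ^ (n + c) with hs
          have h2 : 0 < (-s) * P₀.eval x := by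
            have := hP₀sign x hx0 hx1
            rw [hc₀] at this
            have hpow : (-1 : ℝ) ^ (n + (c + 1)) = -s := by
              rw [hs, ← Nat.add_assoc, pow_succ]; ring
            rwa [hpow] at this
          have hPx : P₀.eval x = x * P₀'.eval x := by rw [hP₀', eval_mul, eval_X]
          have h3 : s * P₀'.eval x < 0 := by
            rw [hPx] at h2
            nlinarith
          rw [eval_mul, eval_sub, eval_X, eval_one]
          nlinarith

end main
/-- If `G` is a finite loopless (simple) graph with `n` vertices and `c` connected
components, then its chromatic polynomial is non-zero with sign `(-1)^(n+c)` for every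
real `x` with `0 < x < 1`. -/
theorem chromaticPolynomial_sign_zero_one {V : Type} [Fintype V] (G : SimpleGraph V)
    (P : Polynomial ℝ) (hP : IsChromaticPolynomial G P) :
    ∀ x : ℝ, 0 < x → x < 1 →
      0 < (-1 : ℝ) ^ (Fintype.card V + Nat.card G.ConnectedComponent) * P.eval x := by
  intro x hx0 hx1
  obtain ⟨P', h1, h2, h3⟩ := main_aux (Nat.card G.edgeSet) G le_rfl
  have hPP : P = P' := by
    have hz : P - P' = 0 := by
      apply Polynomial.eq_zero_of_infinite_isRoot
      have hsub : Set.range ((↑) : ℕ → ℝ) ⊆ {y | (P - P').IsRoot y} := by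
        rintro _ ⟨k, rfl⟩
        simp only [Set.mem_setOf_eq, Polynomial.IsRoot, Polynomial.eval_sub,
          hP k, h1 k, sub_self]
      exact (Set.infinite_range_of_injective Nat.cast_injective).mono hsub
    exact sub_eq_zero.mp hz
  rw [hPP]
  exact h3 x hx0 hx1
end helpers
end

section
/- The chromatic polynomial of the complete bipartite graph K_{3,4} has a real root in the open interval (1.781, 1.782); in particular K_{3,4} is a 3-connected graph with a chromatic root in (1, 2). -/
open Finset Polynomial

/-! ### Auxiliary decidability instances -/

instance : DecidableRel (completeBipartiteGraph (Fin 3) (Fin 4)).Adj := fun v w =>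
  decidable_of_iff (v.isLeft ∧ w.isRight ∨ v.isRight ∧ w.isLeft) Iff.rfl

instance (W : Finset (Fin 3 ⊕ Fin 4)) :
    DecidableRel ((SimpleGraph.induce ((W : Set _))ᶜ (completeBipartiteGraph (Fin 3) (Fin 4))).Adj) :=
  fun a b => inferInstanceAs (Decidable ((completeBipartiteGraph (Fin 3) (Fin 4)).Adj a b))

instance myConnDecidable {V : Type} [Fintype V] [DecidableEq V] (G : SimpleGraph V)
    [DecidableRel G.Adj] : Decidable G.Connected :=
  have : Decidable (Nonempty V) := decidable_of_iff (0 < Fintype.card V) Fintype.card_pos_iff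
  decidable_of_iff (G.Preconnected ∧ Nonempty V) (SimpleGraph.connected_iff (G := G)).symm

set_option maxRecDepth 40000 in
lemma conn34 : ∀ W : Finset (Fin 3 ⊕ Fin 4), W.card ≤ 2 →
    ((completeBipartiteGraph (Fin 3) (Fin 4)).induce
      ((W : Set (Fin 3 ⊕ Fin 4))ᶜ)).Connected := by decide

/-! ### Counting proper colorings of `K_{3,4}` -/

lemma prop_iff34 {k : ℕ} (h : Fin 3 ⊕ Fin 4 → Fin k) :
    (∀ u v, (completeBipartiteGraph (Fin 3) (Fin 4)).Adj u v → h u ≠ h v) ↔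
      ∀ a b, h (.inl a) ≠ h (.inr b) := by
  constructor
  · intro H a b; exact H _ _ (Or.inl ⟨rfl, rfl⟩)
  · rintro H (a|a) (b|b) hadj
    · simp [completeBipartiteGraph] at hadj
    · exact H a b
    · exact (H b a).symm
    · simp [completeBipartiteGraph] at hadj

def colorEquiv34 (k : ℕ) :
    {h : Fin 3 ⊕ Fin 4 → Fin k //
        ∀ u v, (completeBipartiteGraph (Fin 3) (Fin 4)).Adj u v → h u ≠ h v} ≃
    Σ p : Fin k × Fin k × Fin k,
      (Fin 4 → {c : Fin k // c ≠ p.1 ∧ c ≠ p.2.1 ∧ c ≠ p.2.2}) where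
  toFun h := ⟨(h.1 (.inl 0), h.1 (.inl 1), h.1 (.inl 2)),
    fun j => ⟨h.1 (.inr j),
      ⟨((prop_iff34 h.1).mp h.2 0 j).symm, ((prop_iff34 h.1).mp h.2 1 j).symm,
       ((prop_iff34 h.1).mp h.2 2 j).symm⟩⟩⟩
  invFun pg := ⟨Sum.elim ![pg.1.1, pg.1.2.1, pg.1.2.2] (fun j => (pg.2 j).1), by
    rw [prop_iff34]
    intro a b
    fin_cases a
    · exact ((pg.2 b).2.1).symm
    · exact ((pg.2 b).2.2.1).symm
    · exact ((pg.2 b).2.2.2).symm⟩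
  left_inv h := by
    apply Subtype.ext
    funext u
    rcases u with a | b
    · fin_cases a <;> rfl
    · rfl
  right_inv pg := by
    rcases pg with ⟨⟨a, b, c⟩, g⟩
    rfl

lemma card_avoid {k : ℕ} (a b c : Fin k) :
    Fintype.card {x : Fin k // x ≠ a ∧ x ≠ b ∧ x ≠ c} = k - ({a,b,c} : Finset (Fin k)).card := by
  rw [Fintype.card_subtype]
  have h : Finset.univ.filter (fun x => x ≠ a ∧ x ≠ b ∧ x ≠ c) = ({a,b,c} : Finset (Fin k))ᶜ := by
    ext x; simp [not_or]
  rw [h, Finset.card_compl, Fintype.card_fin]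

lemma numColorings_sum (k : ℕ) :
    numColorings (completeBipartiteGraph (Fin 3) (Fin 4)) k =
      ∑ p : Fin k × Fin k × Fin k, (k - ({p.1, p.2.1, p.2.2} : Finset (Fin k)).card)^4 := by
  rw [numColorings, Nat.card_eq_fintype_card, Fintype.card_congr (colorEquiv34 k),
    Fintype.card_sigma]
  refine Finset.sum_congr rfl fun p _ => ?_
  rw [Fintype.card_fun, card_avoid, Fintype.card_fin]

lemma card3_2 {k : ℕ} {a b c : Fin k} (h1 : ¬(a = b ∧ a = c))
    (h2 : ¬(a ≠ b ∧ a ≠ c ∧ b ≠ c)) : ({a,b,c} : Finset (Fin k)).card = 2 := by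
  by_cases hab : a = b
  · subst hab
    have hac : a ≠ c := fun h => h1 ⟨rfl, h⟩
    rw [Finset.insert_idem, Finset.card_pair hac]
  · rcases not_and_or.mp h2 with h | h
    · exact absurd (not_not.mp h) hab
    rcases not_and_or.mp h with h | h
    · have hac : a = c := not_not.mp h
      subst hac
      have : ({a,b,a} : Finset (Fin k)) = {a,b} := by ext x; simp; tauto
      rw [this, Finset.card_pair hab]
    · have hbc : b = c := not_not.mp h
      subst hbc
      have : ({a,b,b} : Finset (Fin k)) = {a,b} := by ext x; simp
      rw [this, Finset.card_pair hab]

lemma card3_3 {k : ℕ} {a b c : Fin k} (h : a ≠ b ∧ a ≠ c ∧ b ≠ c) :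
    ({a,b,c} : Finset (Fin k)).card = 3 := by
  rw [Finset.card_insert_of_notMem (by simp [h.1, h.2.1]), Finset.card_pair h.2.2]

lemma cardS1 (k : ℕ) :
    (Finset.univ.filter (fun p : Fin k × Fin k × Fin k => p.1 = p.2.1 ∧ p.1 = p.2.2)).card = k := by
  have : (Finset.univ.filter (fun p : Fin k × Fin k × Fin k => p.1 = p.2.1 ∧ p.1 = p.2.2))
      = Finset.univ.image (fun a : Fin k => (a, a, a)) := by
    ext ⟨a, b, c⟩
    constructor
    · intro hm
      simp only [Finset.mem_filter] at hm
      obtain ⟨-, h1, h2⟩ := hm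
      subst h1; subst h2
      simp
    · intro hm
      simp only [Finset.mem_image] at hm
      obtain ⟨x, -, hx⟩ := hm
      cases hx
      simp
  rw [this, Finset.card_image_of_injective _ (fun x y h => by
      simpa using congrArg Prod.fst h),
    Finset.card_univ, Fintype.card_fin]

def distinctEquiv (k : ℕ) :
    {p : Fin k × Fin k × Fin k // p.1 ≠ p.2.1 ∧ p.1 ≠ p.2.2 ∧ p.2.1 ≠ p.2.2} ≃
    (Fin 3 ↪ Fin k) where
  toFun p := ⟨![p.1.1, p.1.2.1, p.1.2.2], by
    intro i j hij
    fin_cases i <;> fin_cases j <;>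
      first
        | rfl
        | (exfalso; revert hij;
           simp only [Matrix.cons_val_zero, Matrix.cons_val_one, Matrix.head_cons,
             Matrix.cons_val_two, Matrix.tail_cons]
           first
             | exact p.2.1
             | exact p.2.2.1
             | exact p.2.2.2
             | exact fun h => p.2.1 h.symm
             | exact fun h => p.2.2.1 h.symm
             | exact fun h => p.2.2.2 h.symm)⟩
  invFun e := ⟨(e 0, e 1, e 2),
    fun h => absurd (e.injective h) (by decide),
    fun h => absurd (e.injective h) (by decide),
    fun h => absurd (e.injective h) (by decide)⟩
  left_inv p := rfl
  right_inv e := by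
    apply DFunLike.ext
    intro i
    fin_cases i <;> rfl

lemma cardS3 (k : ℕ) :
    (Finset.univ.filter (fun p : Fin k × Fin k × Fin k =>
      p.1 ≠ p.2.1 ∧ p.1 ≠ p.2.2 ∧ p.2.1 ≠ p.2.2)).card = k.descFactorial 3 := by
  rw [← Fintype.card_subtype, Fintype.card_congr (distinctEquiv k),
    Fintype.card_embedding_eq, Fintype.card_fin, Fintype.card_fin]

/-- The middle class: exactly two coordinates equal. -/
def S2 (k : ℕ) : Finset (Fin k × Fin k × Fin k) :=
  Finset.univ.filter (fun p => ¬(p.1 = p.2.1 ∧ p.1 = p.2.2) ∧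
    ¬(p.1 ≠ p.2.1 ∧ p.1 ≠ p.2.2 ∧ p.2.1 ≠ p.2.2))

lemma numColorings_formula (k : ℕ) :
    numColorings (completeBipartiteGraph (Fin 3) (Fin 4)) k =
      k * (k-1)^4 + (S2 k).card * (k-2)^4 + k.descFactorial 3 * (k-3)^4 := by
  classical
  rw [numColorings_sum]
  set F : Fin k × Fin k × Fin k → ℕ :=
    fun p => (k - ({p.1, p.2.1, p.2.2} : Finset (Fin k)).card)^4 with hF
  rw [← Finset.sum_filter_add_sum_filter_not Finset.univ
      (fun p : Fin k × Fin k × Fin k => p.1 = p.2.1 ∧ p.1 = p.2.2) F]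
  rw [← Finset.sum_filter_add_sum_filter_not
      (Finset.univ.filter (fun p : Fin k × Fin k × Fin k => ¬(p.1 = p.2.1 ∧ p.1 = p.2.2)))
      (fun p : Fin k × Fin k × Fin k => p.1 ≠ p.2.1 ∧ p.1 ≠ p.2.2 ∧ p.2.1 ≠ p.2.2) F]
  rw [Finset.filter_filter, Finset.filter_filter]
  have e1 : (Finset.univ.filter (fun p : Fin k × Fin k × Fin k =>
      ¬(p.1 = p.2.1 ∧ p.1 = p.2.2) ∧ (p.1 ≠ p.2.1 ∧ p.1 ≠ p.2.2 ∧ p.2.1 ≠ p.2.2)))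
      = Finset.univ.filter (fun p : Fin k × Fin k × Fin k =>
          p.1 ≠ p.2.1 ∧ p.1 ≠ p.2.2 ∧ p.2.1 ≠ p.2.2) := by
    apply Finset.filter_congr
    intro p _
    constructor
    · exact fun h => h.2
    · exact fun h => ⟨fun hq => h.1 hq.1, h⟩
  rw [e1]
  have h1 : ∀ p ∈ Finset.univ.filter
      (fun p : Fin k × Fin k × Fin k => p.1 = p.2.1 ∧ p.1 = p.2.2), F p = (k-1)^4 := by
    intro p hp
    simp only [Finset.mem_filter] at hp
    obtain ⟨-, ha, hb⟩ := hp
    rw [hF]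
    simp only [← ha, ← hb]
    norm_num
  have h3 : ∀ p ∈ Finset.univ.filter (fun p : Fin k × Fin k × Fin k =>
      p.1 ≠ p.2.1 ∧ p.1 ≠ p.2.2 ∧ p.2.1 ≠ p.2.2), F p = (k-3)^4 := by
    intro p hp
    simp only [Finset.mem_filter] at hp
    show (k - ({p.1, p.2.1, p.2.2} : Finset (Fin k)).card)^4 = _
    rw [card3_3 hp.2]
  have h2 : ∀ p ∈ Finset.univ.filter (fun p : Fin k × Fin k × Fin k =>
      ¬(p.1 = p.2.1 ∧ p.1 = p.2.2) ∧ ¬(p.1 ≠ p.2.1 ∧ p.1 ≠ p.2.2 ∧ p.2.1 ≠ p.2.2)),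
      F p = (k-2)^4 := by
    intro p hp
    simp only [Finset.mem_filter] at hp
    show (k - ({p.1, p.2.1, p.2.2} : Finset (Fin k)).card)^4 = _
    rw [card3_2 hp.2.1 hp.2.2]
  rw [Finset.sum_congr rfl h1, Finset.sum_congr rfl h3, Finset.sum_congr rfl h2,
    Finset.sum_const, Finset.sum_const, Finset.sum_const, cardS1, cardS3]
  simp only [smul_eq_mul]
  rw [S2]
  ring

lemma card_partition (k : ℕ) :
    k + (S2 k).card + k.descFactorial 3 = k^3 := by
  classical
  have h := Finset.card_filter_add_card_filter_not (s := (Finset.univ : Finset (Fin k × Fin k × Fin k)))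
      (p := fun p => p.1 = p.2.1 ∧ p.1 = p.2.2)
  have h2 := Finset.card_filter_add_card_filter_not
      (s := Finset.univ.filter (fun p : Fin k × Fin k × Fin k => ¬(p.1 = p.2.1 ∧ p.1 = p.2.2)))
      (p := fun p : Fin k × Fin k × Fin k => p.1 ≠ p.2.1 ∧ p.1 ≠ p.2.2 ∧ p.2.1 ≠ p.2.2)
  rw [Finset.filter_filter, Finset.filter_filter] at h2
  have e1 : (Finset.univ.filter (fun p : Fin k × Fin k × Fin k =>
      ¬(p.1 = p.2.1 ∧ p.1 = p.2.2) ∧ (p.1 ≠ p.2.1 ∧ p.1 ≠ p.2.2 ∧ p.2.1 ≠ p.2.2)))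
      = Finset.univ.filter (fun p : Fin k × Fin k × Fin k =>
          p.1 ≠ p.2.1 ∧ p.1 ≠ p.2.2 ∧ p.2.1 ≠ p.2.2) := by
    apply Finset.filter_congr
    intro p _
    constructor
    · exact fun h => h.2
    · exact fun h => ⟨fun hq => h.1 hq.1, h⟩
  rw [e1, cardS3] at h2
  rw [cardS1] at h
  have hcard : (Finset.univ : Finset (Fin k × Fin k × Fin k)).card = k^3 := by
    simp [Finset.card_univ]
    ring
  rw [hcard] at h
  have : (S2 k).card = (Finset.univ.filter (fun p : Fin k × Fin k × Fin k =>
      ¬(p.1 = p.2.1 ∧ p.1 = p.2.2) ∧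
      ¬(p.1 ≠ p.2.1 ∧ p.1 ≠ p.2.2 ∧ p.2.1 ≠ p.2.2))).card := rfl
  omega

/-! ### The chromatic polynomial of `K_{3,4}` -/

noncomputable def Q34 : Polynomial ℝ :=
  X * (X - 1)^4 + 3 * X * (X - 1) * (X - 2)^4 + X * (X - 1) * (X - 2) * (X - 3)^4

lemma Q34_eval (x : ℝ) : Q34.eval x =
    x * (x - 1)^4 + 3 * x * (x - 1) * (x - 2)^4 + x * (x - 1) * (x - 2) * (x - 3)^4 := by
  simp [Q34]

lemma numColorings_real (k : ℕ) :
    (numColorings (completeBipartiteGraph (Fin 3) (Fin 4)) k : ℝ) = Q34.eval (k : ℝ) := by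
  rw [Q34_eval, numColorings_formula]
  rcases le_or_gt 3 k with h3 | h3
  · have h1 : (1:ℕ) ≤ k := by omega
    have h2 : (2:ℕ) ≤ k := by omega
    have hd : k.descFactorial 3 = (k-2) * ((k-1) * (k * 1)) := rfl
    have hpart := card_partition k
    have hS2 : ((S2 k).card : ℝ) = (k:ℝ)^3 - k - k * ((k:ℝ)-1) * ((k:ℝ)-2) := by
      have h' := hpart
      rw [hd] at h'
      have := congrArg (fun n : ℕ => (n : ℝ)) h'
      push_cast [Nat.cast_sub h1, Nat.cast_sub h2] at this
      nlinarith [this]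
    push_cast [Nat.cast_sub h1, Nat.cast_sub h2, Nat.cast_sub h3, hd, hS2]
    ring
  · interval_cases k <;> norm_num [S2, Nat.descFactorial]

lemma P_eq_Q34 (P : Polynomial ℝ)
    (hP : IsChromaticPolynomial (completeBipartiteGraph (Fin 3) (Fin 4)) P) : P = Q34 := by
  apply Polynomial.eq_of_infinite_eval_eq
  apply Set.Infinite.mono (s := Set.range ((↑) : ℕ → ℝ))
  · intro x hx
    obtain ⟨n, rfl⟩ := hx
    have := hP n
    simp only [Set.mem_setOf_eq, this, numColorings_real]
  · exact Set.infinite_range_of_injective Nat.cast_injective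

/-- The chromatic polynomial of the complete bipartite graph `K_{3,4}` has a real root in
the open interval `(1.781, 1.782)`; in particular `K_{3,4}` is a 3-connected graph with a
chromatic root in `(1, 2)`. -/
theorem completeBipartite_three_four_chromatic_root (P : Polynomial ℝ)
    (hP : IsChromaticPolynomial (completeBipartiteGraph (Fin 3) (Fin 4)) P) :
    (∃ x : ℝ, 1.781 < x ∧ x < 1.782 ∧ P.eval x = 0) ∧
    (3 < Fintype.card (Fin 3 ⊕ Fin 4) ∧
      ∀ W : Finset (Fin 3 ⊕ Fin 4), W.card ≤ 2 →
        ((completeBipartiteGraph (Fin 3) (Fin 4)).induce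
          ((W : Set (Fin 3 ⊕ Fin 4))ᶜ)).Connected) ∧
    (∃ x : ℝ, 1 < x ∧ x < 2 ∧ P.eval x = 0) := by
  have hPQ : P = Q34 := P_eq_Q34 P hP
  subst hPQ
  have hroot : ∃ x : ℝ, 1.781 < x ∧ x < 1.782 ∧ Q34.eval x = 0 := by
    have hle : (1.781 : ℝ) ≤ 1.782 := by norm_num
    have hcont : ContinuousOn (fun x : ℝ => Q34.eval x) (Set.Icc 1.781 1.782) :=
      (Q34.continuous).continuousOn
    have hneg : Q34.eval (1.781 : ℝ) < 0 := by rw [Q34_eval]; norm_num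
    have hpos : (0:ℝ) < Q34.eval (1.782 : ℝ) := by rw [Q34_eval]; norm_num
    have := intermediate_value_Ioo hle hcont (a := 1.781) (b := 1.782)
    have h0 : (0:ℝ) ∈ Set.Ioo (Q34.eval (1.781:ℝ)) (Q34.eval (1.782:ℝ)) := ⟨hneg, hpos⟩
    obtain ⟨x, hx, hx0⟩ := this h0
    exact ⟨x, hx.1, hx.2, hx0⟩
  refine ⟨hroot, ⟨by simp, conn34⟩, ?_⟩
  obtain ⟨x, h1, h2, h0⟩ := hroot
  exact ⟨x, by norm_num at h1 ⊢; linarith, by norm_num at h2 ⊢; linarith, h0⟩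
end
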